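/- arXiv:1506.03727 — 9 statements merged into one kernel-verified Lean document; each statement's English description precedes it below -/
import Mathlib

section
/- Let K be a subfield of ℂ and let 𝒪_K be the ring of algebraic integers of K. If A is an n × n matrix over K such that A^m has all entries in 𝒪_K for some positive integer m, then the characteristic polynomial of A has all coefficients in 𝒪_K. -/
open Polynomial

/-- Evaluating the characteristic polynomial gives the determinant of `r • 1 - M`. -/
private lemma my_eval_charpoly {R : Type*} [CommRing R] {n : Type*} [DecidableEq n] [Fintype n]
    (M : Matrix n n R) (r : R) :
    (Matrix.charpoly M).eval r = (Matrix.scalar n r - M).det := by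
  rw [Matrix.charpoly, _root_.eval_det, Matrix.matPolyEquiv_charmatrix]
  simp

/-- If `A` is an `n × n` matrix over a subfield `K` of `ℂ` such that some positive power
`A ^ m` has all entries algebraic integers, then every coefficient of the characteristic
polynomial of `A` is an algebraic integer of `K`. -/
theorem charpoly_coeff_mem_integralClosure
    (K : Subfield ℂ) (n m : ℕ) (hm : 0 < m)
    (A : Matrix (Fin n) (Fin n) K)
    (hA : ∀ i j, (A ^ m) i j ∈ integralClosure ℤ K) :
    ∀ k, (Matrix.charpoly A).coeff k ∈ integralClosure ℤ K := by
  intro k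
  set f : K →+* ℂ := K.subtype with hf
  set A' : Matrix (Fin n) (Fin n) ℂ := A.map f with hA'
  set R : Subalgebra ℤ ℂ := integralClosure ℤ ℂ with hR
  -- the matrix `A ^ m` viewed over the algebraic integers
  set B : Matrix (Fin n) (Fin n) R :=
    fun i j => ⟨f ((A ^ m) i j), (hA i j).map f.toIntAlgHom⟩ with hB
  have hBmap : B.map (algebraMap R ℂ) = A' ^ m := by
    have : A' ^ m = (A ^ m).map f := by
      rw [hA', ← RingHom.mapMatrix_apply, ← RingHom.mapMatrix_apply, ← map_pow]
    rw [this]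
    ext i j
    rfl
  -- every root of the characteristic polynomial of `A'` is an algebraic integer
  have hroot : ∀ r ∈ (Matrix.charpoly A').roots, IsIntegral ℤ r := by
    intro r hr
    apply IsIntegral.of_pow hm
    -- `r ^ m` is a root of the characteristic polynomial of `A' ^ m`
    have h0 : (Matrix.charpoly A').eval r = 0 :=
      (mem_roots (Matrix.charpoly_monic A').ne_zero).1 hr
    rw [my_eval_charpoly] at h0
    have hdvd : Matrix.scalar (Fin n) r - A' ∣ Matrix.scalar (Fin n) (r ^ m) - A' ^ m := by
      rw [map_pow]
      exact Commute.sub_dvd_pow_sub_pow (Matrix.scalar_commute r (Commute.all r) A') m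
    obtain ⟨c, hc⟩ := hdvd
    have h1 : (Matrix.charpoly (A' ^ m)).eval (r ^ m) = 0 := by
      rw [my_eval_charpoly, hc, Matrix.det_mul, h0, zero_mul]
    -- hence `r ^ m` is integral over the algebraic integers, hence over `ℤ`
    have h2 : IsIntegral R (r ^ m) := by
      refine ⟨Matrix.charpoly B, Matrix.charpoly_monic B, ?_⟩
      show eval₂ (algebraMap (↥R) ℂ) (r ^ m) B.charpoly = 0
      rw [eval₂_eq_eval_map, ← Matrix.charpoly_map, hBmap]
      exact h1
    exact isIntegral_trans _ h2
  -- hence every coefficient of the characteristic polynomial of `A'` is an algebraic integer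
  have hcoeff : ∀ j, IsIntegral ℤ ((Matrix.charpoly A').coeff j) := by
    intro j
    set P := Matrix.charpoly A' with hP
    have hPs : P.Splits := IsAlgClosed.splits P
    have hcard : Multiset.card P.roots = P.natDegree := splits_iff_card_roots.1 hPs
    by_cases hj : j ≤ Multiset.card P.roots
    · have hPe : P = (P.roots.map fun a => X - C a).prod :=
        hPs.eq_prod_roots_of_monic (Matrix.charpoly_monic A')
      have hc2 := Multiset.prod_X_sub_C_coeff P.roots hj
      rw [← hPe] at hc2
      have : P.coeff j ∈ R := by
        rw [hR, hc2]
        refine mul_mem (pow_mem (neg_mem (one_mem _)) _) ?_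
        rw [Multiset.esymm]
        refine Subalgebra.multiset_sum_mem _ ?_
        intro x hx
        obtain ⟨t, ht, rfl⟩ := Multiset.mem_map.1 hx
        refine Subalgebra.multiset_prod_mem _ ?_
        intro y hy
        exact hroot y (Multiset.subset_of_le (Multiset.mem_powersetCard.1 ht).1 hy)
      exact this
    · rw [coeff_eq_zero_of_natDegree_lt (by omega)]
      exact isIntegral_zero
  -- transfer back to `K`
  show IsIntegral ℤ ((Matrix.charpoly A).coeff k)
  have hinj : Function.Injective f.toIntAlgHom := Subtype.val_injective
  rw [← isIntegral_algHom_iff f.toIntAlgHom hinj]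
  have heq : f.toIntAlgHom ((Matrix.charpoly A).coeff k) = (Matrix.charpoly A').coeff k := by
    show f _ = _
    rw [hA', Matrix.charpoly_map, coeff_map]
  rw [heq]
  exact hcoeff k
end

section
/- Let λ be a Salem number and let ⟨λ⟩ denote its commensurability class. If λ₁ is the unique primitive Salem number with λ = λ₁^k for some positive integer k, then ⟨λ⟩ = { λ₁^n : n a positive integer }. -/
set_option synthInstance.maxHeartbeats 400000
set_option maxHeartbeats 1000000

open Polynomial

/-- A Salem number: a real algebraic integer `l > 1` such that `l⁻¹` is a conjugate of
`l` and every other conjugate has absolute value `1` (degree `2` is allowed). -/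
def IsSalem (l : ℝ) : Prop :=
  1 < l ∧ IsIntegral ℤ l ∧
  (Polynomial.aeval ((l : ℂ)⁻¹)) (minpoly ℚ l) = 0 ∧
  ∀ z : ℂ, (Polynomial.aeval z) (minpoly ℚ l) = 0 →
    z = (l : ℂ) ∨ z = ((l : ℂ))⁻¹ ∨ ‖z‖ = 1

/-- Salem numbers `a` and `b` are commensurable if `a ^ k = b ^ n` for some positive
integers `k`, `n`. -/
def SalemCommensurable (a b : ℝ) : Prop :=
  ∃ k n : ℕ, 0 < k ∧ 0 < n ∧ a ^ k = b ^ n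

/-- A Salem number is primitive if it is not a proper power of another Salem number. -/
def IsPrimitiveSalem (a : ℝ) : Prop :=
  IsSalem a ∧ ∀ (μ : ℝ) (k : ℕ), IsSalem μ → 0 < k → a = μ ^ k → k = 1

lemma minpoly_coe (r : ℝ) : minpoly ℚ ((r : ℂ)) = minpoly ℚ r := by
  have := minpoly.algebraMap_eq (A := ℚ) (B := ℝ) (B' := ℂ) (algebraMap ℝ ℂ).injective r
  simpa using this


lemma aeval_coe (r : ℝ) (p : ℚ[X]) (h : aeval r p = 0) : aeval ((r : ℂ)) p = 0 := by
  have : aeval ((algebraMap ℝ ℂ) r) p = algebraMap ℝ ℂ (aeval r p) :=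
    Polynomial.aeval_algebraMap_apply ℂ r p
  simpa [h] using this


lemma exists_root_pow (x : ℂ) (hx : IsIntegral ℚ x) (n : ℕ) (z : ℂ)
    (hz : aeval z (minpoly ℚ (x ^ n)) = 0) :
    ∃ w : ℂ, aeval w (minpoly ℚ x) = 0 ∧ w ^ n = z := by
  set F := IntermediateField.adjoin ℚ ({x} : Set ℂ) with hF
  have hxF : x ∈ F := IntermediateField.mem_adjoin_simple_self ℚ x
  set x' : F := ⟨x, hxF⟩ with hx'
  haveI : FiniteDimensional ℚ F := IntermediateField.adjoin.finiteDimensional hx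
  have hinj : Function.Injective (algebraMap F ℂ) := (algebraMap F ℂ).injective
  have e1 : minpoly ℚ (x' ^ n) = minpoly ℚ (x ^ n) := by
    have := minpoly.algebraMap_eq (A := ℚ) hinj (x' ^ n)
    simpa using this.symm
  set q := minpoly ℚ (x ^ n) with hq
  have hxn : IsIntegral ℚ (x ^ n) := hx.pow n
  have hq_irr : Irreducible q := minpoly.irreducible hxn
  haveI : Fact (Irreducible q) := ⟨hq_irr⟩
  have hroot0 : aeval (x' ^ n) q = 0 := by rw [← e1]; exact minpoly.aeval ℚ _
  let ψ₀ : AdjoinRoot q →ₐ[ℚ] F := AdjoinRoot.liftAlgHom q (Algebra.ofId ℚ F) (x' ^ n) hroot0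
  let ψ₁ : AdjoinRoot q →ₐ[ℚ] ℂ := AdjoinRoot.liftAlgHom q (Algebra.ofId ℚ ℂ) z hz
  letI : Algebra (AdjoinRoot q) F := ψ₀.toRingHom.toAlgebra
  letI : Algebra (AdjoinRoot q) ℂ := ψ₁.toRingHom.toAlgebra
  haveI : IsScalarTower ℚ (AdjoinRoot q) F :=
    IsScalarTower.of_algebraMap_eq fun r => (ψ₀.commutes r).symm
  haveI : IsScalarTower ℚ (AdjoinRoot q) ℂ :=
    IsScalarTower.of_algebraMap_eq fun r => (ψ₁.commutes r).symm
  haveI : Algebra.IsAlgebraic ℚ F := Algebra.IsAlgebraic.of_finite ℚ F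
  haveI : Algebra.IsAlgebraic (AdjoinRoot q) F := Algebra.IsAlgebraic.tower_top (K := ℚ) (L := AdjoinRoot q)
  let θ : F →ₐ[AdjoinRoot q] ℂ := IsAlgClosed.lift
  let θq : F →ₐ[ℚ] ℂ := θ.restrictScalars ℚ
  refine ⟨θq x', ?_, ?_⟩
  · have e2 : minpoly ℚ x' = minpoly ℚ x := by
      have := minpoly.algebraMap_eq (A := ℚ) hinj x'
      simpa using this.symm
    have h0 : aeval x' (minpoly ℚ x) = 0 := by rw [← e2]; exact minpoly.aeval ℚ x'
    rw [Polynomial.aeval_algHom_apply θq x' (minpoly ℚ x), h0, map_zero]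
  · have hx'n : (x' ^ n : F) = algebraMap (AdjoinRoot q) F (AdjoinRoot.root q) := by
      exact (AdjoinRoot.liftAlgHom_root q (Algebra.ofId ℚ F) (x' ^ n) hroot0).symm
    have : θq (x' ^ n) = z := by
      rw [hx'n]
      show θ (algebraMap (AdjoinRoot q) F (AdjoinRoot.root q)) = z
      rw [θ.commutes]
      exact AdjoinRoot.liftAlgHom_root q (Algebra.ofId ℚ ℂ) z hz
    rw [map_pow] at this
    exact this

lemma IsSalem.pow {l : ℝ} (h : IsSalem l) {n : ℕ} (hn : 0 < n) : IsSalem (l ^ n) := by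
  obtain ⟨h1, hint, hinv, hconj⟩ := h
  have hl0 : (0:ℝ) < l := lt_trans one_pos h1
  have hlq : IsIntegral ℚ l := hint.tower_top
  have hcoe : ((l ^ n : ℝ) : ℂ) = (l : ℂ) ^ n := by push_cast; ring
  refine ⟨one_lt_pow₀ h1 hn.ne', hint.pow n, ?_, ?_⟩
  · -- (l^n)⁻¹ is a root
    set q := minpoly ℚ (l ^ n) with hq
    have hdvd : minpoly ℚ l ∣ q.comp (X ^ n) := by
      apply minpoly.dvd
      rw [Polynomial.aeval_comp]
      simp only [map_pow, aeval_X]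
      exact minpoly.aeval ℚ (l ^ n)
    obtain ⟨s, hs⟩ := hdvd
    have : aeval ((l:ℂ)⁻¹) (q.comp (X ^ n)) = 0 := by
      rw [hs, map_mul, hinv, zero_mul]
    rw [Polynomial.aeval_comp] at this
    simp only [map_pow, aeval_X] at this
    rw [hcoe, ← inv_pow]
    exact this
  · intro z hz
    have hzz : aeval z (minpoly ℚ ((l:ℂ) ^ n)) = 0 := by
      rwa [← hcoe, minpoly_coe]
    obtain ⟨w, hw, hwn⟩ := exists_root_pow (l:ℂ) (by
      have : IsIntegral ℚ ((l:ℂ)) := hlq.map (IsScalarTower.toAlgHom ℚ ℝ ℂ)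
      exact this) n z hzz
    rw [minpoly_coe] at hw
    rcases hconj w hw with h | h | h
    · left; rw [hcoe, ← hwn, h]
    · right; left; rw [hcoe, ← hwn, h, inv_pow]
    · right; right; rw [← hwn, norm_pow, h, one_pow]

lemma nu_salem (l1 μ ν : ℝ) (h1 : IsSalem l1) (hμ : IsSalem μ) (b c : ℕ)
    (hb : 0 < b) (hc : 0 < c) (hcop : Nat.Coprime b c)
    (hν : 0 < ν) (hνb : ν ^ b = l1) (hνc : ν ^ c = μ) : IsSalem ν := by
  obtain ⟨hl1, hl1int, hl1inv, hl1conj⟩ := h1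
  obtain ⟨hμ1, hμint, hμinv, hμconj⟩ := hμ
  have hν1 : 1 < ν := by
    by_contra h
    push_neg at h
    have : ν ^ b ≤ 1 := pow_le_one₀ hν.le h
    rw [hνb] at this; linarith
  have hνint : IsIntegral ℤ ν := by
    refine ⟨(minpoly ℤ l1).comp (X ^ b), (minpoly.monic hl1int).comp (monic_X_pow b)
      (by simp [hb.ne']), ?_⟩
    have : aeval ν ((minpoly ℤ l1).comp (X ^ b)) = 0 := by
      rw [Polynomial.aeval_comp]
      simp only [map_pow, aeval_X]
      rw [hνb]
      exact minpoly.aeval ℤ l1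
    simpa [Polynomial.aeval_def] using this
  have hνq : IsIntegral ℚ ν := hνint.tower_top
  set q := minpoly ℚ ν with hqdef
  -- bezout
  have hgcd : Int.gcd (b:ℤ) (c:ℤ) = 1 := by simpa [Int.gcd_natCast_natCast] using hcop
  set u := Int.gcdA (b:ℤ) (c:ℤ) with hu
  set v := Int.gcdB (b:ℤ) (c:ℤ) with hv
  have hbez : (b:ℤ) * u + (c:ℤ) * v = 1 := by
    have := Int.gcd_eq_gcd_ab (b:ℤ) (c:ℤ)
    rw [hgcd] at this
    exact_mod_cast this.symm
  -- divisibility facts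
  have hdvd1 : q ∣ (minpoly ℚ l1).comp (X ^ b) := by
    apply minpoly.dvd
    rw [Polynomial.aeval_comp]; simp only [map_pow, aeval_X]
    rw [hνb]; exact minpoly.aeval ℚ l1
  have hdvd2 : q ∣ (minpoly ℚ μ).comp (X ^ c) := by
    apply minpoly.dvd
    rw [Polynomial.aeval_comp]; simp only [map_pow, aeval_X]
    rw [hνc]; exact minpoly.aeval ℚ μ
  have hrootb : ∀ z : ℂ, aeval z q = 0 → aeval (z ^ b) (minpoly ℚ l1) = 0 := by
    intro z hz
    obtain ⟨s, hs⟩ := hdvd1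
    have : aeval z ((minpoly ℚ l1).comp (X ^ b)) = 0 := by rw [hs, map_mul, hz, zero_mul]
    rwa [Polynomial.aeval_comp, map_pow, aeval_X] at this
  have hrootc : ∀ z : ℂ, aeval z q = 0 → aeval (z ^ c) (minpoly ℚ μ) = 0 := by
    intro z hz
    obtain ⟨s, hs⟩ := hdvd2
    have : aeval z ((minpoly ℚ μ).comp (X ^ c)) = 0 := by rw [hs, map_mul, hz, zero_mul]
    rwa [Polynomial.aeval_comp, map_pow, aeval_X] at this
  -- trichotomy for roots of q
  have htri : ∀ z : ℂ, aeval z q = 0 → z = (ν:ℂ) ∨ z = ((ν:ℂ))⁻¹ ∨ ‖z‖ = 1 := by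
    intro z hz
    have hzb := hrootb z hz
    have hzc := hrootc z hz
    have hνcb : ((ν:ℂ)) ^ b = ((l1:ℝ):ℂ) := by rw [← hνb]; push_cast; ring
    have hνcc : ((ν:ℂ)) ^ c = ((μ:ℝ):ℂ) := by rw [← hνc]; push_cast; ring
    have hzne : z ≠ 0 := by
      intro h0
      rw [h0, zero_pow hb.ne'] at hzb
      have := minpoly.coeff_zero_ne_zero (hl1int.tower_top : IsIntegral ℚ l1)
        (by positivity : l1 ≠ 0)
      simp only [Polynomial.aeval_def, Polynomial.eval₂_at_zero] at hzb
      exact this ((_root_.map_eq_zero (algebraMap ℚ ℂ)).mp hzb)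
    rcases hl1conj (z ^ b) hzb with h | h | h
    · -- z^b = l1
      left
      have habs : ‖z‖ = ν := by
        have : ‖z‖ ^ b = ν ^ b := by
          rw [← norm_pow, h, hνb]; simp [Complex.norm_real, abs_of_pos (by linarith : (0:ℝ) < l1), hνb]
        exact pow_left_inj₀ (norm_nonneg z) hν.le hb.ne' |>.mp this
      have hzc' : z ^ c = ((μ:ℝ):ℂ) := by
        rcases hμconj (z ^ c) hzc with h2 | h2 | h2
        · exact h2
        · exfalso
          have : ‖z ^ c‖ = μ⁻¹ := by
            rw [h2, norm_inv, Complex.norm_real, Real.norm_eq_abs, abs_of_pos (by linarith : (0:ℝ) < μ)]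
          rw [norm_pow, habs, hνc] at this
          have hμpos : (0:ℝ) < μ := by linarith
          nlinarith [inv_lt_one_of_one_lt₀ hμ1]
        · exfalso
          rw [norm_pow, habs, hνc] at h2
          linarith
      -- z^b = ν^b, z^c = ν^c, bezout
      have e1 : z ^ (b:ℤ) = ((ν:ℂ)) ^ (b:ℤ) := by
        rw [zpow_natCast, zpow_natCast, hνcb, h]
      have e2 : z ^ (c:ℤ) = ((ν:ℂ)) ^ (c:ℤ) := by
        rw [zpow_natCast, zpow_natCast, hνcc, hzc']
      calc z = z ^ (1:ℤ) := (zpow_one z).symm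
        _ = z ^ ((b:ℤ) * u + (c:ℤ) * v) := by rw [hbez]
        _ = (z ^ (b:ℤ)) ^ u * (z ^ (c:ℤ)) ^ v := by
            rw [zpow_add₀ hzne, zpow_mul, zpow_mul]
        _ = (((ν:ℂ)) ^ (b:ℤ)) ^ u * (((ν:ℂ)) ^ (c:ℤ)) ^ v := by rw [e1, e2]
        _ = ((ν:ℂ)) ^ ((b:ℤ) * u + (c:ℤ) * v) := by
            rw [← zpow_mul, ← zpow_mul, ← zpow_add₀ (by exact_mod_cast hν.ne' : ((ν:ℂ)) ≠ 0)]
        _ = (ν:ℂ) := by rw [hbez, zpow_one]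
    · -- z^b = l1⁻¹
      right; left
      have habs : ‖z‖ = ν⁻¹ := by
        have : ‖z‖ ^ b = (ν⁻¹) ^ b := by
          rw [← norm_pow, h, norm_inv, Complex.norm_real, Real.norm_eq_abs,
            abs_of_pos (by linarith : (0:ℝ) < l1), ← hνb, inv_pow]
        exact pow_left_inj₀ (norm_nonneg z) (by positivity) hb.ne' |>.mp this
      have hzc' : z ^ c = (((μ:ℝ):ℂ))⁻¹ := by
        rcases hμconj (z ^ c) hzc with h2 | h2 | h2
        · exfalso
          have : ‖z ^ c‖ = μ := by
            rw [h2, Complex.norm_real, Real.norm_eq_abs, abs_of_pos (by linarith : (0:ℝ) < μ)]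
          rw [norm_pow, habs, inv_pow, hνc] at this
          have hμpos : (0:ℝ) < μ := by linarith
          nlinarith [inv_lt_one_of_one_lt₀ hμ1]
        · exact h2
        · exfalso
          rw [norm_pow, habs, inv_pow, hνc] at h2
          have hμpos : (0:ℝ) < μ := by linarith
          have := inv_lt_one_of_one_lt₀ hμ1
          linarith
      have e1 : z ^ (b:ℤ) = ((ν:ℂ)) ^ (-(b:ℤ)) := by
        rw [zpow_natCast, zpow_neg, zpow_natCast, hνcb, h]
      have e2 : z ^ (c:ℤ) = ((ν:ℂ)) ^ (-(c:ℤ)) := by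
        rw [zpow_natCast, zpow_neg, zpow_natCast, hνcc, hzc']
      have hνcne : ((ν:ℂ)) ≠ 0 := by exact_mod_cast hν.ne'
      calc z = z ^ (1:ℤ) := (zpow_one z).symm
        _ = z ^ ((b:ℤ) * u + (c:ℤ) * v) := by rw [hbez]
        _ = (z ^ (b:ℤ)) ^ u * (z ^ (c:ℤ)) ^ v := by
            rw [zpow_add₀ hzne, zpow_mul, zpow_mul]
        _ = (((ν:ℂ)) ^ (-(b:ℤ))) ^ u * (((ν:ℂ)) ^ (-(c:ℤ))) ^ v := by rw [e1, e2]
        _ = ((ν:ℂ)) ^ (-((b:ℤ) * u + (c:ℤ) * v)) := by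
            rw [← zpow_mul, ← zpow_mul, ← zpow_add₀ hνcne]; ring_nf
        _ = ((ν:ℂ))⁻¹ := by rw [hbez]; simp
    · -- abs (z^b) = 1
      right; right
      rw [norm_pow] at h
      have : ‖z‖ ^ b = 1 ^ b := by rw [h, one_pow]
      exact pow_left_inj₀ (norm_nonneg z) zero_le_one hb.ne' |>.mp this
  -- now show ν⁻¹ is a root of q
  have hinv : aeval (((ν:ℂ))⁻¹) q = 0 := by
    by_contra hnot
    set qC := q.map (algebraMap ℚ ℂ) with hqC
    have hq0 : q ≠ 0 := minpoly.ne_zero hνq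
    have hqC0 : qC ≠ 0 := by
      simpa [hqC] using (Polynomial.map_ne_zero_iff
        (algebraMap ℚ ℂ).injective).mpr hq0
    have hmonic : qC.Monic := (minpoly.monic hνq).map _
    have hsplits : qC.Splits := IsAlgClosed.splits _
    have hroot_iff : ∀ z : ℂ, z ∈ qC.roots ↔ aeval z q = 0 := by
      intro z
      rw [Polynomial.mem_roots hqC0]
      constructor
      · rintro hr
        rw [Polynomial.aeval_def, ← Polynomial.eval_map]
        exact hr
      · intro hz
        rw [Polynomial.IsRoot, Polynomial.eval_map, ← Polynomial.aeval_def]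
        exact hz
    have hnodup : qC.roots.Nodup :=
      (Polynomial.nodup_roots (((minpoly.irreducible hνq).separable).map))
    have hνroot : (ν:ℂ) ∈ qC.roots := (hroot_iff _).mpr (aeval_coe ν q (minpoly.aeval ℚ ν))
    -- product of roots
    have hprod := hsplits.coeff_zero_eq_prod_roots_of_monic hmonic
    -- compute abs of the product
    have hres : ‖qC.roots.prod‖ = ν := by
      have hcons : qC.roots = (ν:ℂ) ::ₘ qC.roots.erase ((ν:ℂ)) :=
        (Multiset.cons_erase hνroot).symm
      have hrest : ∀ w ∈ qC.roots.erase ((ν:ℂ)), ‖w‖ = 1 := by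
        intro w hw
        have hwne : w ≠ (ν:ℂ) := (hnodup.mem_erase_iff.mp hw).1
        have hwroot : w ∈ qC.roots := (hnodup.mem_erase_iff.mp hw).2
        rcases htri w ((hroot_iff w).mp hwroot) with h | h | h
        · exact absurd h hwne
        · exact absurd ((hroot_iff w).mp hwroot) (h ▸ hnot)
        · exact h
      rw [hcons, Multiset.prod_cons, norm_mul]
      have : ‖(qC.roots.erase ((ν:ℂ))).prod‖ = 1 := by
        rw [show ‖(qC.roots.erase ((ν:ℂ))).prod‖ = normHom ((qC.roots.erase ((ν:ℂ))).prod) from rfl,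
          map_multiset_prod]
        apply Multiset.prod_eq_one
        intro x hx
        obtain ⟨w, hw, rfl⟩ := Multiset.mem_map.mp hx
        exact hrest w hw
      rw [this, mul_one, Complex.norm_real, Real.norm_eq_abs, abs_of_pos hν]
    -- coeff 0 is an integer
    have hqint : q = (minpoly ℤ ν).map (algebraMap ℤ ℚ) :=
      minpoly.isIntegrallyClosed_eq_field_fractions ℚ ℝ hνint
    set m : ℤ := (minpoly ℤ ν).coeff 0 with hm
    have hcoeff : qC.coeff 0 = ((m:ℚ):ℂ) := by
      rw [hqC, Polynomial.coeff_map, hqint, Polynomial.coeff_map]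
      norm_num [hm]
    have habs_coeff : ‖qC.coeff 0‖ = ν := by
      rw [hprod, norm_mul, hres, norm_pow, norm_neg, norm_one, one_pow, one_mul]
    rw [hcoeff] at habs_coeff
    have hnatabs : ((m.natAbs : ℝ)) = ν := by
      rw [← habs_coeff]
      have e : ((((m:ℚ)):ℂ)) = ((m:ℤ):ℂ) := by push_cast; ring
      rw [e, Complex.norm_intCast, Nat.cast_natAbs]
      exact Int.cast_abs
    -- l1 = natural number, contradiction
    have hl1nat : l1 = ((m.natAbs ^ b : ℕ) : ℝ) := by
      rw [← hνb, ← hnatabs]; push_cast; ring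
    have : minpoly ℚ l1 = X - C ((m.natAbs ^ b : ℕ) : ℚ) := by
      have : l1 = algebraMap ℚ ℝ ((m.natAbs ^ b : ℕ) : ℚ) := by
        rw [hl1nat]; simp
      rw [this]
      exact minpoly.eq_X_sub_C ℝ _
    rw [this] at hl1inv
    simp only [map_sub, aeval_X, aeval_C] at hl1inv
    rw [sub_eq_zero] at hl1inv
    have hc1 : (((l1:ℝ):ℂ))⁻¹ = ((l1:ℝ):ℂ) := by
      rw [hl1inv, map_natCast, hl1nat]; push_cast; ring
    have : (l1:ℝ)⁻¹ = l1 := by exact_mod_cast hc1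
    have hl1pos : (0:ℝ) < l1 := by linarith
    nlinarith [inv_lt_one_of_one_lt₀ hl1]
  exact ⟨hν1, hνint, hinv, htri⟩

/-- If `λ` is a Salem number and `λ₁` is the primitive Salem number with `λ = λ₁ ^ k`,
then the commensurability class of `λ` is exactly `{λ₁ ^ n : n ≥ 1}`. -/
theorem salem_commensurability_class
    (l l1 : ℝ) (hl : IsSalem l) (h1 : IsPrimitiveSalem l1)
    (k : ℕ) (hk : 0 < k) (hlk : l = l1 ^ k) :
    {μ : ℝ | IsSalem μ ∧ SalemCommensurable l μ} =
      {μ : ℝ | ∃ n : ℕ, 0 < n ∧ μ = l1 ^ n} := by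
  have hl1 := h1.1
  have hl1pos : (0:ℝ) < l1 := lt_trans one_pos hl1.1
  have hl1ne : l1 ≠ 0 := hl1pos.ne'
  ext μ
  simp only [Set.mem_setOf_eq]
  constructor
  · rintro ⟨hμs, a, bb, ha, hbb, hab⟩
    have hμpos : 0 < μ := lt_trans one_pos hμs.1
    have hμne : μ ≠ 0 := hμpos.ne'
    have hcpos : 0 < k * a := Nat.mul_pos hk ha
    have hμb : μ ^ bb = l1 ^ (k * a) := by
      rw [← hab, hlk, ← pow_mul]
    set d := Nat.gcd bb (k * a) with hd
    have hdpos : 0 < d := Nat.gcd_pos_of_pos_left _ hbb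
    set b' := bb / d with hb'def
    set c' := (k * a) / d with hc'def
    have hb' : 0 < b' := Nat.div_pos (Nat.le_of_dvd hbb (Nat.gcd_dvd_left _ _)) hdpos
    have hc' : 0 < c' := Nat.div_pos (Nat.le_of_dvd hcpos (Nat.gcd_dvd_right _ _)) hdpos
    have hbb_eq : bb = b' * d := (Nat.div_mul_cancel (Nat.gcd_dvd_left _ _)).symm
    have hka_eq : k * a = c' * d := (Nat.div_mul_cancel (Nat.gcd_dvd_right _ _)).symm
    have hcop : Nat.Coprime b' c' := Nat.coprime_div_gcd_div_gcd hdpos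
    have hpow : μ ^ b' = l1 ^ c' := by
      have hdth : (μ ^ b') ^ d = (l1 ^ c') ^ d := by
        rw [← pow_mul, ← pow_mul, ← hbb_eq, ← hka_eq, hμb]
      exact pow_left_inj₀ (by positivity) (by positivity) hdpos.ne' |>.mp hdth
    set u := Int.gcdA (b':ℤ) (c':ℤ) with hu
    set v := Int.gcdB (b':ℤ) (c':ℤ) with hv
    have hgcd : Int.gcd (b':ℤ) (c':ℤ) = 1 := by
      simpa [Int.gcd_natCast_natCast] using hcop
    have hbez : (b':ℤ) * u + (c':ℤ) * v = 1 := by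
      have := Int.gcd_eq_gcd_ab (b':ℤ) (c':ℤ)
      rw [hgcd] at this
      exact_mod_cast this.symm
    set ν := l1 ^ u * μ ^ v with hνdef
    have hνpos : 0 < ν := by
      apply mul_pos <;> exact zpow_pos (by assumption) _
    have hμb'z : μ ^ ((b':ℤ)) = l1 ^ ((c':ℤ)) := by
      rw [zpow_natCast, zpow_natCast]; exact hpow
    have hA : ν ^ ((b':ℤ)) = l1 := by
      have e1 : (μ ^ v) ^ ((b':ℤ)) = (l1 ^ ((c':ℤ))) ^ v := by
        rw [← zpow_mul, mul_comm, zpow_mul, hμb'z]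
      rw [hνdef, mul_zpow, e1, ← zpow_mul, ← zpow_mul, ← zpow_add₀ hl1ne,
        show u * (b':ℤ) + (c':ℤ) * v = 1 by linarith [hbez], zpow_one]
    have hB : ν ^ ((c':ℤ)) = μ := by
      have e1 : (l1 ^ u) ^ ((c':ℤ)) = (μ ^ ((b':ℤ))) ^ u := by
        rw [← zpow_mul, mul_comm, zpow_mul, hμb'z]
      rw [hνdef, mul_zpow, e1, ← zpow_mul, ← zpow_mul, ← zpow_add₀ hμne,
        show (b':ℤ) * u + v * (c':ℤ) = 1 by linarith [hbez], zpow_one]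
    have hνb : ν ^ b' = l1 := by rw [← zpow_natCast]; exact hA
    have hνc : ν ^ c' = μ := by rw [← zpow_natCast]; exact hB
    have hνsalem : IsSalem ν := nu_salem l1 μ ν hl1 hμs b' c' hb' hc' hcop hνpos hνb hνc
    have hb1 : b' = 1 := h1.2 ν b' hνsalem hb' hνb.symm
    refine ⟨c', hc', ?_⟩
    rw [← hνc]
    congr 1
    rw [← hνb, hb1, pow_one]
  · rintro ⟨n, hn, rfl⟩
    refine ⟨hl1.pow hn, n, k, hn, hk, ?_⟩
    rw [hlk, ← pow_mul, ← pow_mul, mul_comm]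
end

section
/- If λ is a Salem number, then deg(λ^{1/2}) equals deg(λ) or 2·deg(λ). Moreover deg(λ^{1/2}) = deg(λ) if and only if either λ^{1/2} is a Salem number, or deg(λ^{1/2}) = 2 and the field norm of λ^{1/2} from ℚ(λ^{1/2}) to ℚ equals −1. -/
open Polynomial

open scoped IntermediateField in
set_option maxHeartbeats 1600000 in
/-- If `λ` is a Salem number, then `deg (λ^{1/2})` equals `deg λ` or `2 deg λ`, and it
equals `deg λ` if and only if either `λ^{1/2}` is a Salem number, or `deg (λ^{1/2}) = 2`
and the field norm of `λ^{1/2}` is `-1` (for a degree-2 monic minimal polynomial the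
norm is the constant coefficient). -/
theorem salem_sqrt_degree
    (l : ℝ) (hl : IsSalem l) :
    ((minpoly ℚ (Real.sqrt l)).natDegree = (minpoly ℚ l).natDegree ∨
      (minpoly ℚ (Real.sqrt l)).natDegree = 2 * (minpoly ℚ l).natDegree) ∧
    ((minpoly ℚ (Real.sqrt l)).natDegree = (minpoly ℚ l).natDegree ↔
      (IsSalem (Real.sqrt l) ∨
        ((minpoly ℚ (Real.sqrt l)).natDegree = 2 ∧
          (minpoly ℚ (Real.sqrt l)).coeff 0 = -1))) := by
  obtain ⟨hl1, hlZ, hlinv, hlroots⟩ := hl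
  have hl0 : (0:ℝ) < l := lt_trans one_pos hl1
  set μ := Real.sqrt l with hμdef
  have hμ0 : 0 ≤ μ := Real.sqrt_nonneg l
  have hμ2 : μ ^ 2 = l := Real.sq_sqrt hl0.le
  have hμ1 : (1:ℝ) < μ := by nlinarith
  have hμne : μ ≠ 0 := by positivity
  have hlQ : IsIntegral ℚ l := hlZ.tower_top
  have hμZ : IsIntegral ℤ μ := by
    obtain ⟨g, hgm, hg⟩ := hlZ
    refine ⟨g.comp (X^2), hgm.comp (monic_X_pow 2) (by simp), ?_⟩
    have : Polynomial.aeval μ (g.comp (X^2)) = 0 := by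
      rw [aeval_comp]; simp only [map_pow, aeval_X, hμ2]; exact hg
    simpa [Polynomial.aeval_def] using this
  have hμQ : IsIntegral ℚ μ := hμZ.tower_top
  set P := minpoly ℚ l with hPdef
  set Q := minpoly ℚ μ with hQdef
  set n := P.natDegree with hndef
  set m := Q.natDegree with hmdef
  have hPm : P.Monic := minpoly.monic hlQ
  have hQm : Q.Monic := minpoly.monic hμQ
  have hPC : Polynomial.aeval (l:ℂ) P = 0 := by
    have h := minpoly.aeval ℚ l
    have := Polynomial.aeval_algebraMap_apply ℂ l P
    rw [h] at this
    simpa using this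
  have hQC : Polynomial.aeval (μ:ℂ) Q = 0 := by
    have h := minpoly.aeval ℚ μ
    have := Polynomial.aeval_algebraMap_apply ℂ μ Q
    rw [h] at this
    simpa using this
  -- Q divides P ∘ X²
  have hQdvd : Q ∣ P.comp (X^2) := by
    apply minpoly.dvd ℚ μ
    rw [aeval_comp, map_pow, aeval_X, hμ2]
    exact minpoly.aeval ℚ l
  have hcomp_monic : (P.comp (X^2)).Monic := hPm.comp (monic_X_pow 2) (by simp)
  have hcomp_deg : (P.comp (X^2)).natDegree = 2 * n := by
    rw [natDegree_comp, natDegree_X_pow, mul_comm]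
  have hm_le : m ≤ 2 * n := by
    rw [← hcomp_deg]
    exact natDegree_le_of_dvd hQdvd hcomp_monic.ne_zero
  have hn_pos : 0 < n := minpoly.natDegree_pos hlQ
  have hm_pos : 0 < m := minpoly.natDegree_pos hμQ
  -- n divides m via the tower ℚ ⊆ ℚ(l) ⊆ ℚ(μ)
  have hKL : ℚ⟮l⟯ ≤ ℚ⟮μ⟯ := by
    rw [IntermediateField.adjoin_simple_le_iff, ← hμ2]
    exact pow_mem (IntermediateField.mem_adjoin_simple_self ℚ μ) 2
  have hfK : Module.finrank ℚ ℚ⟮l⟯ = n := IntermediateField.adjoin.finrank hlQ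
  have hfL : Module.finrank ℚ ℚ⟮μ⟯ = m := IntermediateField.adjoin.finrank hμQ
  have hdvd : n ∣ m := by
    refine ⟨IntermediateField.relfinrank ℚ⟮l⟯ ℚ⟮μ⟯, ?_⟩
    rw [← hfK, ← hfL, IntermediateField.finrank_bot_mul_relfinrank hKL]
  have part1 : m = n ∨ m = 2 * n := by
    obtain ⟨k, hk⟩ := hdvd
    have hk2 : k ≤ 2 := by
      by_contra hgt
      push_neg at hgt
      have : 2 * n < n * k := by nlinarith
      omega
    interval_cases k
    · omega
    · left; omega
    · right; omega
  -- roots machinery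
  have hQsep : Q.Separable := (minpoly.irreducible hμQ).separable
  have hPsep : P.Separable := (minpoly.irreducible hlQ).separable
  set QC := Q.map (algebraMap ℚ ℂ) with hQCdef
  set PC := P.map (algebraMap ℚ ℂ) with hPCdef
  have hQCne : QC ≠ 0 := (hQm.map _).ne_zero
  have hPCne : PC ≠ 0 := (hPm.map _).ne_zero
  have hmemQ : ∀ z : ℂ, z ∈ QC.roots ↔ Polynomial.aeval z Q = 0 := by
    intro z
    rw [mem_roots hQCne, IsRoot, eval_map, ← aeval_def]
  have hmemP : ∀ z : ℂ, z ∈ PC.roots ↔ Polynomial.aeval z P = 0 := by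
    intro z
    rw [mem_roots hPCne, IsRoot, eval_map, ← aeval_def]
  have hQcard : Multiset.card QC.roots = m :=
    ((natDegree_map (algebraMap ℚ ℂ)).symm.trans (IsAlgClosed.splits QC).natDegree_eq_card_roots).symm
  have hPcard : Multiset.card PC.roots = n :=
    ((natDegree_map (algebraMap ℚ ℂ)).symm.trans (IsAlgClosed.splits PC).natDegree_eq_card_roots).symm
  have hQnodup : QC.roots.Nodup := nodup_roots hQsep.map
  have hPnodup : PC.roots.Nodup := nodup_roots hPsep.map
  set rootsQ : Finset ℂ := QC.roots.toFinset with hrQdef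
  set rootsP : Finset ℂ := PC.roots.toFinset with hrPdef
  have hrQcard : rootsQ.card = m := by
    rw [hrQdef, Multiset.toFinset_card_of_nodup hQnodup, hQcard]
  have hrPcard : rootsP.card = n := by
    rw [hrPdef, Multiset.toFinset_card_of_nodup hPnodup, hPcard]
  have hmemQ' : ∀ z : ℂ, z ∈ rootsQ ↔ Polynomial.aeval z Q = 0 := by
    intro z; rw [hrQdef, Multiset.mem_toFinset, hmemQ]
  have hmemP' : ∀ z : ℂ, z ∈ rootsP ↔ Polynomial.aeval z P = 0 := by
    intro z; rw [hrPdef, Multiset.mem_toFinset, hmemP]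
  -- squares of roots of Q are roots of P
  have hsq : ∀ z : ℂ, Polynomial.aeval z Q = 0 → Polynomial.aeval (z^2) P = 0 := by
    intro z hz
    obtain ⟨R, hR⟩ := hQdvd
    have : Polynomial.aeval z (P.comp (X^2)) = 0 := by
      rw [hR, map_mul, hz, zero_mul]
    rwa [aeval_comp, map_pow, aeval_X] at this
  -- roots of Q are nonzero
  have hrne : ∀ z : ℂ, Polynomial.aeval z Q = 0 → z ≠ 0 := by
    intro z hz h0
    subst h0
    have h1 : (algebraMap ℚ ℂ) (Q.coeff 0) = 0 := by
      rw [← hz]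
      simp [Polynomial.aeval_def, eval₂_at_zero]
    have h2 : Q.coeff 0 = 0 :=
      (map_eq_zero_iff _ (algebraMap ℚ ℂ).injective).mp h1
    exact minpoly.coeff_zero_ne_zero hμQ hμne h2
  -- conjugates of roots are roots
  have hconj : ∀ z : ℂ, Polynomial.aeval z Q = 0 →
      Polynomial.aeval ((starRingEnd ℂ) z) Q = 0 := by
    intro z hz
    have := Polynomial.aeval_algHom_apply ((starRingEnd ℂ).toRatAlgHom) z Q
    rw [show ((starRingEnd ℂ).toRatAlgHom) z = (starRingEnd ℂ) z from rfl] at this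
    rw [this]
    simp [hz]
  have hn2 : 2 ≤ n := by
    have h1 : (l:ℂ) ∈ rootsP := (hmemP' _).mpr hPC
    have h2 : (l:ℂ)⁻¹ ∈ rootsP := (hmemP' _).mpr hlinv
    have hne12 : (l:ℂ) ≠ (l:ℂ)⁻¹ := by
      rw [← Complex.ofReal_inv]
      intro h
      have := Complex.ofReal_injective h
      have hinv : l⁻¹ < 1 := by
        rw [inv_lt_one_iff₀]; right; exact hl1
      linarith
    have : ({(l:ℂ), (l:ℂ)⁻¹} : Finset ℂ) ⊆ rootsP := by
      intro x hx
      simp only [Finset.mem_insert, Finset.mem_singleton] at hx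
      rcases hx with rfl | rfl
      · exact h1
      · exact h2
    have hc : ({(l:ℂ), (l:ℂ)⁻¹} : Finset ℂ).card = 2 := by
      rw [Finset.card_insert_of_notMem (by simpa using hne12), Finset.card_singleton]
    calc 2 = ({(l:ℂ), (l:ℂ)⁻¹} : Finset ℂ).card := hc.symm
    _ ≤ rootsP.card := Finset.card_le_card this
    _ = n := hrPcard
  have hμC2 : ((μ:ℂ))^2 = (l:ℂ) := by rw [← hμ2]; push_cast; ring
  have hμCinv2 : ((μ:ℂ)⁻¹)^2 = ((l:ℂ))⁻¹ := by rw [inv_pow, hμC2]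
  -- ============ forward direction, assuming m = n ============
  have forward : m = n → (IsSalem μ ∨ (m = 2 ∧ Q.coeff 0 = -1)) := by
    intro hmn
    have hKeq : ℚ⟮l⟯ = ℚ⟮μ⟯ := by
      haveI : FiniteDimensional ℚ ℚ⟮μ⟯ := IntermediateField.adjoin.finiteDimensional hμQ
      exact IntermediateField.eq_of_le_of_finrank_eq hKL (by rw [hfK, hfL, hmn])
    have hμK : μ ∈ ℚ⟮l⟯ := by
      rw [hKeq]; exact IntermediateField.mem_adjoin_simple_self ℚ μ
    obtain ⟨g, hg⟩ : ∃ g : ℚ[X], Polynomial.aeval l g = μ := by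
      have h1 : μ ∈ (ℚ⟮l⟯).toSubalgebra := hμK
      rw [IntermediateField.adjoin_simple_toSubalgebra_of_isAlgebraic hlQ.isAlgebraic,
        Algebra.adjoin_singleton_eq_range_aeval] at h1
      obtain ⟨g, hg⟩ := h1
      exact ⟨g, hg⟩
    have hgdvd : Q ∣ (g.comp (X^2) - X) := by
      apply minpoly.dvd
      rw [map_sub, aeval_comp, map_pow, aeval_X, hμ2, hg, sub_self]
    have key : ∀ z : ℂ, Polynomial.aeval z Q = 0 → Polynomial.aeval (z^2) g = z := by
      intro z hz
      obtain ⟨R, hR⟩ := hgdvd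
      have h0 : Polynomial.aeval z (g.comp (X^2) - X) = 0 := by
        rw [hR, map_mul, hz, zero_mul]
      rw [map_sub, aeval_comp, map_pow, aeval_X, sub_eq_zero] at h0
      exact h0
    have noTwin : ∀ z : ℂ, Polynomial.aeval z Q = 0 → Polynomial.aeval (-z) Q = 0 → False := by
      intro z h1 h2
      have e1 := key z h1
      have e2 := key (-z) h2
      rw [neg_sq] at e2
      have hz : z = -z := e1.symm.trans e2
      have hz0 : z = 0 := by linear_combination hz / 2
      exact hrne z h1 hz0
    have himg : rootsQ.image (·^2) = rootsP := by
      apply Finset.eq_of_subset_of_card_le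
      · intro w hw
        simp only [Finset.mem_image] at hw
        obtain ⟨z, hz, rfl⟩ := hw
        exact (hmemP' _).mpr (hsq z ((hmemQ' z).mp hz))
      · rw [hrPcard, Finset.card_image_of_injOn, hrQcard, hmn]
        intro a ha b hb hab
        simp only at hab
        by_contra hne
        have h0 : (a - b) * (a + b) = 0 := by linear_combination hab
        rcases mul_eq_zero.mp h0 with h | h
        · exact hne (sub_eq_zero.mp h)
        · have hba : b = -a := by linear_combination h
          apply noTwin a ((hmemQ' a).mp ha)
          rw [← hba]
          exact (hmemQ' b).mp hb
    have hsurj : ∀ w : ℂ, Polynomial.aeval w P = 0 →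
        ∃ z : ℂ, Polynomial.aeval z Q = 0 ∧ z^2 = w := by
      intro w hw
      have : w ∈ rootsQ.image (·^2) := by rw [himg]; exact (hmemP' w).mpr hw
      simp only [Finset.mem_image] at this
      obtain ⟨z, hz, hz2⟩ := this
      exact ⟨z, (hmemQ' z).mp hz, hz2⟩
    obtain ⟨z, hzQ, hz2⟩ := hsurj ((l:ℂ))⁻¹ hlinv
    have hz2' : z^2 = ((μ:ℂ)⁻¹)^2 := by rw [hz2, hμCinv2]
    have hzpm : z = (μ:ℂ)⁻¹ ∨ z = -((μ:ℂ)⁻¹) := by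
      have h0 : (z - (μ:ℂ)⁻¹) * (z + (μ:ℂ)⁻¹) = 0 := by linear_combination hz2'
      rcases mul_eq_zero.mp h0 with h | h
      · left; exact sub_eq_zero.mp h
      · right; linear_combination h
    rcases hzpm with rfl | rfl
    · -- √l is a Salem number
      left
      refine ⟨hμ1, hμZ, hzQ, ?_⟩
      intro y hy
      rcases hlroots (y^2) (hsq y hy) with h | h | h
      · have h0 : (y - (μ:ℂ)) * (y + (μ:ℂ)) = 0 := by linear_combination h - hμC2
        rcases mul_eq_zero.mp h0 with h1 | h1
        · left; exact sub_eq_zero.mp h1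
        · exfalso
          apply noTwin (μ:ℂ) hQC
          have : y = -(μ:ℂ) := by linear_combination h1
          rw [← this]; exact hy
      · have h0 : (y - (μ:ℂ)⁻¹) * (y + (μ:ℂ)⁻¹) = 0 := by linear_combination h - hμCinv2
        rcases mul_eq_zero.mp h0 with h1 | h1
        · right; left; exact sub_eq_zero.mp h1
        · exfalso
          apply noTwin ((μ:ℂ)⁻¹) hzQ
          have : y = -((μ:ℂ)⁻¹) := by linear_combination h1
          rw [← this]; exact hy
      · right; right
        have habs2 : ‖y‖ ^ 2 = 1 := by rw [← norm_pow, h]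
        nlinarith [norm_nonneg y]
    · -- the case z = -(√l)⁻¹ : then n = 2 and the constant coefficient is -1
      right
      have hm2 : m = 2 := by
        by_contra hm2
        have hn3 : 3 ≤ n := by omega
        have hcard : 0 < (rootsP \ {(l:ℂ), (l:ℂ)⁻¹}).card := by
          have h1 := Finset.le_card_sdiff ({(l:ℂ), (l:ℂ)⁻¹} : Finset ℂ) rootsP
          have h2 : ({(l:ℂ), (l:ℂ)⁻¹} : Finset ℂ).card ≤ 2 := Finset.card_insert_le _ _ |>.trans (by simp)
          omega
        obtain ⟨w, hw⟩ := Finset.card_pos.mp hcard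
        obtain ⟨hwP', hwnot⟩ := Finset.mem_sdiff.mp hw
        have hwP := (hmemP' w).mp hwP'
        simp only [Finset.mem_insert, Finset.mem_singleton, not_or] at hwnot
        have hwabs : ‖w‖ = 1 := by
          rcases hlroots w hwP with h | h | h
          · exact absurd h hwnot.1
          · exact absurd h hwnot.2
          · exact h
        -- a polynomial expressing -μ⁻¹ in terms of l
        have hmem : (-μ⁻¹ : ℝ) ∈ ℚ⟮l⟯ := neg_mem (inv_mem hμK)
        obtain ⟨hp, hhp⟩ : ∃ hp : ℚ[X], Polynomial.aeval l hp = -μ⁻¹ := by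
          have h1 : (-μ⁻¹ : ℝ) ∈ (ℚ⟮l⟯).toSubalgebra := hmem
          rw [IntermediateField.adjoin_simple_toSubalgebra_of_isAlgebraic hlQ.isAlgebraic,
            Algebra.adjoin_singleton_eq_range_aeval] at h1
          obtain ⟨hp, hhp⟩ := h1
          exact ⟨hp, hhp⟩
        have hPdvd2 : P ∣ (X * hp + g) := by
          apply minpoly.dvd
          have hend : μ ^ 2 * -μ⁻¹ + μ = 0 := by field_simp; ring
          rw [map_add, map_mul, aeval_X, hhp, hg, ← hμ2]
          exact hend
        have hrealroot : Polynomial.aeval (-μ⁻¹ : ℝ) Q = 0 := by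
          have hc : Polynomial.aeval ((-μ⁻¹ : ℝ) : ℂ) Q = 0 := by
            have he : ((-μ⁻¹ : ℝ) : ℂ) = -((μ:ℂ)⁻¹) := by push_cast; ring
            rw [he]; exact hzQ
          have h3 : (algebraMap ℝ ℂ) (Polynomial.aeval (-μ⁻¹:ℝ) Q) = 0 := by
            rw [← Polynomial.aeval_algebraMap_apply]; simpa using hc
          exact (map_eq_zero_iff _ (algebraMap ℝ ℂ).injective).mp h3
        have hQdvd2 : Q ∣ Q.comp (hp.comp (X^2)) := by
          apply minpoly.dvd
          rw [aeval_comp, aeval_comp, map_pow, aeval_X, hμ2, hhp]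
          exact hrealroot
        have hmaproot : ∀ y : ℂ, Polynomial.aeval y Q = 0 →
            Polynomial.aeval (Polynomial.aeval (y^2) hp) Q = 0 := by
          intro y hy
          obtain ⟨R, hR⟩ := hQdvd2
          have h4 : Polynomial.aeval y (Q.comp (hp.comp (X^2))) = 0 := by
            rw [hR, map_mul, hy, zero_mul]
          rwa [aeval_comp, aeval_comp, map_pow, aeval_X] at h4
        have hpval : ∀ y : ℂ, Polynomial.aeval y Q = 0 →
            Polynomial.aeval (y^2) hp = -y⁻¹ := by
          intro y hy
          have hy0 := hrne y hy
          obtain ⟨R, hR⟩ := hPdvd2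
          have h3 : Polynomial.aeval (y^2) (X * hp + g) = 0 := by
            rw [hR, map_mul, hsq y hy, zero_mul]
          rw [map_add, map_mul, aeval_X, key y hy] at h3
          apply mul_left_cancel₀ (pow_ne_zero 2 hy0)
          rw [show (y^2 : ℂ) * -y⁻¹ = -y by field_simp]
          linear_combination h3
        obtain ⟨z0, hz0Q, hz02⟩ := hsurj w hwP
        have hz0ne := hrne z0 hz0Q
        have habs : ‖z0‖ = 1 := by
          have h5 : ‖z0‖ ^ 2 = 1 := by rw [← norm_pow, hz02, hwabs]
          nlinarith [norm_nonneg z0]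
        have hconj0 : (starRingEnd ℂ) z0 = z0⁻¹ := (Complex.inv_eq_conj habs).symm
        have hroot1 : Polynomial.aeval (z0⁻¹) Q = 0 := by
          rw [← hconj0]; exact hconj z0 hz0Q
        have hroot2 : Polynomial.aeval (-(z0⁻¹)) Q = 0 := by
          have h6 := hmaproot z0 hz0Q
          rwa [hpval z0 hz0Q] at h6
        exact noTwin _ hroot1 hroot2
      refine ⟨hm2, ?_⟩
      -- the constant coefficient is -1
      have hμroot : (μ:ℂ) ∈ rootsQ := (hmemQ' _).mpr hQC
      have hzroot : (-((μ:ℂ)⁻¹)) ∈ rootsQ := (hmemQ' _).mpr hzQ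
      have hne : (μ:ℂ) ≠ -((μ:ℂ)⁻¹) := by
        intro h
        have h1 : ((μ:ℝ):ℂ) = ((-μ⁻¹:ℝ):ℂ) := by rw [h]; push_cast; ring
        have h2 := Complex.ofReal_injective h1
        have h3 : (0:ℝ) < μ⁻¹ := by positivity
        linarith
      have hsub : ({(μ:ℂ), -((μ:ℂ)⁻¹)} : Finset ℂ) ⊆ rootsQ := by
        intro x hx
        simp only [Finset.mem_insert, Finset.mem_singleton] at hx
        rcases hx with rfl | rfl
        · exact hμroot
        · exact hzroot
      have hset : ({(μ:ℂ), -((μ:ℂ)⁻¹)} : Finset ℂ) = rootsQ := by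
        apply Finset.eq_of_subset_of_card_le hsub
        rw [hrQcard, hm2, Finset.card_insert_of_notMem (by simpa using hne),
          Finset.card_singleton]
      have hms : QC.roots = {(μ:ℂ), -((μ:ℂ)⁻¹)} := by
        have h1 : rootsQ.val = QC.roots := Multiset.dedup_eq_self.mpr hQnodup
        rw [← h1, ← hset]
        rw [Finset.insert_val_of_notMem (by simpa using hne), Finset.singleton_val]
        rfl
      have hsplits : Splits QC := IsAlgClosed.splits QC
      have hprod : Q.map (algebraMap ℚ ℂ) = _ := hsplits.eq_prod_roots_of_monic (hQm.map (algebraMap ℚ ℂ))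
      rw [hms] at hprod
      have heval : QC.eval 0 = -1 := by
        rw [hQCdef, hprod]
        simp only [Multiset.insert_eq_cons, Multiset.map_cons, Multiset.map_singleton,
          Multiset.prod_cons, Multiset.prod_singleton, eval_mul, eval_sub, eval_X, eval_C]
        have hμCne : (μ:ℂ) ≠ 0 := by exact_mod_cast hμne
        field_simp
        ring
      have h7 : (algebraMap ℚ ℂ) (Q.coeff 0) = -1 := by
        rw [← coeff_map, coeff_zero_eq_eval_zero]
        exact heval
      have h8 : (algebraMap ℚ ℂ) (Q.coeff 0) = (algebraMap ℚ ℂ) (-1) := by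
        rw [h7, map_neg, map_one]
      exact (algebraMap ℚ ℂ).injective h8
  -- ============ assembling ============
  refine ⟨part1, ?_, ?_⟩
  · exact forward
  · intro h
    rcases part1 with h1 | h1
    · exact h1
    · exfalso
      rcases h with hS | ⟨hm2, _⟩
      · -- Salem case cannot have degree 2n
        have hQeq : Q = P.comp (X^2) := by
          obtain ⟨R, hR⟩ := hQdvd
          have hRne : R ≠ 0 := by
            intro h0; rw [h0, mul_zero] at hR; exact hcomp_monic.ne_zero hR
          have hdegR : R.natDegree = 0 := by
            have := hcomp_deg
            rw [hR, natDegree_mul hQm.ne_zero hRne] at this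
            omega
          have hRlead : R.leadingCoeff = 1 := by
            have h0 : (Q * R).leadingCoeff = 1 := by rw [← hR]; exact hcomp_monic
            rw [leadingCoeff_mul, hQm.leadingCoeff, one_mul] at h0
            exact h0
          have hc0 : R.coeff 0 = 1 := by
            rw [← hRlead, leadingCoeff, hdegR]
          have hR1 : R = 1 := by
            rw [eq_C_of_natDegree_eq_zero hdegR, hc0, map_one]
          rw [hR, hR1, mul_one]
        have hroot : Polynomial.aeval (-(μ:ℂ)) Q = 0 := by
          rw [hQeq, aeval_comp, map_pow, aeval_X, neg_sq, hμC2]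
          exact hPC
        obtain ⟨hμ1', _, _, hμroots⟩ := hS
        rcases hμroots _ hroot with h | h | h
        · have h2 : (-μ:ℝ) = μ := by exact_mod_cast h
          linarith
        · have h2 : (-μ:ℝ) = μ⁻¹ := by exact_mod_cast h
          have h3 : (0:ℝ) < μ⁻¹ := by positivity
          linarith
        · rw [show (-(μ:ℂ)) = ((-μ : ℝ) : ℂ) by push_cast; ring, Complex.norm_real, Real.norm_eq_abs,
            abs_neg, abs_of_pos (by linarith)] at h
          linarith
      · omega
end

section
/- Let λ be a Salem number and K a subfield of ℚ(λ + λ⁻¹). Then λ is square-rootable over K via a square in K if and only if λ^{1/2} is a Salem number. -/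
open Polynomial

/-- An element of a subfield `K` of `ℝ` is totally positive if every field embedding
`K → ℝ` sends it to a positive real number. -/
def TotallyPositive (K : Subfield ℝ) (a : K) : Prop :=
  ∀ φ : K →+* ℝ, 0 < φ a

/-- A Salem number `l` is square-rootable over `K ⊆ ℚ(l + l⁻¹)` via `α ∈ K` if `α` is
totally positive and there is a monic palindromic polynomial `q`, whose even-degree
coefficients lie in `K` and whose odd-degree coefficients lie in `√α · K`, with
`q(x) q(-x) = p(x²)`, where `p` is the minimal polynomial of `l` over `K`. -/
def SquareRootableVia (K : Subfield ℝ) (l : ℝ) (a : K) : Prop :=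
  TotallyPositive K a ∧
  ∃ q : Polynomial ℝ, q.Monic ∧
    (∀ j ≤ q.natDegree, q.coeff j = q.coeff (q.natDegree - j)) ∧
    (∀ j, Even j → q.coeff j ∈ K) ∧
    (∀ j, Odd j → ∃ c ∈ K, q.coeff j = Real.sqrt (a : ℝ) * c) ∧
    q * q.comp (-Polynomial.X) =
      ((minpoly K l).map K.subtype).comp (Polynomial.X ^ 2)

set_option maxHeartbeats 1000000
set_option synthInstance.maxHeartbeats 1000000

private lemma even_card_of_invol {α : Type*} [DecidableEq α] (f : α → α) :
    ∀ (s : Finset α), (∀ a ∈ s, f a ∈ s) → (∀ a ∈ s, f (f a) = a) →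
      (∀ a ∈ s, f a ≠ a) → Even s.card := by
  intro s
  induction s using Finset.strongInduction with
  | _ s ih =>
    intro hcl hinv hne
    rcases s.eq_empty_or_nonempty with rfl | ⟨a, ha⟩
    · simp
    · have hfa : f a ∈ s := hcl a ha
      have hane : f a ≠ a := hne a ha
      set t := (s.erase a).erase (f a) with ht
      have htsub : t ⊆ s := fun x hx => Finset.mem_of_mem_erase (Finset.mem_of_mem_erase hx)
      have htss : t ⊂ s := Finset.ssubset_of_ssubset_of_subset
        (Finset.erase_ssubset (Finset.mem_erase.2 ⟨hane, hfa⟩)) (Finset.erase_subset _ _)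
      have hmem : ∀ x, x ∈ t ↔ x ∈ s ∧ x ≠ a ∧ x ≠ f a := by
        intro x
        simp only [ht, Finset.mem_erase]
        tauto
      have hcl' : ∀ x ∈ t, f x ∈ t := by
        intro x hx
        rcases (hmem x).1 hx with ⟨hxs, hxa, hxfa⟩
        refine (hmem (f x)).2 ⟨hcl x hxs, ?_, ?_⟩
        · intro h
          apply hxfa
          have := hinv x hxs
          rw [h] at this
          -- this : f a = x
          exact this.symm
        · intro h
          have := hinv x hxs
          rw [h, hinv a ha] at this
          exact hxa this.symm
      have hcard : s.card = t.card + 2 := by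
        have h1 : (s.erase a).card = s.card - 1 := Finset.card_erase_of_mem ha
        have h2 : t.card = (s.erase a).card - 1 :=
          Finset.card_erase_of_mem (Finset.mem_erase.2 ⟨hane, hfa⟩)
        have hs2 : 2 ≤ s.card := by
          have : ({f a, a} : Finset α) ⊆ s := by
            intro x hx
            rcases Finset.mem_insert.1 hx with rfl | hx
            · exact hfa
            · simpa using (Finset.mem_singleton.1 hx) ▸ ha
          have := Finset.card_le_card this
          rwa [Finset.card_insert_of_notMem (by simpa using hane), Finset.card_singleton] at this
        omega
      have hev : Even t.card := ih t htss hcl' (fun x hx => hinv x (htsub hx))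
        (fun x hx => hne x (htsub hx))
      rw [hcard]
      rcases hev with ⟨k, hk⟩
      exact ⟨k + 1, by omega⟩

/-- Evaluation of the reverse of a real polynomial. -/
private lemma eval_reverse_eq (f : Polynomial ℝ) (y : ℝ) (hy : y ≠ 0) :
    f.reverse.eval y = y ^ f.natDegree * f.eval y⁻¹ := by
  letI hinv : Invertible (y⁻¹ : ℝ) := ⟨y, by field_simp, by field_simp⟩
  have h := Polynomial.eval₂_reverse_mul_pow (RingHom.id ℝ) (y⁻¹) f
  have hiv : (⅟(y⁻¹) : ℝ) = y := rfl
  rw [hiv] at h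
  have hee : ∀ (g : Polynomial ℝ) (x : ℝ), eval₂ (RingHom.id ℝ) x g = eval x g := fun g x => rfl
  rw [hee, hee] at h
  -- h : eval y f.reverse * (y⁻¹) ^ f.natDegree = eval y⁻¹ f
  have hyp : (y : ℝ) ^ f.natDegree ≠ 0 := pow_ne_zero _ hy
  calc f.reverse.eval y = (f.reverse.eval y * (y⁻¹) ^ f.natDegree) * y ^ f.natDegree := by
        rw [mul_assoc, inv_pow, inv_mul_cancel₀ hyp, mul_one]
    _ = y ^ f.natDegree * f.eval y⁻¹ := by rw [h]; ring


/-- A coefficient-palindromic polynomial equals its own reverse. -/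
private lemma reverse_eq_of_palindrome {F : Type*} [Field F] (f : Polynomial F)
    (h : ∀ j ≤ f.natDegree, f.coeff j = f.coeff (f.natDegree - j)) : f.reverse = f := by
  ext n
  rw [Polynomial.coeff_reverse]
  rcases le_or_gt n f.natDegree with hn | hn
  · rw [Polynomial.revAt_le hn, ← h n hn]
  · rw [Polynomial.revAt_eq_self_of_lt hn]

/-- Evaluation of a real polynomial, mapped to `ℂ`, at a real point. -/
private lemma eval_map_ofReal (f : Polynomial ℝ) (y : ℝ) :
    (f.map (algebraMap ℝ ℂ)).eval ((y : ℝ) : ℂ) = ((f.eval y : ℝ) : ℂ) := by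
  rw [← Polynomial.eval₂_eq_eval_map]
  exact Polynomial.eval₂_at_apply (algebraMap ℝ ℂ) y

/-- A monic divisor of a monic polynomial of the same degree equals it. -/
private lemma monic_dvd_eq {F : Type*} [Field F] {f g : Polynomial F}
    (hf : f.Monic) (hg : g.Monic) (hdvd : f ∣ g) (hdeg : g.natDegree ≤ f.natDegree) :
    f = g := by
  obtain ⟨t, ht⟩ := hdvd
  have ht0 : t ≠ 0 := by
    rintro rfl
    rw [mul_zero] at ht
    exact hg.ne_zero ht
  have hdeg' : g.natDegree = f.natDegree + t.natDegree := by
    rw [ht, Polynomial.natDegree_mul hf.ne_zero ht0]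
  have htd : t.natDegree = 0 := by omega
  have hlead : t.leadingCoeff = 1 := by
    have := hg.leadingCoeff
    rw [ht, Polynomial.leadingCoeff_mul, hf.leadingCoeff, one_mul] at this
    exact this
  have : t = 1 := by
    rw [Polynomial.eq_C_of_natDegree_eq_zero htd]
    rw [Polynomial.leadingCoeff, htd] at hlead
    rw [hlead, map_one]
  rw [ht, this, mul_one]

/-- Degree comparison of minimal polynomials along adjunction membership. -/
private lemma minpoly_natDegree_le (F : Subfield ℝ) (x y : ℝ) (hx : IsIntegral F x)
    (hy : y ∈ IntermediateField.adjoin F {x}) :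
    (minpoly F y).natDegree ≤ (minpoly F x).natDegree := by
  haveI := IntermediateField.adjoin.finiteDimensional hx
  set L : IntermediateField F ℝ := IntermediateField.adjoin F {x} with hL
  have hinj : Function.Injective (algebraMap L ℝ) := (algebraMap L ℝ).injective
  have h1 : minpoly F ((algebraMap L ℝ) (⟨y, hy⟩ : L)) = minpoly F (⟨y, hy⟩ : L) :=
    minpoly.algebraMap_eq hinj _
  have h2 : (algebraMap L ℝ) (⟨y, hy⟩ : L) = y := rfl
  rw [h2] at h1
  rw [h1]
  calc (minpoly F (⟨y, hy⟩ : L)).natDegree ≤ Module.finrank F L := minpoly.natDegree_le _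
    _ = (minpoly F x).natDegree := IntermediateField.adjoin.finrank hx


private lemma key_transfer (l : ℝ) (hl1 : 1 < l) (K : Subfield ℝ)
    (hK : K ≤ Subfield.closure {l + l⁻¹})
    (hsq : IsIntegral ℚ (Real.sqrt l))
    (z : ℂ) (hz : (Polynomial.aeval z) (minpoly ℚ (Real.sqrt l)) = 0)
    (hfix : z ^ 2 = (l : ℂ) ∨ z ^ 2 = ((l : ℂ))⁻¹)
    (f : Polynomial ℝ) (hf : ∀ j, f.coeff j ∈ K)
    (e : ℝ) (he : e = 1 ∨ e = -1)
    (h0 : f.eval (e * Real.sqrt l) = 0) :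
    (f.map (algebraMap ℝ ℂ)).eval ((e : ℝ) * z) = 0 := by
  set s : ℝ := Real.sqrt l with hs
  set sc : ℂ := ((s : ℝ) : ℂ) with hsc
  have hl0 : (0:ℝ) < l := lt_trans one_pos hl1
  have hssq : s ^ 2 = l := Real.sq_sqrt hl0.le
  have hscsq : sc ^ 2 = (l : ℂ) := by
    rw [hsc, ← Complex.ofReal_pow, hssq]
  have hscint : IsIntegral ℚ sc := by
    have : sc = (Complex.ofRealAm.restrictScalars ℚ) s := rfl
    rw [this]
    exact hsq.map _
  have hmp : minpoly ℚ sc = minpoly ℚ s := by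
    have : sc = algebraMap ℝ ℂ s := rfl
    rw [this]
    exact minpoly.algebraMap_eq Complex.ofReal_injective s
  have hz' : z ∈ (minpoly ℚ sc).aroots ℂ := by
    rw [hmp, Polynomial.mem_aroots]
    exact ⟨minpoly.ne_zero hsq, hz⟩
  set L : IntermediateField ℚ ℂ := IntermediateField.adjoin ℚ {sc} with hL
  set φ : L →ₐ[ℚ] ℂ :=
    (IntermediateField.algHomAdjoinIntegralEquiv ℚ hscint).symm ⟨z, hz'⟩ with hφdef
  have hφ : φ (IntermediateField.AdjoinSimple.gen ℚ sc) = z :=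
    IntermediateField.algHomAdjoinIntegralEquiv_symm_apply_gen ℚ hscint ⟨z, hz'⟩
  set gen : L := IntermediateField.AdjoinSimple.gen ℚ sc with hgen
  have hgenv : (gen : ℂ) = sc := rfl
  have hscL : sc ∈ L := IntermediateField.mem_adjoin_simple_self ℚ sc
  have hlcL : ((l:ℝ) : ℂ) ∈ L := by rw [← hscsq]; exact pow_mem hscL 2
  have hlc0 : ((l:ℝ):ℂ) ≠ 0 := by
    simp only [ne_eq, Complex.ofReal_eq_zero]
    exact ne_of_gt hl0
  -- the subfield of elements of `L` fixed by `φ`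
  set S : Subfield ℂ :=
    { carrier := {w : ℂ | ∃ h : w ∈ L, φ (⟨w, h⟩ : L) = w}
      mul_mem' := by
        rintro a b ⟨ha, hfa⟩ ⟨hb, hfb⟩
        refine ⟨mul_mem ha hb, ?_⟩
        have : (⟨a * b, mul_mem ha hb⟩ : L) = ⟨a, ha⟩ * ⟨b, hb⟩ := rfl
        rw [this, map_mul, hfa, hfb]
      one_mem' := by
        refine ⟨one_mem L, ?_⟩
        have : (⟨(1:ℂ), one_mem L⟩ : L) = 1 := rfl
        rw [this, map_one]
      add_mem' := by
        rintro a b ⟨ha, hfa⟩ ⟨hb, hfb⟩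
        refine ⟨add_mem ha hb, ?_⟩
        have : (⟨a + b, add_mem ha hb⟩ : L) = ⟨a, ha⟩ + ⟨b, hb⟩ := rfl
        rw [this, map_add, hfa, hfb]
      zero_mem' := by
        refine ⟨zero_mem L, ?_⟩
        have : (⟨(0:ℂ), zero_mem L⟩ : L) = 0 := rfl
        rw [this, map_zero]
      neg_mem' := by
        rintro a ⟨ha, hfa⟩
        refine ⟨neg_mem ha, ?_⟩
        have : (⟨-a, neg_mem ha⟩ : L) = -⟨a, ha⟩ := rfl
        rw [this, map_neg, hfa]
      inv_mem' := by
        rintro a ⟨ha, hfa⟩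
        refine ⟨inv_mem ha, ?_⟩
        have : (⟨a⁻¹, inv_mem ha⟩ : L) = (⟨a, ha⟩ : L)⁻¹ := rfl
        rw [this, map_inv₀, hfa] } with hS
  have hgenS : ((l:ℝ):ℂ) + ((l:ℝ):ℂ)⁻¹ ∈ S := by
    refine ⟨add_mem hlcL (inv_mem hlcL), ?_⟩
    have h1 : (⟨((l:ℝ):ℂ) + ((l:ℝ):ℂ)⁻¹, add_mem hlcL (inv_mem hlcL)⟩ : L)
        = ⟨((l:ℝ):ℂ), hlcL⟩ + (⟨((l:ℝ):ℂ), hlcL⟩ : L)⁻¹ := rfl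
    rw [h1, map_add, map_inv₀]
    have h2 : (⟨((l:ℝ):ℂ), hlcL⟩ : L) = gen ^ 2 := by
      apply Subtype.ext
      show ((l:ℝ):ℂ) = sc ^ 2
      rw [hscsq]
    rw [h2, map_pow, hφ]
    rcases hfix with hf1 | hf1
    · rw [hf1]
    · rw [hf1, inv_inv, add_comm]
  have hKS : ∀ c : ℝ, c ∈ K → ((c : ℝ) : ℂ) ∈ S := by
    have hle : Subfield.closure {l + l⁻¹} ≤ S.comap (algebraMap ℝ ℂ) := by
      rw [Subfield.closure_le]
      intro x hx
      rcases Set.mem_singleton_iff.1 hx with rfl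
      show algebraMap ℝ ℂ (l + l⁻¹) ∈ S
      have : algebraMap ℝ ℂ (l + l⁻¹) = ((l:ℝ):ℂ) + ((l:ℝ):ℂ)⁻¹ := by
        show ((l + l⁻¹ : ℝ) : ℂ) = _
        push_cast
        norm_num
      rw [this]
      exact hgenS
    intro c hc
    exact hle (hK hc)
  -- the generic evaluation-transfer computation
  have main : ∀ g : L, φ g = (e:ℝ) * z → (g : ℂ) = (e:ℝ) * sc →
      (f.map (algebraMap ℝ ℂ)).eval ((e : ℝ) * z) = 0 := by
    intro g hg hgv
    set n : ℕ := f.natDegree + 1 with hn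
    have hmL : ∀ i : ℕ, ((f.coeff i : ℝ) : ℂ) ∈ L := fun i =>
      (hKS _ (hf i)).elim (fun h _ => h)
    have hφc : ∀ i : ℕ, φ (⟨((f.coeff i : ℝ):ℂ), hmL i⟩ : L) = ((f.coeff i : ℝ):ℂ) := by
      intro i
      obtain ⟨h', e'⟩ := hKS _ (hf i)
      exact e'
    set u : L := ∑ i ∈ Finset.range n, (⟨((f.coeff i : ℝ):ℂ), hmL i⟩ : L) * g ^ i with hu
    have hucoe : (u : ℂ) = ∑ i ∈ Finset.range n, ((f.coeff i : ℝ):ℂ) * ((e:ℝ) * sc) ^ i := by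
      have h1 : ((u : L) : ℂ) = algebraMap L ℂ u := rfl
      rw [h1, map_sum]
      refine Finset.sum_congr rfl fun i _ => ?_
      rw [map_mul, map_pow]
      have h2 : algebraMap L ℂ (⟨((f.coeff i : ℝ):ℂ), hmL i⟩ : L) = ((f.coeff i : ℝ):ℂ) := rfl
      have h3 : algebraMap L ℂ g = (g : ℂ) := rfl
      rw [h2, h3, hgv]
    have heval : ∀ w : ℂ, (f.map (algebraMap ℝ ℂ)).eval w
        = ∑ i ∈ Finset.range n, ((f.coeff i : ℝ):ℂ) * w ^ i := by
      intro w
      have hdeg : (f.map (algebraMap ℝ ℂ)).natDegree = f.natDegree :=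
        Polynomial.natDegree_map (algebraMap ℝ ℂ)
      rw [Polynomial.eval_eq_sum_range, hdeg]
      refine Finset.sum_congr rfl fun i _ => ?_
      rw [Polynomial.coeff_map]
      rfl
    have hu0 : (u : ℂ) = 0 := by
      rw [hucoe, ← heval ((e:ℝ) * sc)]
      have : ((e:ℝ) : ℂ) * sc = (((e * s : ℝ)) : ℂ) := by push_cast; ring
      rw [this]
      have := congrArg (fun t : ℝ => ((t : ℝ) : ℂ)) h0
      simp only [Complex.ofReal_zero] at this
      rw [← this]
      rw [← Polynomial.eval₂_eq_eval_map]
      exact Polynomial.eval₂_at_apply (algebraMap ℝ ℂ) (e * s)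
    have huz : u = 0 := by
      apply Subtype.ext
      exact hu0
    have hφu : φ u = 0 := by rw [huz, map_zero]
    rw [hu, map_sum] at hφu
    have : ∑ i ∈ Finset.range n, ((f.coeff i : ℝ):ℂ) * (((e:ℝ):ℂ) * z) ^ i = 0 := by
      rw [← hφu]
      refine Finset.sum_congr rfl fun i _ => ?_
      rw [map_mul, map_pow, hφc i, hg]
    rw [heval]
    exact this
  rcases he with rfl | rfl
  · refine main gen ?_ ?_
    · rw [hφ]; push_cast; rw [one_mul]
    · rw [hgenv]; push_cast; rw [one_mul]
  · refine main (-gen) ?_ ?_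
    · rw [map_neg, hφ]; push_cast; ring
    · show (-(gen:ℂ)) = _
      rw [hgenv]; push_cast; ring


private lemma sqrt_int (l : ℝ) (hl0 : 0 ≤ l) (hint : IsIntegral ℤ l) :
    IsIntegral ℤ (Real.sqrt l) := by
  refine ⟨(minpoly ℤ l).comp (X ^ 2), ?_, ?_⟩
  · exact (minpoly.monic hint).comp (monic_X_pow 2) (by simp [natDegree_X_pow])
  · show Polynomial.eval₂ (algebraMap ℤ ℝ) (Real.sqrt l) ((minpoly ℤ l).comp (X ^ 2)) = 0
    rw [← Polynomial.aeval_def, Polynomial.aeval_comp]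
    have : (Polynomial.aeval (Real.sqrt l)) ((X : Polynomial ℤ) ^ 2) = l := by
      rw [map_pow, Polynomial.aeval_X, Real.sq_sqrt hl0]
    rw [this]
    exact minpoly.aeval ℤ l

private lemma salem_irrat (l : ℝ) (hl : IsSalem l) : ∀ r : ℚ, l ≠ (r : ℝ) := by
  intro r h
  have h1 : l = algebraMap ℚ ℝ r := by rw [h]; rfl
  have h2 : minpoly ℚ l = X - C r := by rw [h1]; exact minpoly.eq_X_sub_C ℝ r
  have h3 := hl.2.2.1
  rw [h2] at h3
  simp only [map_sub, Polynomial.aeval_X, Polynomial.aeval_C] at h3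
  have h4 : ((l:ℝ):ℂ)⁻¹ = ((r:ℚ):ℂ) := by
    rw [sub_eq_zero] at h3
    rw [h3]
    rfl
  have h5 : ((l:ℝ):ℂ)⁻¹ = ((l⁻¹ : ℝ) : ℂ) := by push_cast; ring
  rw [h5] at h4
  have h6 : (l⁻¹ : ℝ) = (r : ℝ) := by exact_mod_cast h4
  rw [← h] at h6
  have hl1 := hl.1
  have hlne : l ≠ 0 := by nlinarith
  have h7 : l * l⁻¹ = 1 := mul_inv_cancel₀ hlne
  rw [h6] at h7
  nlinarith

/-- If both `y` and `-y` are roots of `q`, we contradict separability of `minpoly K l`. -/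
private lemma no_double_root (l : ℝ) (K : Subfield ℝ) (hlK : IsIntegral K l)
    (q : Polynomial ℝ)
    (E : q * q.comp (-Polynomial.X) = ((minpoly K l).map K.subtype).comp (Polynomial.X ^ 2))
    (y : ℝ) (hy : y ≠ 0) (h1 : q.eval y = 0) (h2 : q.eval (-y) = 0) : False := by
  set p : Polynomial ↥K := minpoly K l with hp
  set pR : Polynomial ℝ := p.map K.subtype with hpR
  have hsep : p.Separable := (minpoly.irreducible hlK).separable
  have hsepR : pR.Separable := hsep.map
  obtain ⟨a, b, hab⟩ := hsepR
  -- evaluate the equation and its derivative at y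
  have hc : (q.comp (-Polynomial.X)).eval y = q.eval (-y) := by
    rw [Polynomial.eval_comp]
    simp
  have hP0 : pR.eval (y ^ 2) = 0 := by
    have := congrArg (Polynomial.eval y) E
    rw [Polynomial.eval_mul, hc, h1, zero_mul, Polynomial.eval_comp] at this
    simp only [Polynomial.eval_pow, Polynomial.eval_X] at this
    exact this.symm
  have hP1 : (Polynomial.derivative pR).eval (y ^ 2) = 0 := by
    have hD := congrArg (fun t => (Polynomial.derivative t).eval y) E
    simp only [Polynomial.derivative_mul, Polynomial.derivative_comp,
      Polynomial.eval_add, Polynomial.eval_mul] at hD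
    rw [hc] at hD
    rw [h1, h2] at hD
    simp only [mul_zero, zero_mul, add_zero, zero_add] at hD
    simp only [Polynomial.derivative_X_pow, Polynomial.eval_mul, Polynomial.eval_comp,
      Polynomial.eval_pow, Polynomial.eval_X, Polynomial.eval_smul, Polynomial.eval_C,
      Polynomial.eval_mul] at hD
    simp only [Polynomial.derivative_X_pow, Polynomial.eval_mul, Polynomial.eval_C,
      Polynomial.eval_pow, Polynomial.eval_X, Polynomial.eval_comp, pow_one,
      Nat.cast_ofNat] at hD
    rcases mul_eq_zero.mp hD.symm with h | h
    · exfalso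
      rcases mul_eq_zero.mp h with h' | h'
      · norm_num at h'
      · exact hy (by simpa using h')
    · exact h
  have := congrArg (Polynomial.eval (y ^ 2)) hab
  rw [Polynomial.eval_add, Polynomial.eval_mul, Polynomial.eval_mul, hP0, hP1,
    Polynomial.eval_one] at this
  norm_num at this


private lemma real_root_of_complex (q : Polynomial ℝ) (x : ℝ)
    (h : (q.map (algebraMap ℝ ℂ)).eval ((x : ℝ) : ℂ) = 0) : q.eval x = 0 := by
  rw [eval_map_ofReal] at h
  exact_mod_cast h

private lemma forward_dir (l : ℝ) (hl : IsSalem l) (K : Subfield ℝ)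
    (hK : K ≤ Subfield.closure {l + l⁻¹})
    (H : ∃ a : K, (∃ b : K, a = b ^ 2) ∧ SquareRootableVia K l a) :
    IsSalem (Real.sqrt l) := by
  obtain ⟨a, ⟨b, hab⟩, htp, q, hmon, hpal, hev, hodd, E⟩ := H
  set s : ℝ := Real.sqrt l with hs
  have hl0 : (0:ℝ) < l := lt_trans one_pos hl.1
  have hs1 : 1 < s := by
    rw [hs, show (1:ℝ) = Real.sqrt 1 from (Real.sqrt_one).symm]
    exact Real.sqrt_lt_sqrt (by norm_num) hl.1
  have hs0 : (0:ℝ) < s := lt_trans one_pos hs1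
  have hssq : s ^ 2 = l := Real.sq_sqrt hl0.le
  have hsZ : IsIntegral ℤ s := sqrt_int l hl0.le hl.2.1
  have hsq : IsIntegral ℚ s := hsZ.tower_top
  have hlK : IsIntegral K l := hl.2.1.tower_top
  -- all coefficients of q lie in K
  have habR : (a : ℝ) = (b : ℝ) ^ 2 := by rw [hab]; push_cast; ring
  have hcoef : ∀ j, q.coeff j ∈ K := by
    intro j
    rcases Nat.even_or_odd j with hj | hj
    · exact hev j hj
    · obtain ⟨c, hcK, hc⟩ := hodd j hj
      rw [hc, habR, Real.sqrt_sq_eq_abs]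
      rcases abs_choice (b : ℝ) with h | h
      · rw [h]; exact mul_mem b.2 hcK
      · rw [h]; exact mul_mem (neg_mem b.2) hcK
  set d : ℕ := q.natDegree with hd
  have paleval : ∀ y : ℝ, y ≠ 0 → q.eval y = y ^ d * q.eval y⁻¹ := by
    intro y hy
    have h1 := eval_reverse_eq q y hy
    rw [reverse_eq_of_palindrome q hpal] at h1
    exact h1
  -- s or -s is a root of q
  have hq0 : q.eval s = 0 ∨ q.eval (-s) = 0 := by
    have h1 := congrArg (Polynomial.eval s) E
    simp only [Polynomial.eval_mul, Polynomial.eval_comp, Polynomial.eval_pow,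
      Polynomial.eval_X, Polynomial.eval_neg] at h1
    rw [hssq] at h1
    have h2 : ((minpoly K l).map K.subtype).eval l = 0 := by
      rw [← Polynomial.eval₂_eq_eval_map]
      exact minpoly.aeval K l
    rw [h2] at h1
    exact mul_eq_zero.mp h1
  -- exclusion of -s as a root of the minimal polynomial of s over ℚ
  have hexcl1 : ¬ (Polynomial.aeval (-((s:ℝ):ℂ))) (minpoly ℚ s) = 0 := by
    intro hroot
    have hfix : (-((s:ℝ):ℂ)) ^ 2 = ((l:ℝ):ℂ) ∨ (-((s:ℝ):ℂ)) ^ 2 = (((l:ℝ):ℂ))⁻¹ := by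
      left
      rw [neg_pow, ← Complex.ofReal_pow, hssq]
      simp
    have hds : q.eval s = 0 ∧ q.eval (-s) = 0 := by
      rcases hq0 with h1 | h1
      · refine ⟨h1, ?_⟩
        have ht := key_transfer l hl.1 K hK hsq _ hroot hfix q hcoef 1 (Or.inl rfl)
          (by rwa [one_mul])
        apply real_root_of_complex
        have : (((1:ℝ):ℂ) * (-((s:ℝ):ℂ))) = ((-s : ℝ) : ℂ) := by push_cast; ring
        rwa [this] at ht
      · refine ⟨?_, h1⟩
        have ht := key_transfer l hl.1 K hK hsq _ hroot hfix q hcoef (-1) (Or.inr rfl)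
          (by rw [neg_one_mul]; exact h1)
        apply real_root_of_complex
        have : (((-1:ℝ):ℂ) * (-((s:ℝ):ℂ))) = ((s : ℝ) : ℂ) := by push_cast; ring
        rwa [this] at ht
    exact no_double_root l K hlK q E s (ne_of_gt hs0) hds.1 hds.2
  -- exclusion of -s⁻¹ as a root
  have hexcl2 : ¬ (Polynomial.aeval (-((s:ℝ):ℂ)⁻¹)) (minpoly ℚ s) = 0 := by
    intro hroot
    have hsc0 : ((s:ℝ):ℂ) ≠ 0 := by
      simp only [ne_eq, Complex.ofReal_eq_zero]
      exact ne_of_gt hs0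
    have hfix : (-((s:ℝ):ℂ)⁻¹) ^ 2 = ((l:ℝ):ℂ) ∨ (-((s:ℝ):ℂ)⁻¹) ^ 2 = (((l:ℝ):ℂ))⁻¹ := by
      right
      rw [neg_sq, inv_pow, ← Complex.ofReal_pow, hssq]
    have hds : q.eval s⁻¹ = 0 ∧ q.eval (-s⁻¹) = 0 := by
      rcases hq0 with h1 | h1
      · constructor
        · have h2 := paleval s (ne_of_gt hs0)
          rw [h1] at h2
          have hsd : s ^ d ≠ 0 := pow_ne_zero _ (ne_of_gt hs0)
          rcases mul_eq_zero.mp h2.symm with h | h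
          · exact absurd h hsd
          · exact h
        · have ht := key_transfer l hl.1 K hK hsq _ hroot hfix q hcoef 1 (Or.inl rfl)
            (by rwa [one_mul])
          apply real_root_of_complex
          have : (((1:ℝ):ℂ) * (-((s:ℝ):ℂ)⁻¹)) = ((-s⁻¹ : ℝ) : ℂ) := by push_cast; ring
          rwa [this] at ht
      · constructor
        · have ht := key_transfer l hl.1 K hK hsq _ hroot hfix q hcoef (-1) (Or.inr rfl)
            (by rw [neg_one_mul]; exact h1)
          apply real_root_of_complex
          have : (((-1:ℝ):ℂ) * (-((s:ℝ):ℂ)⁻¹)) = ((s⁻¹ : ℝ) : ℂ) := by push_cast; ring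
          rwa [this] at ht
        · have h2 := paleval (-s) (by intro h; exact (ne_of_gt hs0) (by linarith))
          rw [h1] at h2
          have hsd : (-s) ^ d ≠ 0 := pow_ne_zero _ (by intro h; exact (ne_of_gt hs0) (by linarith))
          rcases mul_eq_zero.mp h2.symm with h | h
          · exact absurd h hsd
          · rw [neg_inv]
            exact h
    exact no_double_root l K hlK q E s⁻¹ (inv_ne_zero (ne_of_gt hs0)) hds.1 hds.2
  -- classification of the roots of minpoly ℚ s
  have hCLS : ∀ w : ℂ, (Polynomial.aeval w) (minpoly ℚ s) = 0 →
      w = ((s:ℝ):ℂ) ∨ w = ((s:ℝ):ℂ)⁻¹ ∨ ‖w‖ = 1 := by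
    intro w hw
    have hdvd : minpoly ℚ s ∣ (minpoly ℚ l).comp (X ^ 2) := by
      apply minpoly.dvd
      rw [Polynomial.aeval_comp]
      have : (Polynomial.aeval s) ((X : Polynomial ℚ) ^ 2) = l := by
        rw [map_pow, Polynomial.aeval_X, hssq]
      rw [this]
      exact minpoly.aeval ℚ l
    have hw2 : (Polynomial.aeval (w ^ 2)) (minpoly ℚ l) = 0 := by
      obtain ⟨c, hc⟩ := hdvd
      have h5 := congrArg (Polynomial.aeval w) hc
      rw [map_mul, hw, zero_mul, Polynomial.aeval_comp, map_pow, Polynomial.aeval_X] at h5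
      exact h5
    rcases hl.2.2.2 (w ^ 2) hw2 with h | h | h
    · -- w² = l, so w = ±s
      have hfac : (w - ((s:ℝ):ℂ)) * (w + ((s:ℝ):ℂ)) = 0 := by
        have hsceq : (((s:ℝ):ℂ)) ^ 2 = ((l:ℝ):ℂ) := by
          rw [← Complex.ofReal_pow, hssq]
        linear_combination h - hsceq
      rcases mul_eq_zero.mp hfac with h' | h'
      · left; exact sub_eq_zero.mp h'
      · exfalso
        apply hexcl1
        have : w = -((s:ℝ):ℂ) := by linear_combination h'
        rwa [this] at hw
    · -- w² = l⁻¹, so w = ±s⁻¹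
      have hsc0 : ((s:ℝ):ℂ) ≠ 0 := by
        simp only [ne_eq, Complex.ofReal_eq_zero]; exact ne_of_gt hs0
      have hsceq : (((s:ℝ):ℂ)⁻¹) ^ 2 = (((l:ℝ):ℂ))⁻¹ := by
        rw [inv_pow, ← Complex.ofReal_pow, hssq]
      have hfac : (w - ((s:ℝ):ℂ)⁻¹) * (w + ((s:ℝ):ℂ)⁻¹) = 0 := by
        linear_combination h - hsceq
      rcases mul_eq_zero.mp hfac with h' | h'
      · right; left; exact sub_eq_zero.mp h'
      · exfalso
        apply hexcl2
        have : w = -((s:ℝ):ℂ)⁻¹ := by linear_combination h'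
        rwa [this] at hw
    · right; right
      rw [norm_pow] at h
      have h0 := norm_nonneg w
      nlinarith
  refine ⟨hs1, hsZ, ?_, ?_⟩
  · -- s⁻¹ is a root of minpoly ℚ s
    by_contra hno
    set m : Polynomial ℚ := minpoly ℚ s with hm
    set M : Polynomial ℂ := m.map (algebraMap ℚ ℂ) with hM
    have hmne : m ≠ 0 := minpoly.ne_zero hsq
    have hMne : M ≠ 0 := by
      rw [hM]
      exact Polynomial.map_ne_zero hmne
    have hMmon : M.Monic := (minpoly.monic hsq).map _
    have hnodup : M.roots.Nodup :=
      Polynomial.nodup_roots ((minpoly.irreducible hsq).separable.map)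
    have hscroot : ((s:ℝ):ℂ) ∈ M.roots := by
      rw [Polynomial.mem_roots']
      refine ⟨hMne, ?_⟩
      show M.eval ((s:ℝ):ℂ) = 0
      rw [hM, Polynomial.eval_map, ← Polynomial.aeval_def]
      have h6 : ((s:ℝ):ℂ) = algebraMap ℝ ℂ s := rfl
      rw [h6, Polynomial.aeval_algebraMap_apply, minpoly.aeval, map_zero]
    have hroots : ∀ w ∈ M.roots, w = ((s:ℝ):ℂ) ∨ ‖w‖ = 1 := by
      intro w hwmem
      have hw0 : (Polynomial.aeval w) m = 0 := by
        have h7 := (Polynomial.mem_roots'.mp hwmem).2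
        rwa [Polynomial.IsRoot, hM, Polynomial.eval_map, ← Polynomial.aeval_def] at h7
      rcases hCLS w hw0 with h | h | h
      · exact Or.inl h
      · exfalso; apply hno; rwa [h] at hw0
      · exact Or.inr h
    have hprod := Polynomial.Splits.coeff_zero_eq_prod_roots_of_monic
      (IsAlgClosed.splits M) hMmon
    have habs := congrArg (fun x : ℂ => ‖x‖) hprod
    rw [norm_mul, norm_pow, norm_neg, norm_one, one_pow, one_mul] at habs
    have hprodmap : ‖M.roots.prod‖ = (M.roots.map (fun x : ℂ => ‖x‖)).prod :=
      (map_multiset_prod (normHom.toMonoidHom : ℂ →* ℝ) M.roots)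
    have hrest : ((M.roots.erase ((s:ℝ):ℂ)).map (fun x : ℂ => ‖x‖)).prod = 1 := by
      apply Multiset.prod_eq_one
      intro x hx
      obtain ⟨w, hwrest, rfl⟩ := Multiset.mem_map.mp hx
      have hwr : w ∈ M.roots := Multiset.mem_of_mem_erase hwrest
      have hwne : w ≠ ((s:ℝ):ℂ) := by
        intro h
        rw [h] at hwrest
        exact (Multiset.Nodup.notMem_erase hnodup) hwrest
      rcases hroots w hwr with h | h
      · exact absurd h hwne
      · exact h
    have hdecomp : (M.roots.map (fun x : ℂ => ‖x‖)).prod = s := by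
      rw [← Multiset.cons_erase hscroot, Multiset.map_cons, Multiset.prod_cons, hrest, mul_one]
      show ‖((s:ℝ):ℂ)‖ = s
      rw [Complex.norm_real, Real.norm_eq_abs, abs_of_pos hs0]
    rw [hprodmap, hdecomp] at habs
    have hco : M.coeff 0 = algebraMap ℚ ℂ (m.coeff 0) := by
      rw [hM, Polynomial.coeff_map]
    rw [hco] at habs
    have hcast : algebraMap ℚ ℂ (m.coeff 0) = (((m.coeff 0 : ℝ)) : ℂ) := by
      push_cast
      rfl
    rw [hcast, Complex.norm_real, Real.norm_eq_abs] at habs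
    -- habs : |(m.coeff 0 : ℝ)| = s
    have hlrat : l = (((m.coeff 0)^2 : ℚ) : ℝ) := by
      rw [← hssq, ← habs]
      rw [sq_abs]
      push_cast
      ring
    exact salem_irrat l hl ((m.coeff 0)^2) hlrat
  · intro z hz
    exact hCLS z hz

private lemma backward_dir (l : ℝ) (hl : IsSalem l) (K : Subfield ℝ)
    (hK : K ≤ Subfield.closure {l + l⁻¹})
    (hS : IsSalem (Real.sqrt l)) :
    ∃ a : K, (∃ b : K, a = b ^ 2) ∧ SquareRootableVia K l a := by
  set s : ℝ := Real.sqrt l with hs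
  have hl0 : (0:ℝ) < l := lt_trans one_pos hl.1
  have hs1 : 1 < s := by
    rw [hs, show (1:ℝ) = Real.sqrt 1 from (Real.sqrt_one).symm]
    exact Real.sqrt_lt_sqrt (by norm_num) hl.1
  have hs0 : (0:ℝ) < s := lt_trans one_pos hs1
  have hssq : s ^ 2 = l := Real.sq_sqrt hl0.le
  have hsZ : IsIntegral ℤ s := sqrt_int l hl0.le hl.2.1
  have hsq : IsIntegral ℚ s := hsZ.tower_top
  have hsK : IsIntegral K s := hsZ.tower_top
  have hlK : IsIntegral K l := hl.2.1.tower_top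
  set μ : Polynomial ↥K := minpoly (↥K) s with hμ
  set q : Polynomial ℝ := μ.map K.subtype with hq
  set d : ℕ := μ.natDegree with hd
  have hμmon : μ.Monic := minpoly.monic hsK
  have hμirr : Irreducible μ := minpoly.irreducible hsK
  have hqmon : q.Monic := hμmon.map _
  have hqdeg : q.natDegree = d := by
    rw [hq]
    exact Polynomial.natDegree_map K.subtype
  have hcoefq : ∀ j, q.coeff j ∈ K := by
    intro j
    rw [hq, Polynomial.coeff_map]
    exact (μ.coeff j).2
  have haq : ∀ (g : Polynomial ↥K) (y : ℝ),
      (g.map K.subtype).eval y = (Polynomial.aeval y) g := by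
    intro g y
    rw [Polynomial.eval_map]
    rfl
  have hqs : q.eval s = 0 := by
    rw [hq, haq]
    exact minpoly.aeval K s
  -- roots of q over ℂ are roots of minpoly ℚ s
  have hrootq : ∀ z : ℂ, (q.map (algebraMap ℝ ℂ)).eval z = 0 →
      (Polynomial.aeval z) (minpoly ℚ s) = 0 := by
    have hmdvd : μ ∣ (minpoly ℚ s).map (algebraMap ℚ ↥K) := by
      apply minpoly.dvd
      rw [Polynomial.aeval_map_algebraMap]
      exact minpoly.aeval ℚ s
    have hdvdR : q ∣ (minpoly ℚ s).map (algebraMap ℚ ℝ) := by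
      have h1 := Polynomial.map_dvd K.subtype hmdvd
      rw [Polynomial.map_map] at h1
      have h2 : (K.subtype).comp (algebraMap ℚ ↥K) = algebraMap ℚ ℝ :=
        Subsingleton.elim _ _
      rwa [h2] at h1
    have hdvdC : q.map (algebraMap ℝ ℂ) ∣ (minpoly ℚ s).map (algebraMap ℚ ℂ) := by
      have h1 := Polynomial.map_dvd (algebraMap ℝ ℂ) hdvdR
      have h2 : (algebraMap ℝ ℂ).comp (algebraMap ℚ ℝ) = algebraMap ℚ ℂ :=
        Subsingleton.elim _ _
      have h3 : ((minpoly ℚ s).map (algebraMap ℚ ℝ)).map (algebraMap ℝ ℂ)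
          = (minpoly ℚ s).map (algebraMap ℚ ℂ) := by
        rw [Polynomial.map_map, h2]
      rwa [h3] at h1
    intro z hz
    obtain ⟨c, hc⟩ := hdvdC
    rw [Polynomial.aeval_def, Polynomial.eval₂_eq_eval_map, hc, Polynomial.eval_mul, hz, zero_mul]
  have hCLSq : ∀ z : ℂ, (q.map (algebraMap ℝ ℂ)).eval z = 0 →
      z = ((s:ℝ):ℂ) ∨ z = (((s:ℝ):ℂ))⁻¹ ∨ ‖z‖ = 1 := by
    intro z hz
    exact hS.2.2.2 z (hrootq z hz)
  -- s⁻¹ is a root of q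
  have hqinv : q.eval s⁻¹ = 0 := by
    have ht := key_transfer l hl.1 K hK hsq (((s:ℝ):ℂ))⁻¹ hS.2.2.1
      (Or.inr (by rw [inv_pow, ← Complex.ofReal_pow, hssq])) q hcoefq 1 (Or.inl rfl)
      (by rwa [one_mul])
    apply real_root_of_complex
    have : (((1:ℝ):ℂ) * (((s:ℝ):ℂ))⁻¹) = ((s⁻¹ : ℝ) : ℂ) := by push_cast; ring
    rwa [this] at ht
  have hd2 : 2 ≤ d := by
    by_contra hcon
    push_neg at hcon
    have hle : q.natDegree ≤ 1 := by omega
    have h1 := Polynomial.eq_X_add_C_of_natDegree_le_one hle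
    have h2 := hqs
    have h3 := hqinv
    rw [h1] at h2 h3
    simp only [Polynomial.eval_add, Polynomial.eval_mul, Polynomial.eval_C,
      Polynomial.eval_X] at h2 h3
    have hne : s ≠ s⁻¹ := by
      have : s⁻¹ < 1 := by
        rw [inv_lt_one_iff₀]
        right; exact hs1
      intro h
      rw [← h] at this
      linarith
    have hc1 : q.coeff 1 = 0 := by
      have h4 : q.coeff 1 * (s - s⁻¹) = 0 := by linarith [h2, h3]
      rcases mul_eq_zero.mp h4 with h | h
      · exact h
      · exact absurd (by linarith : s = s⁻¹) hne
    have hc0 : q.coeff 0 = 0 := by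
      rw [hc1] at h2
      linarith
    rw [hc1, hc0] at h1
    simp only [map_zero, zero_mul, zero_add] at h1
    exact hqmon.ne_zero h1
  -- ±1 are not roots of q
  have hnot1 : ∀ y : ℝ, (y = 1 ∨ y = -1) → q.eval y ≠ 0 := by
    intro y hy hy0
    have hyK : ∃ y' : ↥K, K.subtype y' = y := by
      rcases hy with rfl | rfl
      · exact ⟨1, by simp⟩
      · exact ⟨-1, by simp⟩
    obtain ⟨y', hy'⟩ := hyK
    have hμy : μ.eval y' = 0 := by
      apply (K.subtype).injective
      rw [map_zero, ← hy0, ← hy', hq, Polynomial.eval_map]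
      exact (Polynomial.eval₂_at_apply K.subtype y').symm
    have hdvd : (X - C y') ∣ μ := Polynomial.dvd_iff_isRoot.mpr hμy
    obtain ⟨t, ht⟩ := hdvd
    rcases hμirr.isUnit_or_isUnit ht with hu | hu
    · have : (X - C y').natDegree = 1 := Polynomial.natDegree_X_sub_C y'
      have h5 := Polynomial.natDegree_eq_zero_of_isUnit hu
      omega
    · have h5 := Polynomial.natDegree_eq_zero_of_isUnit hu
      have ht0 : t ≠ 0 := by
        rintro rfl
        rw [mul_zero] at ht
        exact hμmon.ne_zero ht
      have h6 : μ.natDegree = 1 := by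
        rw [ht, Polynomial.natDegree_mul (Polynomial.X_sub_C_ne_zero y') ht0,
          Polynomial.natDegree_X_sub_C, h5]
      omega
  -- evenness of d via complex conjugation on the non-real roots
  set Qc : Polynomial ℂ := q.map (algebraMap ℝ ℂ) with hQc
  have hQcne : Qc ≠ 0 := by
    rw [hQc]
    exact Polynomial.map_ne_zero hqmon.ne_zero
  have hQcsep : Qc.Separable := by
    rw [hQc, hq, Polynomial.map_map]
    exact hμirr.separable.map
  have hnodupc : Qc.roots.Nodup := Polynomial.nodup_roots hQcsep
  have hcardc : Multiset.card Qc.roots = d := by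
    have h1 := (IsAlgClosed.splits Qc).natDegree_eq_card_roots
    rw [hQc, Polynomial.natDegree_map, hqdeg] at h1
    exact h1.symm
  have hmemroot : ∀ z : ℂ, z ∈ Qc.roots ↔ Qc.eval z = 0 := by
    intro z
    rw [Polynomial.mem_roots']
    exact ⟨fun h => h.2, fun h => ⟨hQcne, h⟩⟩
  have hscmem : ((s:ℝ):ℂ) ∈ Qc.roots := by
    rw [hmemroot, hQc, eval_map_ofReal, hqs, Complex.ofReal_zero]
  have hsinv_cast : (((s:ℝ):ℂ))⁻¹ = ((s⁻¹ : ℝ) : ℂ) := by push_cast; ring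
  have hsinvmem : (((s:ℝ):ℂ))⁻¹ ∈ Qc.roots := by
    rw [hmemroot, hsinv_cast, hQc, eval_map_ofReal, hqinv, Complex.ofReal_zero]
  have hconj : ∀ z ∈ Qc.roots, (starRingEnd ℂ) z ∈ Qc.roots := by
    intro z hz
    rw [hmemroot] at hz ⊢
    have h1 : (Polynomial.aeval z) q = 0 := by
      rw [Polynomial.aeval_def, Polynomial.eval₂_eq_eval_map]
      exact hz
    have h2 := Polynomial.aeval_conj q z
    rw [h1, map_zero] at h2
    rw [hQc, ← Polynomial.eval₂_eq_eval_map, ← Polynomial.aeval_def]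
    exact h2
  classical
  have hsneR : s ≠ s⁻¹ := by
    have h1 : s⁻¹ < 1 := by
      rw [inv_lt_one_iff₀]
      right; exact hs1
    intro h
    rw [← h] at h1
    linarith
  have hsne : ((s:ℝ):ℂ) ≠ (((s:ℝ):ℂ))⁻¹ := by
    rw [hsinv_cast]
    intro h
    exact hsneR (by exact_mod_cast h)
  set T : Finset ℂ := Qc.roots.toFinset \ {((s:ℝ):ℂ), (((s:ℝ):ℂ))⁻¹} with hT
  have hTcard : T.card = d - 2 := by
    rw [hT, Finset.card_sdiff_of_subset]
    · rw [Multiset.toFinset_card_of_nodup hnodupc, hcardc,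
        Finset.card_insert_of_notMem (by simp [hsne]), Finset.card_singleton]
    · intro x hx
      rcases Finset.mem_insert.mp hx with rfl | hx
      · exact Multiset.mem_toFinset.mpr hscmem
      · rw [Finset.mem_singleton] at hx
        subst hx
        exact Multiset.mem_toFinset.mpr hsinvmem
  have hTmem : ∀ x, x ∈ T ↔ x ∈ Qc.roots ∧ x ≠ ((s:ℝ):ℂ) ∧ x ≠ (((s:ℝ):ℂ))⁻¹ := by
    intro x
    rw [hT, Finset.mem_sdiff, Multiset.mem_toFinset, Finset.mem_insert, Finset.mem_singleton]
    tauto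
  have hTnoreal : ∀ x ∈ T, (starRingEnd ℂ) x ≠ x := by
    intro x hx hfixx
    rcases (hTmem x).mp hx with ⟨hxr, hxs, hxsi⟩
    obtain ⟨r, hr⟩ : ∃ r : ℝ, x = ((r:ℝ):ℂ) := by
      refine ⟨x.re, ?_⟩
      exact (Complex.conj_eq_iff_re.mp hfixx).symm
    have hxev : q.eval r = 0 := by
      apply real_root_of_complex
      rw [← hQc, ← hr]
      exact (hmemroot x).mp hxr
    have habs1 : ‖x‖ = 1 := by
      rcases hCLSq x ((hmemroot x).mp hxr) with h | h | h
      · exact absurd h hxs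
      · exact absurd h hxsi
      · exact h
    rw [hr, Complex.norm_real, Real.norm_eq_abs] at habs1
    rcases abs_eq (le_of_lt one_pos) |>.mp habs1 with h | h
    · exact hnot1 r (Or.inl h) hxev
    · exact hnot1 r (Or.inr h) hxev
  have hTconj : ∀ x ∈ T, (starRingEnd ℂ) x ∈ T := by
    intro x hx
    rcases (hTmem x).mp hx with ⟨hxr, hxs, hxsi⟩
    refine (hTmem _).mpr ⟨hconj x hxr, ?_, ?_⟩
    · intro h
      apply hxs
      have := congrArg (starRingEnd ℂ) h
      rw [Complex.conj_conj, Complex.conj_ofReal] at this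
      exact this
    · intro h
      apply hxsi
      have := congrArg (starRingEnd ℂ) h
      rw [Complex.conj_conj, hsinv_cast, Complex.conj_ofReal, ← hsinv_cast] at this
      exact this
  have hTeven : Even T.card :=
    even_card_of_invol (starRingEnd ℂ) T hTconj
      (fun a _ => Complex.conj_conj a) hTnoreal
  have hdeven : Even d := by
    rw [hTcard] at hTeven
    obtain ⟨k, hk⟩ := hTeven
    exact ⟨k + 1, by omega⟩
  -- the minimal polynomial of -s and the factorization of p(x²)
  set p : Polynomial ↥K := minpoly (↥K) l with hp
  set P : Polynomial ↥K := p.comp (X ^ 2) with hP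
  have hpmon : p.Monic := minpoly.monic hlK
  have hPmon : P.Monic := hpmon.comp (monic_X_pow 2) (by simp [natDegree_X_pow])
  have hPdeg : P.natDegree = 2 * p.natDegree := by
    rw [hP, Polynomial.natDegree_comp, natDegree_X_pow]
    ring
  have hμdvdP : μ ∣ P := by
    apply minpoly.dvd
    rw [hP, Polynomial.aeval_comp, map_pow, Polynomial.aeval_X, hssq]
    exact minpoly.aeval K l
  have hsν : IsIntegral (↥K) (-s) := hsK.neg
  set ν : Polynomial ↥K := minpoly (↥K) (-s) with hν
  have hνmon : ν.Monic := minpoly.monic hsν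
  have hνirr : Irreducible ν := minpoly.irreducible hsν
  have hνdvdP : ν ∣ P := by
    apply minpoly.dvd
    rw [hP, Polynomial.aeval_comp, map_pow, Polynomial.aeval_X, neg_sq, hssq]
    exact minpoly.aeval K l
  have hνdeg : ν.natDegree = d := by
    apply le_antisymm
    · exact minpoly_natDegree_le K s (-s) hsK
        (neg_mem (IntermediateField.mem_adjoin_simple_self K s))
    · have h1 : s ∈ IntermediateField.adjoin K {-s} := by
        have h2 : -s ∈ IntermediateField.adjoin K {-s} :=
          IntermediateField.mem_adjoin_simple_self K (-s)
        have h3 := neg_mem h2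
        rwa [neg_neg] at h3
      exact minpoly_natDegree_le K (-s) s hsν h1
  have hdple : p.natDegree ≤ d := by
    apply minpoly_natDegree_le K s l hsK
    rw [← hssq]
    exact pow_mem (IntermediateField.mem_adjoin_simple_self K s) 2
  have hμνne : μ ≠ ν := by
    intro h
    have h1 : q.eval (-s) = 0 := by
      rw [hq, haq, h]
      exact minpoly.aeval K (-s)
    have h2 : (q.map (algebraMap ℝ ℂ)).eval ((-s : ℝ) : ℂ) = 0 := by
      rw [eval_map_ofReal, h1, Complex.ofReal_zero]
    rcases hCLSq _ h2 with h3 | h3 | h3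
    · have h4 : (-s : ℝ) = s := by exact_mod_cast h3
      linarith
    · have h4 : (-s : ℝ) = s⁻¹ := by
        rw [hsinv_cast] at h3
        exact_mod_cast h3
      have h5 : (0:ℝ) < s⁻¹ := inv_pos.mpr hs0
      linarith
    · rw [Complex.norm_real, Real.norm_eq_abs, abs_neg, abs_of_pos hs0] at h3
      linarith
  have hcop : IsCoprime μ ν := by
    rw [hμirr.coprime_iff_not_dvd]
    intro hdvd
    exact hμνne (eq_of_monic_of_associated hμmon hνmon
      (hμirr.associated_of_dvd hνirr hdvd))
  have hmulmon : (μ * ν).Monic := hμmon.mul hνmon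
  have hmuldeg : (μ * ν).natDegree = 2 * d := by
    rw [Polynomial.natDegree_mul hμmon.ne_zero hνmon.ne_zero, hνdeg]
    omega
  have hPeq : μ * ν = P := by
    apply monic_dvd_eq hmulmon hPmon (hcop.mul_dvd hμdvdP hνdvdP)
    rw [hmuldeg, hPdeg]
    omega
  have hnegXdeg : ((-X : Polynomial ↥K)).natDegree = 1 := by simp
  have hcompmon : (μ.comp (-X)).Monic := by
    unfold Polynomial.Monic
    rw [Polynomial.leadingCoeff_comp (by rw [hnegXdeg]; norm_num)]
    rw [hμmon.leadingCoeff, one_mul,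
      show ((-X : Polynomial ↥K)).leadingCoeff = -1 from by simp]
    exact hdeven.neg_one_pow
  have hcompdeg : (μ.comp (-X)).natDegree = d := by
    rw [Polynomial.natDegree_comp, hnegXdeg, mul_one]
  have hcomproot : (Polynomial.aeval (-s)) (μ.comp (-X)) = 0 := by
    rw [Polynomial.aeval_comp, map_neg, Polynomial.aeval_X, neg_neg]
    exact minpoly.aeval K s
  have hνeq : μ.comp (-X) = ν := by
    symm
    apply monic_dvd_eq hνmon hcompmon (minpoly.dvd K (-s) hcomproot)
    rw [hcompdeg, hνdeg]
  -- the main identity over ℝ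
  have hE : q * q.comp (-Polynomial.X) =
      ((minpoly (↥K) l).map K.subtype).comp (Polynomial.X ^ 2) := by
    have hEK : μ * μ.comp (-X) = p.comp (X ^ 2) := by
      rw [hνeq, hPeq, hP]
    have h1 := congrArg (Polynomial.map K.subtype) hEK
    rw [Polynomial.map_mul, Polynomial.map_comp, Polynomial.map_comp] at h1
    simp only [Polynomial.map_neg, Polynomial.map_pow, Polynomial.map_X] at h1
    rw [← hq] at h1
    exact h1
  -- q is palindromic
  have hrevmap : q.reverse = μ.reverse.map K.subtype := by
    show Polynomial.reflect q.natDegree q = _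
    rw [hqdeg, hq, Polynomial.reflect_map]
    rfl
  have hρs : (Polynomial.aeval s) μ.reverse = 0 := by
    have h1 := eval_reverse_eq q s (ne_of_gt hs0)
    rw [hqinv, mul_zero] at h1
    rw [← haq, ← hrevmap]
    exact h1
  obtain ⟨t, ht⟩ := minpoly.dvd K s hρs
  have hρne : μ.reverse ≠ 0 := by
    rw [ne_eq, Polynomial.reverse_eq_zero]
    exact hμmon.ne_zero
  have ht0 : t ≠ 0 := by
    rintro rfl
    rw [mul_zero] at ht
    exact hρne ht
  have htdeg : t.natDegree = 0 := by
    have h1 : μ.reverse.natDegree ≤ d := Polynomial.reverse_natDegree_le μ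
    have h2 : μ.reverse.natDegree = d + t.natDegree := by
      rw [ht, Polynomial.natDegree_mul hμmon.ne_zero ht0]
    omega
  have htC : t = C (t.coeff 0) := Polynomial.eq_C_of_natDegree_eq_zero htdeg
  set c : ↥K := t.coeff 0 with hcdef
  have h01 : μ.coeff 0 * c = 1 := by
    have h1 : μ.reverse.coeff 0 = 1 := by
      rw [Polynomial.coeff_zero_reverse]
      exact hμmon
    rw [ht, Polynomial.mul_coeff_zero] at h1
    exact h1
  have hcd : μ.coeff 0 = c := by
    have h1 : μ.reverse.coeff d = μ.coeff 0 := by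
      rw [Polynomial.coeff_reverse,
        show Polynomial.revAt μ.natDegree d = 0 from by
          rw [← hd, Polynomial.revAt_le (le_refl d), Nat.sub_self]]
    have h2 : μ.reverse.coeff d = c := by
      rw [ht, htC, Polynomial.coeff_mul_C,
        show μ.coeff d = 1 from by rw [hd]; exact hμmon.coeff_natDegree, one_mul]
    rw [h1] at h2
    exact h2
  have hc2 : c = 1 ∨ c = -1 := by
    apply mul_self_eq_one_iff.mp
    rw [hcd] at h01
    exact h01
  have hc1 : c = 1 := by
    rcases hc2 with h | h
    · exact h
    · exfalso
      have hμrevneg : μ.reverse = -μ := by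
        rw [ht, htC, h]
        simp [mul_comm]
        rfl
      have hrev1 : q.reverse.eval 1 = q.eval 1 := by
        rw [eval_reverse_eq q 1 one_ne_zero, one_pow, inv_one, one_mul]
      have hrev2 : q.reverse.eval 1 = -q.eval 1 := by
        rw [hrevmap, hμrevneg, Polynomial.map_neg, Polynomial.eval_neg, ← hq]
      have : q.eval 1 = 0 := by
        rw [hrev1] at hrev2
        linarith
      exact hnot1 1 (Or.inl rfl) this
  have hμrev : μ.reverse = μ := by
    rw [ht, htC, hc1, map_one, mul_one]
  have hpalq : ∀ j ≤ q.natDegree, q.coeff j = q.coeff (q.natDegree - j) := by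
    intro j hj
    have h1 : q.reverse = q := by
      rw [hrevmap, hμrev, ← hq]
    have h2 := Polynomial.coeff_reverse q j
    rw [h1, Polynomial.revAt_le hj] at h2
    exact h2
  -- assemble the witness
  refine ⟨1, ⟨1, by norm_num⟩, ?_, q, hqmon, hpalq, fun j _ => hcoefq j, ?_, hE⟩
  · intro φ
    rw [map_one]
    exact one_pos
  · intro j _
    refine ⟨q.coeff j, hcoefq j, ?_⟩
    rw [show ((1 : ↥K) : ℝ) = (1:ℝ) from rfl, Real.sqrt_one, one_mul]

/-- A Salem number `λ` is square-rootable over a subfield `K` of `ℚ(λ + λ⁻¹)` via a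
square in `K` if and only if `λ^{1/2}` is a Salem number. -/
theorem squareRootable_via_square_iff_sqrt_salem
    (l : ℝ) (hl : IsSalem l) (K : Subfield ℝ)
    (hK : K ≤ Subfield.closure {l + l⁻¹}) :
    (∃ a : K, (∃ b : K, a = b ^ 2) ∧ SquareRootableVia K l a) ↔
      IsSalem (Real.sqrt l) := by
  constructor
  · exact forward_dir l hl K hK
  · exact backward_dir l hl K hK
end

section
/- Let λ be a Salem number with deg(λ^{1/2}) = 2 and field norm of λ^{1/2} equal to −1, and let K be a subfield of ℚ(λ + λ⁻¹). Then K = ℚ and λ is square-rootable over ℚ (via the square-free positive integer D with ℚ(λ^{1/2}) = ℚ(√D)). -/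
open Polynomial

set_option maxHeartbeats 1000000
set_option synthInstance.maxHeartbeats 1000000

/-- If `λ` is a Salem number with `deg (λ^{1/2}) = 2` and norm of `λ^{1/2}` equal to
`-1` (the constant coefficient of its degree-2 minimal polynomial), and
`K ⊆ ℚ(λ + λ⁻¹)`, then `K = ℚ` and `λ` is square-rootable over `ℚ` via the square-free
positive integer `D` with `ℚ(λ^{1/2}) = ℚ(√D)`. -/
theorem squareRootable_of_sqrt_degree_two_norm_neg_one
    (l : ℝ) (hl : IsSalem l)
    (hdeg : (minpoly ℚ (Real.sqrt l)).natDegree = 2)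
    (hnorm : (minpoly ℚ (Real.sqrt l)).coeff 0 = -1)
    (K : Subfield ℝ) (hK : K ≤ Subfield.closure {l + l⁻¹}) :
    K = ⊥ ∧
    ∃ D : ℕ, 0 < D ∧ Squarefree D ∧
      Subfield.closure {Real.sqrt l} = Subfield.closure {Real.sqrt (D : ℝ)} ∧
      ∃ hD : (D : ℝ) ∈ K, SquareRootableVia K l ⟨(D : ℝ), hD⟩ := by
  obtain ⟨hl1, -, -, -⟩ := hl
  set s := Real.sqrt l with hs
  have hl0 : (0:ℝ) < l := lt_trans one_pos hl1
  have hl' : l ≠ 0 := ne_of_gt hl0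
  have hs0 : 0 < s := Real.sqrt_pos.mpr hl0
  have hsl : s^2 = l := Real.sq_sqrt hl0.le
  have hint : IsIntegral ℚ s := by
    by_contra h
    rw [minpoly.eq_zero h] at hdeg
    simp at hdeg
  set t : ℚ := (minpoly ℚ s).coeff 1 with ht
  -- the key quadratic relation for s
  have key : s^2 + (t:ℝ) * s - 1 = 0 := by
    have h0 := minpoly.aeval ℚ s
    rw [aeval_eq_sum_range, hdeg] at h0
    have hc2 : (minpoly ℚ s).coeff 2 = 1 := by
      have := (minpoly.monic hint).leadingCoeff
      rwa [leadingCoeff, hdeg] at this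
    simp [Finset.sum_range_succ, hc2, hnorm, ← ht, Rat.smul_def] at h0
    linarith
  have hts : (t:ℝ) * s = 1 - s^2 := by linarith
  have hs1 : 1 < s^2 := by rw [hsl]; exact hl1
  have htne : (t:ℝ) ≠ 0 := by
    intro h
    rw [h, zero_mul] at hts
    linarith
  -- quadratic relation for l
  have hlc : l^2 - ((2 + t^2 : ℚ):ℝ)*l + 1 = 0 := by
    have h2 : (t:ℝ)^2 * l = (1 - l)^2 := by
      calc (t:ℝ)^2 * l = ((t:ℝ)*s)^2 := by rw [← hsl]; ring
        _ = (1 - s^2)^2 := by rw [hts]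
        _ = (1 - l)^2 := by rw [hsl]
    push_cast
    linear_combination -h2
  -- K = ⊥
  have hll : l + l⁻¹ = ((2 + t^2 : ℚ):ℝ) := by
    field_simp
    push_cast at hlc ⊢
    linear_combination hlc
  have hKbot : K = ⊥ := by
    have hcl : Subfield.closure {l + l⁻¹} ≤ ⊥ := by
      rw [Subfield.closure_le]
      intro x hx
      rcases Set.mem_singleton_iff.mp hx with rfl
      rw [hll]
      exact SubfieldClass.ratCast_mem _ _
    exact le_antisymm (hK.trans hcl) bot_le
  subst hKbot
  refine ⟨rfl, ?_⟩
  -- l is not in the bottom subfield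
  have hnr : l ∉ (algebraMap ↥(⊥ : Subfield ℝ) ℝ).range := by
    rintro ⟨a, ha⟩
    have hmem : (a : ℝ) ∈ (⊥ : Subfield ℝ) := a.2
    have : (a : ℝ) ∈ (Rat.castHom ℝ).fieldRange :=
      (bot_le : (⊥ : Subfield ℝ) ≤ (Rat.castHom ℝ).fieldRange) hmem
    obtain ⟨q, hq⟩ := RingHom.mem_fieldRange.mp this
    have hlq : l = (q:ℝ) := by
      have h5 : (algebraMap ↥(⊥ : Subfield ℝ) ℝ) a = (a : ℝ) := rfl
      rw [h5] at ha
      rw [← ha, ← hq]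
      rfl
    have hsrat : s = (((1 - q)/t : ℚ) : ℝ) := by
      push_cast
      rw [← hlq, ← hsl]
      field_simp
      linear_combination key
    have : s ∈ (algebraMap ℚ ℝ).range := ⟨(1 - q)/t, hsrat.symm⟩
    have h1 := minpoly.natDegree_eq_one_iff.mpr this
    rw [hdeg] at h1
    exact absurd h1 (by norm_num)
  -- the minimal polynomial of l over ⊥
  set B := (⊥ : Subfield ℝ) with hB
  set cB : ↥B := ((2 + t^2 : ℚ) : ↥B) with hcB
  have hcoe : (cB : ℝ) = ((2 + t^2 : ℚ) : ℝ) := rfl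
  set P : Polynomial ↥B := C 1 * X^2 + C (-cB) * X + C 1 with hP
  have hPm : P.Monic := by
    have : P.leadingCoeff = 1 := leadingCoeff_quadratic one_ne_zero
    exact this
  have hPdeg : P.degree = 2 := degree_quadratic one_ne_zero
  have hPa : aeval l P = 0 := by
    have h1 : aeval l P = 1 * l^2 + (-((2 + t^2 : ℚ):ℝ)) * l + 1 := by
      rw [hP]
      simp only [map_add, map_mul, map_pow, aeval_C, aeval_X]
      have h2 : algebraMap ↥B ℝ (-cB) = -((2 + t^2 : ℚ):ℝ) := by
        rw [map_neg]; rfl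
      have h3 : algebraMap ↥B ℝ 1 = 1 := map_one _
      rw [h2, h3]
    rw [h1]
    linear_combination hlc
  have hintB : IsIntegral ↥B l := ⟨P, hPm, hPa⟩
  have h2B : 2 ≤ (minpoly ↥B l).natDegree := (minpoly.two_le_natDegree_iff hintB).mpr hnr
  have hmp : P = minpoly ↥B l := by
    apply minpoly.unique _ _ hPm hPa
    intro q hq hq0
    refine hPdeg.le.trans (le_trans ?_ (minpoly.min _ _ hq hq0))
    rw [degree_eq_natDegree (minpoly.ne_zero hintB)]
    exact_mod_cast Nat.cast_le.mpr h2B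
  have hmap : (minpoly ↥B l).map B.subtype
      = C 1 * X^2 + C (-((2 + t^2 : ℚ):ℝ)) * X + C 1 := by
    rw [← hmp, hP]
    simp only [Polynomial.map_add, Polynomial.map_mul, Polynomial.map_pow, map_C, map_X]
    have h4 : B.subtype (-cB) = -((2 + t^2 : ℚ):ℝ) := by rw [map_neg]; rfl
    rw [h4]
    have h5 : B.subtype 1 = 1 := map_one _
    rw [h5]
  -- the square-free integer D
  set N : ℕ := t.num.natAbs^2 + 4*t.den^2 with hN
  have hNpos : 0 < N := by
    have := t.den_pos
    positivity
  obtain ⟨D, b, hD0, hb0, hab, hsqf⟩ := Nat.sq_mul_squarefree_of_pos hNpos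
  have hdenQ : ((t.den:ℚ)) ≠ 0 := by exact_mod_cast t.den_pos.ne'
  have hnum : (t.num:ℚ) = t * (t.den:ℚ) := by
    rw [← div_eq_iff hdenQ]
    exact Rat.num_div_den t
  have habQ : (b:ℚ)^2 * (D:ℚ) = (t.num:ℚ)^2 + 4*(t.den:ℚ)^2 := by
    have h : ((b^2 * D : ℕ) : ℚ) = ((N:ℕ) : ℚ) := by rw [hab]
    rw [hN] at h
    push_cast [Nat.cast_natAbs] at h
    rw [sq_abs] at h
    exact_mod_cast h
  rw [hnum] at habQ
  have hQ : t^2 + 4 = (D:ℚ) * ((b:ℚ)/(t.den:ℚ))^2 := by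
    rw [div_pow, mul_div_assoc', eq_div_iff (pow_ne_zero 2 hdenQ)]
    linear_combination -habQ
  have hQR : ((t:ℝ))^2 + 4 = (D:ℝ) * ((b:ℝ)/((t.den):ℝ))^2 := by
    have h2 := congrArg (fun q : ℚ => (q:ℝ)) hQ
    push_cast at h2
    exact h2
  set r : ℝ := (b:ℝ)/((t.den):ℝ) with hr
  have hbR : (0:ℝ) < (b:ℝ) := by exact_mod_cast hb0
  have hdenR : (0:ℝ) < ((t.den):ℝ) := by exact_mod_cast t.den_pos
  have hrpos : 0 < r := by rw [hr]; positivity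
  have he : Real.sqrt ((t:ℝ)^2 + 4) = Real.sqrt (D:ℝ) * r := by
    rw [hQR, Real.sqrt_mul (by positivity), Real.sqrt_sq hrpos.le]
  -- 2s + t = sqrt(t^2+4)
  have h2st : 0 < 2*s + (t:ℝ) := by
    have hform : 2*s + (t:ℝ) = (s^2 + 1)/s := by
      field_simp
      linear_combination key
    rw [hform]
    positivity
  have hes : Real.sqrt ((t:ℝ)^2 + 4) = 2*s + (t:ℝ) := by
    rw [show (t:ℝ)^2 + 4 = (2*s + (t:ℝ))^2 by nlinarith [key]]
    exact Real.sqrt_sq h2st.le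
  have heD : Real.sqrt (D:ℝ) * r = 2*s + (t:ℝ) := by rw [← he, hes]
  -- closure equality
  have hclosure : Subfield.closure {s} = Subfield.closure {Real.sqrt (D:ℝ)} := by
    apply le_antisymm
    · rw [Subfield.closure_le]
      intro x hx
      rcases Set.mem_singleton_iff.mp hx with rfl
      have hsval : s = (Real.sqrt (D:ℝ) * r - (t:ℝ))/2 := by
        rw [heD]; ring
      rw [hsval]
      refine div_mem ?_ ?_
      · refine sub_mem (mul_mem ?_ ?_) (SubfieldClass.ratCast_mem _ _)
        · exact Subfield.subset_closure rfl
        · exact div_mem (natCast_mem _ _) (natCast_mem _ _)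
      · have : ((2:ℝ)) = ((2:ℕ):ℝ) := by norm_num
        rw [this]
        exact natCast_mem _ _
    · rw [Subfield.closure_le]
      intro x hx
      rcases Set.mem_singleton_iff.mp hx with rfl
      have hrne : r ≠ 0 := hrpos.ne'
      have hDval : Real.sqrt (D:ℝ) = (2*s + (t:ℝ)) * r⁻¹ := by
        rw [← heD]
        field_simp
      rw [hDval]
      refine mul_mem ?_ (inv_mem ?_)
      · refine add_mem (mul_mem ?_ (Subfield.subset_closure rfl)) (SubfieldClass.ratCast_mem _ _)
        have : ((2:ℝ)) = ((2:ℕ):ℝ) := by norm_num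
        rw [this]
        exact natCast_mem _ _
      · exact div_mem (natCast_mem _ _) (natCast_mem _ _)
  refine ⟨D, hD0, hsqf, hclosure, natCast_mem _ _, ?_, ?_⟩
  -- totally positive
  · intro φ
    have hcast : (⟨((D:ℕ):ℝ), natCast_mem _ _⟩ : ↥B) = ((D:ℕ) : ↥B) := by
      ext
      simp
    rw [hcast, map_natCast φ D]
    exact_mod_cast hD0
  -- the polynomial q
  · set e : ℝ := Real.sqrt ((t:ℝ)^2 + 4) with heq
    have he2 : e^2 = (t:ℝ)^2 + 4 := Real.sq_sqrt (by positivity)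
    set qp : Polynomial ℝ := C 1 * X^2 + C e * X + C 1 with hqp
    have hqdeg : qp.natDegree = 2 := natDegree_quadratic one_ne_zero
    have hq0 : qp.coeff 0 = 1 := by simp [hqp, coeff_one, coeff_X]
    have hq1 : qp.coeff 1 = e := by simp [hqp, coeff_one, coeff_X]
    have hq2 : qp.coeff 2 = 1 := by simp [hqp, coeff_one, coeff_X]
    have hqhigh : ∀ j, 3 ≤ j → qp.coeff j = 0 := fun j hj =>
      coeff_eq_zero_of_natDegree_lt (by omega)
    refine ⟨qp, ?_, ?_, ?_, ?_, ?_⟩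
    · have : qp.leadingCoeff = 1 := leadingCoeff_quadratic one_ne_zero
      exact this
    · intro j hj
      rw [hqdeg] at hj ⊢
      interval_cases j
      · rw [hq0]; rw [show 2 - 0 = 2 by norm_num, hq2]
      · norm_num
      · rw [hq2]; rw [show 2 - 2 = 0 by norm_num, hq0]
    · intro j hje
      rcases Nat.lt_or_ge j 3 with h3 | h3
      · interval_cases j
        · rw [hq0]; exact one_mem _
        · exact absurd hje (by simp)
        · rw [hq2]; exact one_mem _
      · rw [hqhigh j h3]; exact zero_mem _
    · intro j hjo
      rcases Nat.lt_or_ge j 3 with h3 | h3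
      · interval_cases j
        · exact absurd hjo (by simp)
        · refine ⟨r, ?_, ?_⟩
          · exact div_mem (natCast_mem _ _) (natCast_mem _ _)
          · rw [hq1]
            have : ((⟨((D:ℕ):ℝ), natCast_mem _ _⟩ : ↥B) : ℝ) = ((D:ℕ):ℝ) := rfl
            rw [this]
            exact he
        · exact absurd hjo (by simp)
      · refine ⟨0, zero_mem _, ?_⟩
        rw [hqhigh j h3, mul_zero]
    · rw [hmap]
      apply Polynomial.funext
      intro x
      simp only [hqp, eval_comp, eval_mul, eval_add, eval_pow, eval_neg, eval_X, eval_C]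
      push_cast
      nlinarith [he2, sq_nonneg x, sq_nonneg (x*e)]
end

section
/- Let λ be a Salem number, K ⊆ ℚ(λ + λ⁻¹), and p(x) the minimal polynomial of λ over K with m = deg p. Suppose λ is square-rootable over K via α ∈ K. If m ≡ 0 (mod 4), then p(−1) is a square in 𝒪_K; if m ≡ 2 (mod 4), then there exists a nonzero k ∈ K with p(−1) = α·k². -/
open Polynomial

section Aux
open Polynomial Complex


lemma isIntegral_of_ringHom {A B : Type*} [CommRing A] [CommRing B] (f : A →+* B)
    (hf : Function.Injective f) {x : A} (h : IsIntegral ℤ (f x)) : IsIntegral ℤ x := by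
  obtain ⟨P, hm, hP⟩ := h
  refine ⟨P, hm, hf ?_⟩
  rw [map_zero, Polynomial.hom_eval₂]
  rw [show f.comp (algebraMap ℤ A) = algebraMap ℤ B from RingHom.ext_int _ _]
  exact hP

lemma integral_eval_neg_one (l : ℝ) (hli : IsIntegral ℤ l) (K : Subfield ℝ) :
    IsIntegral ℤ ((minpoly K l).eval (-1)) := by
  have hlK : IsIntegral K l := hli.tower_top
  set p := minpoly K l with hp
  set ψ : K →+* ℂ := Complex.ofRealHom.comp K.subtype with hψ
  have hinj : Function.Injective ψ := ψ.injective
  apply isIntegral_of_ringHom ψ hinj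
  have hev : ψ (p.eval (-1)) = (p.map ψ).eval (-1) := by
    rw [eval_map, show ((-1:ℂ)) = ψ (-1) by simp, eval₂_at_apply]
  rw [hev]
  set P := p.map ψ with hP
  have hPm : P.Monic := (minpoly.monic hlK).map ψ
  have hsplit : P.Splits := IsAlgClosed.splits P
  rw [hsplit.eval_eq_prod_roots_of_monic hPm]
  set Pz := minpoly ℤ l with hPz
  have hPzm : Pz.Monic := minpoly.monic hli
  have hdvd : p ∣ Pz.map (algebraMap ℤ K) := by
    apply minpoly.dvd
    rw [aeval_map_algebraMap]
    exact minpoly.aeval ℤ l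
  have hdvdC : P ∣ Pz.map (algebraMap ℤ ℂ) := by
    obtain ⟨u, hu⟩ := hdvd
    refine ⟨u.map ψ, ?_⟩
    rw [hP, ← Polynomial.map_mul, ← hu, Polynomial.map_map,
      show ψ.comp (algebraMap ℤ ↥K) = algebraMap ℤ ℂ from RingHom.ext_int _ _]
  refine Subring.multiset_prod_mem (integralClosure ℤ ℂ).toSubring _ (fun x hx => ?_)
  obtain ⟨r, hr, rfl⟩ := Multiset.mem_map.mp hx
  have hroot : (Pz.map (algebraMap ℤ ℂ)).eval r = 0 := by
    obtain ⟨u, hu⟩ := hdvdC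
    rw [hu, eval_mul, (isRoot_of_mem_roots hr), zero_mul]
  have hrint : IsIntegral ℤ r := ⟨Pz, hPzm, by rw [← eval_map]; exact hroot⟩
  exact sub_mem (neg_mem (one_mem _)) hrint

theorem main_test
    (l : ℝ) (hl : (1:ℝ) < l ∧ IsIntegral ℤ l) (K : Subfield ℝ)
    (a : K) (hpos : ∀ φ : K →+* ℝ, 0 < φ a)
    (q : Polynomial ℝ) (hqm : q.Monic)
    (hpal : ∀ j ≤ q.natDegree, q.coeff j = q.coeff (q.natDegree - j))
    (heven : ∀ j, Even j → q.coeff j ∈ K)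
    (hodd : ∀ j, Odd j → ∃ c ∈ K, q.coeff j = Real.sqrt (a : ℝ) * c)
    (heq : q * q.comp (-Polynomial.X) =
      ((minpoly K l).map K.subtype).comp (Polynomial.X ^ 2)) :
    ((minpoly K l).natDegree % 4 = 0 →
      ∃ k : K, IsIntegral ℤ k ∧ (minpoly K l).eval (-1) = k ^ 2) ∧
    ((minpoly K l).natDegree % 4 = 2 →
      ∃ k : K, k ≠ 0 ∧ (minpoly K l).eval (-1) = a * k ^ 2) := by
  have hlK : IsIntegral K l := hl.2.tower_top
  set p := minpoly K l with hp
  have hpm : p.Monic := minpoly.monic hlK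
  set m := p.natDegree with hm
  set n := q.natDegree with hn
  set f : ℝ →+* ℂ := Complex.ofRealHom with hf
  -- degrees
  have hq0 : q ≠ 0 := hqm.ne_zero
  have hqc0 : q.comp (-X) ≠ 0 := by
    intro h
    have h2 : (q.comp (-X)).comp (-X) = q := by
      rw [comp_assoc]; simp
    rw [h, zero_comp] at h2
    exact hq0 h2.symm
  have hnm : n = m := by
    have e1 := congrArg natDegree heq
    rw [natDegree_mul hq0 hqc0, natDegree_comp, natDegree_comp,
      natDegree_map_eq_of_injective K.subtype.injective, natDegree_neg,
      natDegree_X, natDegree_X_pow] at e1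
    omega
  -- the sums
  set c : ℕ → ℂ := fun j => ((q.coeff j : ℝ) : ℂ) with hc
  set z : ℂ := ∑ j ∈ Finset.range (n+1), c j * I^j with hz
  set w : ℂ := ∑ j ∈ Finset.range (n+1), c j * (-I)^j with hw
  have hzeval : (q.map f).eval I = z := by
    rw [eval_eq_sum_range' (show (q.map f).natDegree < n+1 from Nat.lt_succ_of_le natDegree_map_le) I]
    exact Finset.sum_congr rfl fun x _ => by simp [hf, hc]
  have hweval : (q.map f).eval (-I) = w := by
    rw [eval_eq_sum_range' (show (q.map f).natDegree < n+1 from Nat.lt_succ_of_le natDegree_map_le) (-I)]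
    exact Finset.sum_congr rfl fun x _ => by simp [hf, hc]
  -- key identity
  have key : z * w = ((p.eval (-1) : K) : ℂ) := by
    have h1 := congrArg (fun r => (Polynomial.map f r).eval I) heq
    simp only [Polynomial.map_mul, Polynomial.map_comp, Polynomial.map_neg,
      Polynomial.map_pow, map_X, eval_mul, eval_comp, eval_neg, eval_X,
      eval_pow] at h1
    rw [hzeval, hweval, Complex.I_sq] at h1
    rw [h1]
    have e2 : ((-1 : ℂ)) = f ((-1:ℝ)) := by simp
    rw [eval_map, e2, eval₂_at_apply]
    have e3 : ((-1 : ℝ)) = K.subtype ((-1 : K)) := by simp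
    rw [eval_map, e3, eval₂_at_apply]
    rfl
  -- conjugation
  have hconj : (starRingEnd ℂ) z = w := by
    rw [hz, map_sum]
    refine Finset.sum_congr rfl (fun j _ => ?_)
    simp [hc, map_mul, map_pow, Complex.conj_ofReal, Complex.conj_I]
  -- palindrome
  have hpal' : z = I^n * w := by
    rw [hz, hw, Finset.mul_sum]
    rw [← Finset.sum_range_reflect]
    refine Finset.sum_congr rfl (fun j hj => ?_)
    have hjn : j ≤ n := by
      simp only [Finset.mem_range] at hj; omega
    have e1 : n + 1 - 1 - j = n - j := by omega
    rw [e1]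
    have e2 : c (n - j) = c j := by
      simp only [hc]
      rw [hpal (n - j) (by omega), show n - (n - j) = j by omega]
    rw [e2]
    have e3 : (I:ℂ)^(n-j) * I^j = I^n := by
      rw [← pow_add]; congr 1; omega
    have e4 : (I:ℂ)^n * (-I)^j = I^(n-j) := by
      calc (I:ℂ)^n * (-I)^j = (I^(n-j) * I^j) * (-I)^j := by rw [e3]
        _ = I^(n-j) * (I * -I)^j := by rw [mul_pow]; ring
        _ = I^(n-j) := by simp [mul_neg, Complex.I_mul_I]
    rw [show (I:ℂ)^n * (c j * (-I)^j) = c j * (I^n * (-I)^j) by ring, e4]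
  -- structure of I^j
  have hI : ∀ j : ℕ, (Even j → (I^j).im = 0 ∧ (I^j).re ∈ K) ∧
      (Odd j → (I^j).re = 0 ∧ (I^j).im ∈ K) := by
    intro j
    induction j with
    | zero =>
      refine ⟨fun _ => ⟨by simp, by simp [one_mem]⟩, fun h => absurd h (by simp)⟩
    | succ j ih =>
      constructor
      · intro h
        have hj : Odd j := by
          simp only [Nat.even_iff, Nat.odd_iff] at h ⊢
          omega
        rw [pow_succ]
        exact ⟨by rw [Complex.mul_I_im]; exact (ih.2 hj).1,
          by rw [Complex.mul_I_re]; exact neg_mem (ih.2 hj).2⟩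
      · intro h
        have hj : Even j := by
          simp only [Nat.even_iff, Nat.odd_iff] at h ⊢
          omega
        rw [pow_succ]
        exact ⟨by rw [Complex.mul_I_re, (ih.1 hj).1, neg_zero],
          by rw [Complex.mul_I_im]; exact (ih.1 hj).2⟩
  -- real and imaginary parts
  set A : ℝ := ∑ j ∈ Finset.range (n+1), q.coeff j * (I^j).re with hA
  set c' : ℕ → ℝ := fun j => if h : Odd j then (hodd j h).choose else 0 with hc'
  set B : ℝ := ∑ j ∈ Finset.range (n+1), c' j * (I^j).im with hB
  have hzre : z.re = A := by
    rw [hz, Complex.re_sum, hA]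
    refine Finset.sum_congr rfl (fun j _ => ?_)
    simp [hc, Complex.mul_re]
  have hzim : z.im = Real.sqrt (a:ℝ) * B := by
    rw [hz, Complex.im_sum, hB, Finset.mul_sum]
    refine Finset.sum_congr rfl (fun j _ => ?_)
    rcases Nat.even_or_odd j with hj | hj
    · have h0 : (I^j).im = 0 := ((hI j).1 hj).1
      simp only [hc, Complex.mul_im, Complex.ofReal_re, Complex.ofReal_im,
        zero_mul, add_zero, h0, mul_zero]
    · have hcj : c' j = (hodd j hj).choose := dif_pos hj
      have hspec := (hodd j hj).choose_spec.2
      simp only [hc, Complex.mul_im, Complex.ofReal_re, Complex.ofReal_im,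
        zero_mul, add_zero]
      rw [hspec, hcj]
      ring
  have hAK : A ∈ K := by
    refine Subfield.sum_mem K (fun j _ => ?_)
    rcases Nat.even_or_odd j with hj | hj
    · exact mul_mem (heven j hj) ((hI j).1 hj).2
    · rw [((hI j).2 hj).1, mul_zero]; exact zero_mem K
  have hBK : B ∈ K := by
    refine Subfield.sum_mem K (fun j _ => ?_)
    rcases Nat.even_or_odd j with hj | hj
    · have : c' j = 0 := dif_neg (Nat.not_odd_iff_even.mpr hj)
      rw [this, zero_mul]; exact zero_mem K
    · have e : c' j = (hodd j hj).choose := dif_pos hj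
      rw [e]
      exact mul_mem (hodd j hj).choose_spec.1 ((hI j).2 hj).2
  have hval : ((p.eval (-1) : K) : ℝ) = z.re^2 + z.im^2 := by
    have h1 : ((p.eval (-1) : K) : ℂ) = z * (starRingEnd ℂ) z := by
      rw [hconj, key]
    rw [Complex.mul_conj] at h1
    have := congrArg Complex.re h1
    simpa [Complex.normSq_apply, sq] using this
  have hapos : (0:ℝ) < (a : ℝ) := hpos K.subtype
  constructor
  · -- m % 4 = 0
    intro hm4
    have hIn : (I:ℂ)^n = 1 := by
      have e : n = 4 * (n / 4) := by omega
      rw [e, pow_mul, Complex.I_pow_four, one_pow]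
    have hzw : z = w := by rw [hpal', hIn, one_mul]
    have him0 : z.im = 0 := Complex.conj_eq_iff_im.mp (by rw [hconj, hzw])
    have hvA : ((p.eval (-1) : K) : ℝ) = A^2 := by
      rw [hval, him0, hzre]; ring
    refine ⟨⟨A, hAK⟩, ?_, ?_⟩
    · have hint := integral_eval_neg_one l hl.2 K
      have he : p.eval (-1) = (⟨A, hAK⟩ : K)^2 := by
        apply Subtype.ext
        push_cast
        exact hvA
      rw [he] at hint
      exact hint.of_pow (by norm_num)
    · apply Subtype.ext
      push_cast
      exact hvA
  · -- m % 4 = 2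
    intro hm4
    have hIn : (I:ℂ)^n = -1 := by
      have e : n = 4 * (n / 4) + 2 := by omega
      rw [e, pow_add, pow_mul, Complex.I_pow_four, one_pow, one_mul, Complex.I_sq]
    have hzw : z = -w := by rw [hpal', hIn, neg_one_mul]
    have hre0 : z.re = 0 := by
      have : (starRingEnd ℂ) z = -z := by rw [hconj, hzw, neg_neg]
      have h2 := congrArg Complex.re this
      simp only [Complex.conj_re, Complex.neg_re] at h2
      linarith
    have hvB : ((p.eval (-1) : K) : ℝ) = (a:ℝ) * B^2 := by
      rw [hval, hre0, hzim]
      rw [mul_pow, Real.sq_sqrt hapos.le]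
      ring
    have hB0 : B ≠ 0 := by
      intro h0
      have hev0 : p.eval (-1) = 0 := by
        apply Subtype.ext
        rw [hvB, h0]
        simp
      have hroot : IsRoot p (-1) := hev0
      have hdvd : X - C (-1 : K) ∣ p := dvd_iff_isRoot.mpr hroot
      obtain ⟨u, hu⟩ := hdvd
      have hirr := minpoly.irreducible hlK
      rcases hirr.isUnit_or_isUnit hu with h | h
      · exact (X - C (-1 : K)).not_isUnit_of_natDegree_pos
          (by rw [natDegree_X_sub_C]; norm_num) h
      · have hu0 : u ≠ 0 := by
          intro h'; rw [h', mul_zero] at hu; exact hpm.ne_zero hu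
        have hdeg : p.natDegree = 1 := by
          rw [hu, natDegree_mul (X_sub_C_ne_zero _) hu0, natDegree_X_sub_C,
            natDegree_eq_zero_of_isUnit h]
        omega
    refine ⟨⟨B, hBK⟩, ?_, ?_⟩
    · intro h
      exact hB0 (by simpa using congrArg (fun x : K => (x:ℝ)) h)
    · apply Subtype.ext
      push_cast
      exact hvB

end Aux

/-- Let `λ` be a Salem number, `K ⊆ ℚ(λ + λ⁻¹)`, `p` the minimal polynomial of `λ` over
`K` of degree `m`, and suppose `λ` is square-rootable over `K` via `α`.  If
`m ≡ 0 mod 4` then `p(-1)` is a square in `𝒪_K`; if `m ≡ 2 mod 4` then `p(-1) = α k²`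
for some nonzero `k ∈ K`. -/
theorem squareRootable_eval_neg_one
    (l : ℝ) (hl : IsSalem l) (K : Subfield ℝ)
    (hK : K ≤ Subfield.closure {l + l⁻¹})
    (a : K) (ha : SquareRootableVia K l a) :
    ((minpoly K l).natDegree % 4 = 0 →
      ∃ k : K, IsIntegral ℤ k ∧ (minpoly K l).eval (-1) = k ^ 2) ∧
    ((minpoly K l).natDegree % 4 = 2 →
      ∃ k : K, k ≠ 0 ∧ (minpoly K l).eval (-1) = a * k ^ 2) := by
  obtain ⟨hpos, q, hqm, hpal, heven, hodd, heq⟩ := ha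
  exact main_test l ⟨hl.1, hl.2.1⟩ K a hpos q hqm hpal heven hodd heq
end

section
/- Let λ be a Salem number and K ⊆ ℚ(λ + λ⁻¹). If the minimal polynomial of λ over K has degree 2, then λ is square-rootable over K via α = λ + λ⁻¹ + 2 (which is a totally positive element of K), with q(x) = x² − √α·x + 1 satisfying q(x)q(−x) = p(x²). -/
open Polynomial

set_option maxHeartbeats 2000000
set_option synthInstance.maxHeartbeats 1000000

lemma quad_eq {R : Type*} [CommRing R] (f : R[X]) (hm : f.Monic) (h2 : f.natDegree = 2) :
    f = X ^ 2 + C (f.coeff 1) * X + C (f.coeff 0) := by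
  ext n
  have hlead : f.coeff 2 = 1 := by
    have := hm.coeff_natDegree
    rwa [h2] at this
  rcases n with _ | _ | _ | n
  · simp
  · simp
  · simp [hlead, coeff_X_pow]
  · rw [coeff_eq_zero_of_natDegree_lt (by omega)]
    simp [coeff_X_pow, coeff_C]


/-- If `λ` is a Salem number, `K ⊆ ℚ(λ + λ⁻¹)`, and the minimal polynomial of `λ` over
`K` has degree `2`, then `λ + λ⁻¹ + 2` is a totally positive element of `K` and `λ` is
square-rootable over `K` via `α = λ + λ⁻¹ + 2`, with `q(x) = x² − √α x + 1` satisfying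
`q(x) q(-x) = p(x²)`. -/
theorem squareRootable_of_degree_two
    (l : ℝ) (hl : IsSalem l) (K : Subfield ℝ)
    (hK : K ≤ Subfield.closure {l + l⁻¹})
    (hdeg : (minpoly K l).natDegree = 2) :
    ∃ hmem : l + l⁻¹ + 2 ∈ K,
      TotallyPositive K ⟨l + l⁻¹ + 2, hmem⟩ ∧
      SquareRootableVia K l ⟨l + l⁻¹ + 2, hmem⟩ ∧
      (Polynomial.X ^ 2 - Polynomial.C (Real.sqrt (l + l⁻¹ + 2)) * Polynomial.X + 1) *
          (Polynomial.X ^ 2 - Polynomial.C (Real.sqrt (l + l⁻¹ + 2)) * Polynomial.X +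
            1).comp (-Polynomial.X) =
        ((minpoly K l).map K.subtype).comp (Polynomial.X ^ 2) := by
  obtain ⟨hl1, hint, -, hconj⟩ := hl
  have hl0 : (0:ℝ) < l := lt_trans one_pos hl1
  have hlne : l ≠ 0 := ne_of_gt hl0
  have hintK : IsIntegral K l := hint.tower_top
  have hintQ : IsIntegral ℚ l := hint.tower_top
  have hpm : (minpoly K l).Monic := minpoly.monic hintK
  have hirr := minpoly.irreducible hintK
  have htwo : ((2:K):ℝ) = 2 := by
    rw [show (2:K) = 1 + 1 by norm_num]
    push_cast
    norm_num
  set b := (minpoly K l).coeff 1 with hbdef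
  set c := (minpoly K l).coeff 0 with hcdef
  have hpeq : minpoly K l = X ^ 2 + C b * X + C c := quad_eq _ hpm hdeg
  have heval : l ^ 2 + (b:ℝ) * l + (c:ℝ) = 0 := by
    have h0 := minpoly.aeval K l
    rw [hpeq] at h0
    simp at h0; exact h0
  set r : ℝ := -(b:ℝ) - l with hrdef
  have hc_lr : (c:ℝ) = l * r := by rw [hrdef]; linear_combination heval
  have hdvdQ : minpoly K l ∣ (minpoly ℚ l).map (algebraMap ℚ K) :=
    minpoly.dvd K l (by rw [aeval_map_algebraMap]; exact minpoly.aeval ℚ l)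
  -- r is a root of minpoly ℚ l over ℂ
  have hrootC : aeval ((r:ℂ)) (minpoly ℚ l) = 0 := by
    have hrpm : eval r ((minpoly K l).map K.subtype) = 0 := by
      rw [hpeq]
      simp only [Polynomial.map_add, Polynomial.map_mul, Polynomial.map_pow, map_X, map_C]
      simp only [eval_add, eval_mul, eval_pow, eval_X, eval_C]
      show r ^ 2 + (b:ℝ) * r + (c:ℝ) = 0
      rw [hc_lr, hrdef]; ring
    have hrQ : eval r ((minpoly ℚ l).map (algebraMap ℚ ℝ)) = 0 := by
      obtain ⟨g, hg⟩ := Polynomial.map_dvd K.subtype hdvdQ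
      rw [Polynomial.map_map, show K.subtype.comp (algebraMap ℚ K) = algebraMap ℚ ℝ from
        Subsingleton.elim _ _] at hg
      rw [hg, eval_mul, hrpm, zero_mul]
    have h' : aeval r (minpoly ℚ l) = 0 := by rwa [aeval_def, ← eval_map]
    exact (Polynomial.aeval_algebraMap_eq_zero_iff_of_injective (R := ℚ) (A := ℝ) (B := ℂ)
      (algebraMap ℝ ℂ).injective).mpr h'
  -- the other root must be l⁻¹
  have hrval : r = l⁻¹ := by
    rcases hconj _ hrootC with h | h | h
    · exfalso
      have hr : r = l := by exact_mod_cast h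
      have hlin : aeval l (C (2:K) * X + C b) = 0 := by
        rw [hrdef] at hr
        simp only [map_add, map_mul, aeval_C, aeval_X]
        show ((2:K):ℝ) * l + (b:ℝ) = 0
        rw [htwo]
        linarith
      have hdvd1 : minpoly K l ∣ C (2:K) * X + C b := minpoly.dvd K l hlin
      have hne : (C (2:K) * X + C b) ≠ 0 := by
        intro hz
        have := congrArg (fun q => Polynomial.coeff q 1) hz
        simp [coeff_C] at this
      have hle := Polynomial.natDegree_le_of_dvd hdvd1 hne
      rw [Polynomial.natDegree_linear (by norm_num : (2:K) ≠ 0)] at hle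
      omega
    · have : ((l:ℂ))⁻¹ = ((l⁻¹ : ℝ) : ℂ) := by push_cast; ring
      rw [this] at h
      exact_mod_cast h
    · exfalso
      have habs : |r| = 1 := by rwa [Complex.norm_real, Real.norm_eq_abs] at h
      have hr1 : r = 1 ∨ r = -1 := (abs_eq (by norm_num)).mp habs
      have hex : ∃ c0 : K, (c0 : ℝ) = r := by
        rcases hr1 with h1 | h1
        · exact ⟨1, by simp [h1]⟩
        · exact ⟨-1, by simp [h1]⟩
      obtain ⟨c0, hc0⟩ := hex
      have hev : eval c0 (minpoly K l) = 0 := by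
        have haev : aeval ((c0 : ℝ)) (minpoly K l) = 0 := by
          rw [aeval_def, ← eval_map, hc0]
          rw [hpeq]
          simp only [Polynomial.map_add, Polynomial.map_mul, Polynomial.map_pow, map_X, map_C]
          simp only [eval_add, eval_mul, eval_pow, eval_X, eval_C]
          show r ^ 2 + (b:ℝ) * r + (c:ℝ) = 0
          rw [hc_lr, hrdef]; ring
        have h2 : aeval c0 (minpoly K l) = 0 :=
          (Polynomial.aeval_algebraMap_eq_zero_iff_of_injective (R := K) (A := K) (B := ℝ)
            Subtype.val_injective).mp haev
        rwa [aeval_def, eval₂_eq_eval_map, Algebra.algebraMap_self, map_id] at h2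
      obtain ⟨g, hg⟩ := dvd_iff_isRoot.mpr hev
      rcases hirr.isUnit_or_isUnit hg with hu | hu
      · exact Polynomial.not_isUnit_X_sub_C c0 hu
      · have hg0 : g ≠ 0 := hu.ne_zero
        have h1 : (minpoly K l).natDegree = 1 := by
          rw [hg, natDegree_mul (X_sub_C_ne_zero c0) hg0, natDegree_X_sub_C,
            natDegree_eq_zero_of_isUnit hu]
        omega
  have hbr : (b:ℝ) = -(l + l⁻¹) := by rw [hrdef] at hrval; linarith
  have hcr : (c:ℝ) = 1 := by rw [hc_lr, hrval, mul_inv_cancel₀ hlne]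
  have hceq : c = 1 := Subtype.ext (by simpa using hcr)
  have hmem : l + l⁻¹ + 2 ∈ K := by
    have hh : ((-b + 2 : K) : ℝ) = l + l⁻¹ + 2 := by push_cast [hbr, htwo]; ring
    rw [← hh]; exact (-b + 2 : K).2
  set a : K := ⟨l + l⁻¹ + 2, hmem⟩ with hadef
  have ha : (a : ℝ) = l + l⁻¹ + 2 := rfl
  have haK : a = -b + 2 := by
    apply Subtype.ext
    push_cast [hbr, htwo]
    show l + l⁻¹ + 2 = _
    ring
  have hα0 : (0:ℝ) < l + l⁻¹ + 2 := by positivity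
  -- total positivity
  have hTP : TotallyPositive K a := by
    intro φ
    set ψ : K →+* ℂ := (algebraMap ℝ ℂ).comp φ with hψdef
    have hdegψ : 0 < ((minpoly K l).map ψ).degree := by
      rw [degree_map]
      rw [degree_eq_natDegree (minpoly.ne_zero hintK), hdeg]
      norm_num
    obtain ⟨z, hz⟩ := Complex.exists_root hdegψ
    have hz2 : eval₂ ψ z (minpoly K l) = 0 := by rwa [IsRoot, eval_map] at hz
    have hzval : z ^ 2 + ψ b * z + 1 = 0 := by
      rw [hpeq] at hz2
      simp only [hceq, eval₂_add, eval₂_mul, eval₂_pow, eval₂_X, eval₂_C, eval₂_one, map_one] at hz2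
      exact hz2
    have hz0 : z ≠ 0 := by
      intro h; rw [h] at hzval; simp at hzval
    have hψb : ψ b = -(z + z⁻¹) := by
      field_simp
      linear_combination hzval
    have hzQ : aeval z (minpoly ℚ l) = 0 := by
      obtain ⟨g, hg⟩ := hdvdQ
      have h1 : eval₂ ψ z ((minpoly ℚ l).map (algebraMap ℚ K)) = 0 := by
        rw [hg, eval₂_mul, hz2, zero_mul]
      rwa [eval₂_map, show ψ.comp (algebraMap ℚ K) = algebraMap ℚ ℂ from
        Subsingleton.elim _ _, ← aeval_def] at h1
    have hψa : ψ a = z + z⁻¹ + 2 := by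
      rw [haK, map_add, map_neg, map_ofNat, hψb]
      ring
    have hφa : ((φ a : ℝ) : ℂ) = z + z⁻¹ + 2 := (rfl : ((φ a : ℝ) : ℂ) = ψ a).trans hψa
    rcases hconj z hzQ with h | h | h
    · have hfin : (φ a : ℝ) = l + l⁻¹ + 2 := by
        apply Complex.ofReal_injective
        rw [hφa, h]
        push_cast
        ring
      rw [hfin]; exact hα0
    · have hfin : (φ a : ℝ) = l + l⁻¹ + 2 := by
        apply Complex.ofReal_injective
        rw [hφa, h, inv_inv]
        push_cast
        ring
      rw [hfin]; exact hα0
    · have hinv : z⁻¹ = starRingEnd ℂ z := by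
        rw [Complex.inv_def, Complex.normSq_eq_norm_sq, h]
        simp
      have hre : (φ a : ℝ) = z.re + z.re + 2 := by
        have h1 := congrArg Complex.re hφa
        rw [hinv] at h1
        simpa [Complex.add_re, Complex.conj_re] using h1
      have hzne : z ≠ -1 := by
        intro hzneg
        rw [hzneg] at hzQ
        have h1 : aeval ((-1 : ℝ)) (minpoly ℚ l) = 0 := by
          have h2 : ((-1:ℝ) : ℂ) = (-1 : ℂ) := by norm_num
          rw [← h2] at hzQ
          exact (Polynomial.aeval_algebraMap_eq_zero_iff_of_injective (R := ℚ) (A := ℝ) (B := ℂ)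
            (algebraMap ℝ ℂ).injective).mp hzQ
        have h2 : minpoly ℚ l = minpoly ℚ ((-1:ℝ)) :=
          minpoly.eq_of_irreducible_of_monic (minpoly.irreducible hintQ) h1 (minpoly.monic hintQ)
        have h3 : minpoly ℚ ((-1:ℝ)) = X - C (-1) := by
          have h4 := minpoly.eq_X_sub_C ℝ (-1 : ℚ)
          simpa using h4
        have h5 := minpoly.aeval ℚ l
        rw [h2, h3] at h5
        simp only [map_sub, aeval_X, aeval_C] at h5
        have : l + 1 = 0 := by simpa using h5
        linarith
      have h5 : |z.re| ≤ 1 := by rw [← h]; exact Complex.abs_re_le_norm z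
      have h6 : -1 ≤ z.re := (abs_le.mp h5).1
      have h7 : -1 < z.re := by
        rcases h6.lt_or_eq with h8 | h8
        · exact h8
        · exfalso
          apply hzne
          have hns : Complex.normSq z = 1 := by rw [Complex.normSq_eq_norm_sq, h]; norm_num
          have him : z.im = 0 := by
            have := Complex.normSq_apply z
            rw [hns, ← h8] at this
            nlinarith [sq_nonneg z.im]
          apply Complex.ext
          · simp [← h8]
          · simp [him]
      rw [hre]; linarith
  set sq := Real.sqrt (l + l⁻¹ + 2) with hsqdef
  set q : ℝ[X] := X ^ 2 - C sq * X + 1 with hqdef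
  have hc0 : q.coeff 0 = 1 := by
    simp [hqdef, coeff_one, coeff_X_pow]
  have hc1 : q.coeff 1 = -sq := by
    simp [hqdef, coeff_one, coeff_X_pow]
  have hc2 : q.coeff 2 = 1 := by
    simp [hqdef, coeff_one, coeff_X_pow]
  have hqdeg : q.natDegree = 2 := by
    rw [hqdef]
    compute_degree!
  have hchigh : ∀ j, 3 ≤ j → q.coeff j = 0 := fun j hj =>
    coeff_eq_zero_of_natDegree_lt (by omega)
  have hqmonic : q.Monic := by
    rw [Monic, leadingCoeff, hqdeg, hc2]
  have hfinal : q * q.comp (-X) = ((minpoly K l).map K.subtype).comp (X ^ 2) := by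
    have hCsq : C sq * C sq = C l + C l⁻¹ + 2 := by
      rw [← C_mul, hsqdef, Real.mul_self_sqrt hα0.le, map_add, map_add, map_ofNat]
    have hmap : (minpoly K l).map K.subtype = X ^ 2 - (C l + C l⁻¹) * X + 1 := by
      rw [hpeq]
      simp only [Polynomial.map_add, Polynomial.map_mul, Polynomial.map_pow, map_X, map_C]
      rw [(by exact hbr : K.subtype b = -(l + l⁻¹)), (by exact hcr : K.subtype c = 1)]
      rw [map_neg, map_add, map_one]
      ring
    rw [hmap, hqdef]
    simp only [add_comp, sub_comp, mul_comp, pow_comp, X_comp, C_comp, one_comp]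
    linear_combination (-(X ^ 2 : ℝ[X])) * hCsq
  refine ⟨hmem, hTP, ⟨hTP, q, hqmonic, ?_, ?_, ?_, hfinal⟩, hfinal⟩
  · intro j hj
    rw [hqdeg] at hj ⊢
    interval_cases j
    · rw [hc0, hc2]
    · rfl
    · rw [hc0, hc2]
  · intro j hj
    rcases Nat.lt_or_ge j 3 with h3 | h3
    · interval_cases j
      · rw [hc0]; exact K.one_mem
      · exact absurd hj (by norm_num)
      · rw [hc2]; exact K.one_mem
    · rw [hchigh j h3]; exact K.zero_mem
  · intro j hj
    rcases Nat.lt_or_ge j 3 with h3 | h3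
    · interval_cases j
      · exact absurd hj (by norm_num)
      · exact ⟨-1, K.neg_mem K.one_mem, by rw [hc1]; show -sq = sq * -1; ring⟩
      · exact absurd hj (by norm_num)
    · exact ⟨0, K.zero_mem, by rw [hchigh j h3]; simp⟩
end

section
/- Let λ be a Salem number of degree 4 over ℚ with minimal polynomial p(x) = x⁴ + a x³ + b x² + a x + 1. Then λ is square-rootable over ℚ if and only if p(−1) is a perfect square in ℤ. -/
open Polynomial

/-- A Salem number `l` is square-rootable over `ℚ` via `a` if `a` is a positive rational
and there is a monic palindromic polynomial `q`, with even-degree coefficients in `ℚ`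
and odd-degree coefficients in `√a · ℚ`, such that `q(x) q(-x) = p(x²)`, where `p` is
the minimal polynomial of `l` over `ℚ`. -/
def SquareRootableViaQ (l : ℝ) (a : ℚ) : Prop :=
  0 < a ∧
  ∃ q : Polynomial ℝ, q.Monic ∧
    (∀ j ≤ q.natDegree, q.coeff j = q.coeff (q.natDegree - j)) ∧
    (∀ j, Even j → ∃ c : ℚ, q.coeff j = (c : ℝ)) ∧
    (∀ j, Odd j → ∃ c : ℚ, q.coeff j = Real.sqrt (a : ℝ) * (c : ℝ)) ∧
    q * q.comp (-Polynomial.X) =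
      ((minpoly ℚ l).map (algebraMap ℚ ℝ)).comp (Polynomial.X ^ 2)

private lemma quartic_eq_of_coeffs (q : ℝ[X]) (hdeg : q.natDegree = 4) (c d : ℝ)
    (h0 : q.coeff 0 = 1) (h1 : q.coeff 1 = c) (h2 : q.coeff 2 = d)
    (h3 : q.coeff 3 = c) (h4 : q.coeff 4 = 1) :
    q = X^4 + C c * X^3 + C d * X^2 + C c * X + 1 := by
  ext n
  rcases n with _|_|_|_|_|n
  · simpa [coeff_one, coeff_X] using h0
  · simpa [coeff_one, coeff_X] using h1
  · simpa [coeff_one, coeff_X] using h2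
  · simpa [coeff_one, coeff_X] using h3
  · simpa [coeff_one, coeff_X] using h4
  · rw [coeff_eq_zero_of_natDegree_lt (by omega)]
    simp [coeff_one, coeff_X]

private lemma quartic_prod_identity (c dr A B K : ℝ) (h1 : c^2 = 4 + 2*K - A)
    (h2 : dr = 2 + K) (h3 : K^2 = 2 - 2*A + B) :
    (X^4 + C c * X^3 + C dr * X^2 + C c * X + 1 : ℝ[X]) *
      ((X^4 + C c * X^3 + C dr * X^2 + C c * X + 1 : ℝ[X]).comp (-X)) =
    X^8 + C A * X^6 + C B * X^4 + C A * X^2 + 1 := by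
  have e1 : 2 * dr - c^2 = A := by rw [h1, h2]; ring
  have e2 : dr^2 + 2 - 2*c^2 = B := by rw [h1, h2]; nlinarith [h3]
  have E1 : 2 * C dr - C c ^ 2 = (C A : ℝ[X]) := by
    have := congrArg C e1
    simpa only [map_sub, map_add, map_mul, map_pow, map_ofNat] using this
  have E2 : C dr ^ 2 + 2 - 2 * C c ^ 2 = (C B : ℝ[X]) := by
    have := congrArg C e2
    simpa only [map_sub, map_add, map_mul, map_pow, map_ofNat] using this
  simp only [add_comp, mul_comp, pow_comp, X_comp, C_comp, one_comp]
  linear_combination (X^6 + X^2 : ℝ[X]) * E1 + (X^4:ℝ[X]) * E2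

private lemma forward_eval_I (c : ℝ) (d a b : ℚ)
    (h : (X^4 + C c * X^3 + C (d:ℝ) * X^2 + C c * X + 1 : ℝ[X]) *
      ((X^4 + C c * X^3 + C (d:ℝ) * X^2 + C c * X + 1 : ℝ[X]).comp (-X)) =
      X^8 + C ((a:ℝ)) * X^6 + C ((b:ℝ)) * X^4 + C ((a:ℝ)) * X^2 + 1) :
    ((2 : ℚ) - d)^2 = 2 - 2*a + b := by
  have hI := congrArg (aeval (Complex.I)) h
  simp only [map_add, map_mul, map_pow, map_one, aeval_X, aeval_C, aeval_comp, map_neg,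
    pow_succ, pow_zero, Complex.I_mul_I, one_mul, mul_neg, neg_mul, neg_neg, mul_one] at hI
  have : ((2 : ℂ) - (d:ℚ))^2 = 2 - 2*(a:ℚ) + (b:ℚ) := by
    push_cast at hI ⊢
    linear_combination hI
  exact_mod_cast this

private lemma minpoly_eval_int (l : ℝ) (hl : IsIntegral ℤ l) :
    ∃ m : ℤ, (minpoly ℚ l).eval (-1) = (m : ℚ) := by
  have h := minpoly.isIntegrallyClosed_eq_field_fractions ℚ ℝ hl
  simp only [RingHom.id_apply, Algebra.algebraMap_self, map_id] at h
  refine ⟨(minpoly ℤ l).eval (-1), ?_⟩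
  rw [h, algebraMap_int_eq]
  simpa using eval_intCast_map (Int.castRingHom ℚ) (minpoly ℤ l) (-1)

private lemma rat_int_square (d : ℚ) (m : ℤ) (h : d ^ 2 = (m : ℚ)) : ∃ k : ℤ, d = (k : ℚ) := by
  have hint : IsIntegral ℤ d := ⟨X^2 - C m, monic_X_pow_sub_C m (by norm_num), by
    simp only [eval₂_sub, eval₂_pow, eval₂_X, eval₂_C, Int.coe_castRingHom, h, sub_self,
      algebraMap_int_eq]⟩
  obtain ⟨k, hk⟩ := IsIntegrallyClosed.isIntegral_iff.mp hint
  exact ⟨k, hk.symm⟩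

private lemma a_le_four (p : ℚ[X]) (hm : p.Monic) (hd : p.natDegree = 4) (a : ℚ)
    (hc : p.coeff 3 = a)
    (hroots : ∀ z ∈ (p.map (algebraMap ℚ ℂ)).roots, -1 ≤ z.re) : a ≤ 4 := by
  set P := p.map (algebraMap ℚ ℂ) with hP
  have hPm : P.Monic := hm.map _
  have hPd : P.natDegree = 4 := by rw [hP, natDegree_map]; exact hd
  have hsplit : P.Splits := IsAlgClosed.splits P
  have hsum : P.nextCoeff = -P.roots.sum :=
    hsplit.nextCoeff_eq_neg_sum_roots_of_monic hPm
  have hnc : P.nextCoeff = (a : ℂ) := by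
    rw [nextCoeff, hPd]
    simp [hP, coeff_map, hc]
  have hcard : Multiset.card P.roots = 4 := by
    rw [← hPd]
    exact (splits_iff_card_roots.mp hsplit)
  have hre : ((P.roots.map Complex.re).sum : ℝ) = P.roots.sum.re :=
    (map_multiset_sum Complex.reAddGroupHom P.roots).symm
  have hb : (Multiset.card (P.roots.map Complex.re)) • (-1 : ℝ) ≤ (P.roots.map Complex.re).sum := by
    apply Multiset.card_nsmul_le_sum
    intro x hx
    obtain ⟨z, hz, rfl⟩ := Multiset.mem_map.mp hx
    exact hroots z hz
  rw [Multiset.card_map, hcard] at hb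
  have hsum2 : P.roots.sum = -(a:ℂ) := by rw [← hnc, hsum]; ring
  rw [hre, hsum2] at hb
  simp at hb
  have : (a:ℝ) ≤ 4 := by linarith
  exact_mod_cast this

/-- A Salem number `λ` of degree `4` over `ℚ`, with minimal polynomial
`p(x) = x⁴ + a x³ + b x² + a x + 1`, is square-rootable over `ℚ` if and only if
`p(-1)` is a perfect square in `ℤ`. -/
theorem degree_four_squareRootable_iff
    (l : ℝ) (hl : IsSalem l) (a b : ℚ)
    (hp : minpoly ℚ l =
      Polynomial.X ^ 4 + Polynomial.C a * Polynomial.X ^ 3 +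
        Polynomial.C b * Polynomial.X ^ 2 + Polynomial.C a * Polynomial.X + 1) :
    (∃ α : ℚ, SquareRootableViaQ l α) ↔
      ∃ k : ℤ, (minpoly ℚ l).eval (-1) = (k : ℚ) ^ 2 := by
  have hev : (minpoly ℚ l).eval (-1) = 2 - 2*a + b := by rw [hp]; simp; ring
  have hRHS : ((minpoly ℚ l).map (algebraMap ℚ ℝ)).comp (X^2)
      = X^8 + C (a:ℝ) * X^6 + C (b:ℝ) * X^4 + C (a:ℝ) * X^2 + 1 := by
    rw [hp]
    simp only [Polynomial.map_add, Polynomial.map_mul, Polynomial.map_pow, map_X, map_C,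
      Polynomial.map_one, add_comp, mul_comp, pow_comp, X_comp, C_comp, one_comp, eq_ratCast]
    ring
  constructor
  · rintro ⟨α, hα, q, hmonic, hpal, heven, hodd, hmul⟩
    rw [hRHS] at hmul
    have hq0 : q ≠ 0 := hmonic.ne_zero
    have hcomp : (q.comp (-X)).comp (-X) = q := by rw [comp_assoc]; simp
    have hc0 : q.comp (-X) ≠ 0 := fun hz => hq0 (by rw [← hcomp, hz, zero_comp])
    have h8 : (X^8 + C (a:ℝ) * X^6 + C (b:ℝ) * X^4 + C (a:ℝ) * X^2 + 1 : ℝ[X]).natDegree = 8 := by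
      compute_degree!
    have hcd : (q.comp (-X)).natDegree = q.natDegree := by rw [natDegree_comp]; simp
    have hqd : q.natDegree = 4 := by
      have h1 := natDegree_mul hq0 hc0
      rw [hmul, h8, hcd] at h1
      omega
    have h4 : q.coeff 4 = 1 := by rw [← hqd]; exact hmonic.coeff_natDegree
    have h13 : q.coeff 1 = q.coeff 3 := by
      have := hpal 1 (by rw [hqd]; omega)
      rwa [hqd] at this
    have h0 : q.coeff 0 = 1 := by
      have := hpal 0 (by omega)
      rw [hqd] at this
      simpa [h4] using this
    obtain ⟨d, hd⟩ := heven 2 ⟨1, rfl⟩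
    have hq4 := quartic_eq_of_coeffs q hqd (q.coeff 1) (d:ℝ) h0 rfl hd h13.symm h4
    rw [hq4] at hmul
    have hsq := forward_eval_I (q.coeff 1) d a b hmul
    obtain ⟨m, hm⟩ := minpoly_eval_int l hl.2.1
    obtain ⟨k, hk⟩ := rat_int_square (2 - d) m (by rw [hsq, ← hev, hm])
    exact ⟨k, by rw [hev, ← hsq, hk]⟩
  · rintro ⟨k, hk⟩
    set K : ℚ := ((|k| : ℤ) : ℚ) with hKdef
    have hK0 : (0:ℚ) ≤ K := by rw [hKdef]; exact_mod_cast abs_nonneg k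
    have hKsq : K^2 = 2 - 2*a + b := by
      rw [← hev, hk, hKdef]
      push_cast [sq_abs]
      ring
    have pm : (minpoly ℚ l).Monic := by rw [hp]; monicity!
    have pd : (minpoly ℚ l).natDegree = 4 := by rw [hp]; compute_degree!
    have pc3 : (minpoly ℚ l).coeff 3 = a := by rw [hp]; simp [coeff_one, coeff_X]
    have hroots : ∀ z ∈ ((minpoly ℚ l).map (algebraMap ℚ ℂ)).roots, -1 ≤ z.re := by
      intro z hz
      have hz' : aeval z (minpoly ℚ l) = 0 := by
        have := (mem_roots'.mp hz).2
        rwa [IsRoot, eval_map, ← aeval_def] at this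
      rcases hl.2.2.2 z hz' with h | h | h
      · rw [h]; simp; linarith [hl.1]
      · rw [h, ← Complex.ofReal_inv]
        simp only [Complex.ofReal_re]
        have hlpos : (0:ℝ) < l := lt_trans one_pos hl.1
        have : (0:ℝ) ≤ l⁻¹ := by positivity
        linarith
      · have h2 := Complex.abs_re_le_norm z
        rw [h] at h2
        linarith [(abs_le.mp h2).1]
    have ha4 : a ≤ 4 := a_le_four _ pm pd a pc3 hroots
    set γ : ℚ := 4 + 2*K - a with hγdef
    have hγ0 : (0:ℚ) ≤ γ := by rw [hγdef]; linarith
    set c : ℝ := Real.sqrt (γ:ℝ) with hcdef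
    have hc2 : c^2 = (γ:ℝ) := Real.sq_sqrt (by exact_mod_cast hγ0)
    set dr : ℚ := 2 + K with hdrdef
    obtain ⟨α, c0, hαpos, hc0eq⟩ : ∃ (α c0 : ℚ), 0 < α ∧ c = Real.sqrt (α:ℝ) * (c0:ℝ) := by
      by_cases h0 : γ = 0
      · exact ⟨1, 0, one_pos, by simp [hcdef, h0]⟩
      · exact ⟨γ, 1, lt_of_le_of_ne hγ0 (Ne.symm h0), by simp [hcdef]⟩
    refine ⟨α, hαpos, X^4 + C c * X^3 + C ((dr:ℚ):ℝ) * X^2 + C c * X + 1, ?_, ?_, ?_, ?_, ?_⟩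
    · monicity!
    · have hnd : (X^4 + C c * X^3 + C ((dr:ℚ):ℝ) * X^2 + C c * X + 1 : ℝ[X]).natDegree = 4 := by
        compute_degree!
      simp only [hnd]
      intro j hj
      interval_cases j <;> simp [coeff_one, coeff_X]
    · intro j hje
      rcases j with _|_|_|_|_|j
      · exact ⟨1, by simp [coeff_one, coeff_X]⟩
      · exact absurd hje (by decide)
      · exact ⟨dr, by simp [coeff_one, coeff_X]⟩
      · exact absurd hje (by decide)
      · exact ⟨1, by simp [coeff_one, coeff_X]⟩
      · exact ⟨0, by simp [coeff_one, coeff_X]⟩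
    · intro j hjo
      rcases j with _|_|_|_|_|j
      · exact absurd hjo (by decide)
      · exact ⟨c0, by simpa [coeff_one, coeff_X] using hc0eq⟩
      · exact absurd hjo (by decide)
      · exact ⟨c0, by simpa [coeff_one, coeff_X] using hc0eq⟩
      · exact absurd hjo (by decide)
      · exact ⟨0, by simp [coeff_one, coeff_X]⟩
    · rw [hRHS]
      refine quartic_prod_identity c ((dr:ℚ):ℝ) (a:ℝ) (b:ℝ) ((K:ℚ):ℝ) ?_ ?_ ?_
      · rw [hc2, hγdef]; push_cast; ring
      · rw [hdrdef]; push_cast; ring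
      · exact_mod_cast congrArg (fun x : ℚ => (x:ℝ)) hKsq
end

section
/- The Salem number λ with Salem polynomial p(x) = x⁴ − x³ − 3x² − x + 1, namely λ = (1 + √21 + √(2(3+√21)))/4, satisfies p(−1) = 1, and hence λ is square-rootable over ℚ via 3 and via 7. -/
open Polynomial

lemma no_rat_sq21 (q : ℚ) : q^2 ≠ 21 := by
  intro h
  have h21 : Irrational (Real.sqrt 21) := by
    rw [show (21:ℝ) = ((21:ℕ):ℝ) by norm_num]
    refine irrational_sqrt_natCast_iff.mpr ?_
    rintro ⟨m, hm⟩
    rcases Nat.lt_or_ge m 6 with h | h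
    · interval_cases m <;> omega
    · nlinarith
  have hq : ((q:ℝ))^2 = 21 := by exact_mod_cast congrArg (fun x : ℚ => (x:ℝ)) h
  have : Real.sqrt 21 = |(q:ℝ)| := by
    rw [← hq, Real.sqrt_sq_eq_abs]
  rw [this, ← Rat.cast_abs] at h21
  exact h21 ⟨|q|, rfl⟩

lemma no_rat_root (r : ℚ) : r^4 - r^3 - 3*r^2 - r + 1 ≠ 0 := by
  intro h
  have hr : r ≠ 0 := by rintro rfl; norm_num at h
  apply no_rat_sq21 (2*(r + 1/r) - 1)
  have h2 : r^2 ≠ 0 := pow_ne_zero 2 hr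
  field_simp
  linear_combination (4 : ℚ) * h


lemma no_quad_factor (a b c d : ℚ) (e1 : a + c = -1) (e2 : b + d + a*c = -3)
    (e3 : a*d + b*c = -1) (e4 : b*d = 1) : False := by
  have h1 : a*(d-b) = b - 1 := by linear_combination e3 - b*e1
  have h2 : c*(b-d) = d - 1 := by linear_combination e3 - d*e1
  have h12 : (a*(d-b))*(c*(b-d)) = (b-1)*(d-1) := by rw [h1, h2]
  have hσ : (b+d-2)*((b+d)^2+5*(b+d)+7) = 0 := by
    linear_combination h12 + (d-b)^2 * e2 + (13 + 4*(b+d)) * e4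
  have hpos : (b+d)^2+5*(b+d)+7 > 0 := by nlinarith [sq_nonneg (2*(b+d)+5)]
  have hs2 : b + d = 2 := by
    rcases mul_eq_zero.mp hσ with h | h
    · linarith
    · linarith
  have hb : b = 1 ∧ d = 1 := by constructor <;> nlinarith [sq_nonneg (b-d)]
  apply no_rat_sq21 (2*a+1)
  obtain ⟨hb1, hd1⟩ := hb
  subst hb1; subst hd1
  linear_combination 4*a*e1 - 4*e2


lemma monic_deg2_eq (h : ℚ[X]) (hm : h.Monic) (hd : h.natDegree = 2) :
    h = X^2 + C (h.coeff 1) * X + C (h.coeff 0) := by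
  ext n
  have hlead : h.coeff 2 = 1 := by
    have := hm.coeff_natDegree; rwa [hd] at this
  match n with
  | 0 => simp
  | 1 => simp
  | 2 => simp [hlead, coeff_X_pow]
  | (n+3) =>
    rw [coeff_eq_zero_of_natDegree_lt (by omega : h.natDegree < n+3)]
    simp [coeff_X_pow, coeff_C]

lemma P_natDegree : (X^4 - X^3 - 3*X^2 - X + 1 : ℚ[X]).natDegree = 4 := by
  compute_degree!

lemma P_monic : (X^4 - X^3 - 3*X^2 - X + 1 : ℚ[X]).Monic := by
  monicity!

lemma deg1_case (q : ℚ[X]) (hq : q.Monic) (hd : q.natDegree = 1)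
    (hdvd : ∃ g : ℚ[X], q * g = (X^4 - X^3 - 3*X^2 - X + 1 : ℚ[X])) : False := by
  obtain ⟨g, hg⟩ := hdvd
  have hform := hq.eq_X_add_C hd
  set r := q.coeff 0 with hr
  have heval : (X^4 - X^3 - 3*X^2 - X + 1 : ℚ[X]).eval (-r) = 0 := by
    rw [← hg, eval_mul, hform]
    simp
  apply no_rat_root (-r)
  have : (-r)^4 - (-r)^3 - 3*(-r)^2 - (-r) + 1 = 0 := by
    simpa using heval
  linarith [this]

lemma P_irreducible : Irreducible (X^4 - X^3 - 3*X^2 - X + 1 : ℚ[X]) := by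
  constructor
  · rw [isUnit_iff_degree_eq_zero]
    intro h
    have := P_natDegree
    rw [natDegree, h] at this
    simp at this
  · intro f g hfg
    by_contra hcon
    push_neg at hcon
    obtain ⟨huf, hug⟩ := hcon
    have hP0 : (X^4 - X^3 - 3*X^2 - X + 1 : ℚ[X]) ≠ 0 := P_monic.ne_zero
    have hf0 : f ≠ 0 := by rintro rfl; rw [zero_mul] at hfg; exact hP0 hfg
    have hg0 : g ≠ 0 := by rintro rfl; rw [mul_zero] at hfg; exact hP0 hfg
    have hsum : f.natDegree + g.natDegree = 4 := by
      rw [← natDegree_mul hf0 hg0, ← hfg]; exact P_natDegree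
    have hdf1 : 1 ≤ f.natDegree := by
      by_contra h
      push_neg at h
      interval_cases hdfv : f.natDegree
      exact huf (isUnit_iff_degree_eq_zero.mpr (by rw [degree_eq_natDegree hf0, hdfv]; rfl))
    have hdg1 : 1 ≤ g.natDegree := by
      by_contra h
      push_neg at h
      interval_cases hdgv : g.natDegree
      exact hug (isUnit_iff_degree_eq_zero.mpr (by rw [degree_eq_natDegree hg0, hdgv]; rfl))
    -- monicize
    have hlf : f.leadingCoeff ≠ 0 := leadingCoeff_ne_zero.mpr hf0
    have hlg : g.leadingCoeff ≠ 0 := leadingCoeff_ne_zero.mpr hg0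
    have hlfg : f.leadingCoeff * g.leadingCoeff = 1 := by
      rw [← leadingCoeff_mul, ← hfg]; exact P_monic.leadingCoeff
    set f' := f * C f.leadingCoeff⁻¹ with hf'
    set g' := g * C g.leadingCoeff⁻¹ with hg'
    have hf'm : f'.Monic := monic_mul_leadingCoeff_inv hf0
    have hg'm : g'.Monic := monic_mul_leadingCoeff_inv hg0
    have hfg' : f' * g' = (X^4 - X^3 - 3*X^2 - X + 1 : ℚ[X]) := by
      rw [hf', hg']
      have : f * C f.leadingCoeff⁻¹ * (g * C g.leadingCoeff⁻¹)
          = f * g * C ((f.leadingCoeff * g.leadingCoeff)⁻¹) := by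
        rw [mul_inv]
        simp [C_mul]
        ring
      rw [this, hlfg, ← hfg]
      simp
    have hdf' : f'.natDegree = f.natDegree := by
      rw [hf', natDegree_mul hf0 (by simpa using inv_ne_zero hlf), natDegree_C, add_zero]
    have hdg' : g'.natDegree = g.natDegree := by
      rw [hg', natDegree_mul hg0 (by simpa using inv_ne_zero hlg), natDegree_C, add_zero]
    -- case on degree of f
    have hdfle : f.natDegree ≤ 3 := by omega
    interval_cases hv : f.natDegree
    · exact deg1_case f' hf'm (by omega) ⟨g', hfg'⟩
    · -- 2,2 case
      have hdg2 : g'.natDegree = 2 := by omega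
      have hdf2 : f'.natDegree = 2 := by omega
      rw [monic_deg2_eq f' hf'm hdf2, monic_deg2_eq g' hg'm hdg2] at hfg'
      set a := f'.coeff 1; set b := f'.coeff 0
      set c := g'.coeff 1; set d := g'.coeff 0
      have h3 := congrArg (fun q : ℚ[X] => q.coeff 3) hfg'
      have h2 := congrArg (fun q : ℚ[X] => q.coeff 2) hfg'
      have h1 := congrArg (fun q : ℚ[X] => q.coeff 1) hfg'
      have h0 := congrArg (fun q : ℚ[X] => q.coeff 0) hfg'
      simp [coeff_mul, Finset.Nat.sum_antidiagonal_eq_sum_range_succ_mk,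
        Finset.sum_range_succ, coeff_X_pow, coeff_C, coeff_X, coeff_one] at h3 h2 h1 h0
      exact no_quad_factor a b c d (by linarith) (by linarith) (by linarith) (by linarith)
    · -- f deg 3, g deg 1
      exact deg1_case g' hg'm (by omega) ⟨f', by rw [mul_comm]; exact hfg'⟩

section
variable (s u : ℝ)

example : True := trivial

noncomputable def sv : ℝ := Real.sqrt 21
noncomputable def uv : ℝ := Real.sqrt (2 * (3 + Real.sqrt 21))
noncomputable def lv : ℝ := (1 + Real.sqrt 21 + Real.sqrt (2 * (3 + Real.sqrt 21))) / 4

lemma hs_sq : sv ^ 2 = 21 := Real.sq_sqrt (by norm_num)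
lemma hs_pos : 0 ≤ sv := Real.sqrt_nonneg _
lemma hs_gt4 : 4 < sv := by nlinarith [hs_sq, hs_pos]
lemma hu_sq : uv ^ 2 = 6 + 2 * sv := by
  rw [uv, sv, Real.sq_sqrt] <;> nlinarith [Real.sqrt_nonneg (21:ℝ)]
lemma hu_pos : 0 < uv := Real.sqrt_pos.mpr (by nlinarith [Real.sqrt_nonneg (21:ℝ)])

lemma hl_def : lv = (1 + sv + uv) / 4 := rfl
lemma hl_gt1 : 1 < lv := by rw [hl_def]; nlinarith [hs_gt4, hu_pos]
lemma hl_quad : lv ^ 2 - (1 + sv) / 2 * lv + 1 = 0 := by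
  rw [hl_def]
  linear_combination (1/16 : ℝ) * hu_sq - (1/16 : ℝ) * hs_sq
lemma hl_p : lv ^ 4 - lv ^ 3 - 3 * lv ^ 2 - lv + 1 = 0 := by
  linear_combination (lv ^ 2 - (1 - sv)/2 * lv + 1) * hl_quad + (lv ^ 2 / 4) * hs_sq
lemma hl_sum : lv + lv⁻¹ = (1 + sv) / 2 := by
  have h0 : lv ≠ 0 := by nlinarith [hl_gt1]
  field_simp
  linear_combination 2 * hl_quad
end

lemma roots_classified (z : ℂ) (hz : z^4 - z^3 - 3*z^2 - z + 1 = 0) :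
    z = (lv:ℂ) ∨ z = ((lv:ℂ))⁻¹ ∨ ‖z‖ = 1 := by
  have hsC : ((sv:ℂ))^2 = 21 := by exact_mod_cast congrArg (fun x : ℝ => (x:ℂ)) hs_sq
  have hfact : (z^2 - ((1+(sv:ℂ))/2)*z + 1) * (z^2 - ((1-(sv:ℂ))/2)*z + 1) = 0 := by
    linear_combination hz - (z^2/4) * hsC
  rcases mul_eq_zero.mp hfact with hA | hB
  · -- z = l or l⁻¹
    have h0 : (lv:ℂ) ≠ 0 := by
      simp only [ne_eq, Complex.ofReal_eq_zero]
      nlinarith [hl_gt1]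
    have hinv : (lv:ℂ) * ((lv:ℂ))⁻¹ = 1 := mul_inv_cancel₀ h0
    have hsumC : (lv:ℂ) + ((lv:ℂ))⁻¹ = (1+(sv:ℂ))/2 := by
      have h2 := congrArg (fun x : ℝ => (x:ℂ)) hl_sum
      push_cast at h2
      exact h2
    have hz2 : (z - (lv:ℂ)) * (z - ((lv:ℂ))⁻¹) = 0 := by
      linear_combination hA - z * hsumC + hinv
    rcases mul_eq_zero.mp hz2 with h | h
    · exact Or.inl (by linear_combination h)
    · exact Or.inr (Or.inl (by linear_combination h))
  · -- |z| = 1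
    right; right
    have hBc : (starRingEnd ℂ z)^2 - ((1-(sv:ℂ))/2)*(starRingEnd ℂ z) + 1 = 0 := by
      have := congrArg (starRingEnd ℂ) hB
      simpa [map_sub, map_add, map_mul, map_pow, map_div₀, map_ofNat, Complex.conj_ofReal] using this
    rcases eq_or_ne z (starRingEnd ℂ z) with he | hne
    · -- z real : impossible
      exfalso
      have hre : ((z.re : ℝ) : ℂ) = z := Complex.conj_eq_iff_re.mp he.symm
      set x := z.re with hxdef
      rw [← hre] at hB
      have hxR : x^2 - (1-sv)/2*x + 1 = 0 := by
        have h9 : (((x^2 - (1-sv)/2*x + 1 : ℝ)) : ℂ) = 0 := by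
          push_cast
          linear_combination hB
        exact_mod_cast h9
      nlinarith [sq_nonneg (x - (1-sv)/4), hs_sq, hs_gt4]
    · have hsub : (z - starRingEnd ℂ z) * (z + starRingEnd ℂ z - (1-(sv:ℂ))/2) = 0 := by
        linear_combination hB - hBc
      have hsum : z + starRingEnd ℂ z = (1-(sv:ℂ))/2 := by
        rcases mul_eq_zero.mp hsub with h | h
        · exact absurd (by linear_combination h) hne
        · linear_combination h
      have hns : z * starRingEnd ℂ z = 1 := by
        linear_combination -hB + z * hsum
      have hns' : Complex.normSq z = 1 := by
        have hmc := (Complex.mul_conj z).symm.trans hns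
        exact_mod_cast hmc
      have habs : ‖z‖^2 = 1 := by rw [Complex.sq_norm]; exact hns'
      nlinarith [norm_nonneg z, habs]

lemma sq_rootable_aux (a t : ℚ) (ha : 0 < a) (h1 : 2*t + 1 = a) (h2 : t^2 + 5 = 2*a) :
    ∃ q : Polynomial ℝ, q.Monic ∧
    (∀ j ≤ q.natDegree, q.coeff j = q.coeff (q.natDegree - j)) ∧
    (∀ j, Even j → ∃ c : ℚ, q.coeff j = (c : ℝ)) ∧
    (∀ j, Odd j → ∃ c : ℚ, q.coeff j = Real.sqrt (a : ℝ) * (c : ℝ)) ∧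
    q * q.comp (-Polynomial.X) =
      (((X^4 - X^3 - 3*X^2 - X + 1 : ℚ[X])).map (algebraMap ℚ ℝ)).comp (Polynomial.X ^ 2) := by
  set r := Real.sqrt (a : ℝ) with hr
  refine ⟨X^4 + C r * X^3 + C (t:ℝ) * X^2 + C r * X + 1, ?_, ?_, ?_, ?_, ?_⟩
  case _ => monicity!
  case _ =>
    have hdeg : (X^4 + C r * X^3 + C (t:ℝ) * X^2 + C r * X + 1 : ℝ[X]).natDegree = 4 := by
      compute_degree!
    rw [hdeg]
    intro j hj
    interval_cases j <;> simp [coeff_one, coeff_X, coeff_X_pow, coeff_C]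
  case _ =>
    intro j hj
    rcases Nat.lt_or_ge j 5 with h | h
    · interval_cases j
      · exact ⟨1, by simp⟩
      · exact absurd hj (by decide)
      · exact ⟨t, by simp [coeff_one, coeff_X, coeff_X_pow, coeff_C]⟩
      · exact absurd hj (by decide)
      · exact ⟨1, by simp [coeff_one, coeff_X, coeff_X_pow, coeff_C]⟩
    · refine ⟨0, ?_⟩
      rw [coeff_eq_zero_of_natDegree_lt]
      · simp
      · have hdeg : (X^4 + C r * X^3 + C (t:ℝ) * X^2 + C r * X + 1 : ℝ[X]).natDegree = 4 := by
          compute_degree!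
        omega
  case _ =>
    intro j hj
    rcases Nat.lt_or_ge j 5 with h | h
    · interval_cases j
      · exact absurd hj (by decide)
      · exact ⟨1, by simp [coeff_one, coeff_X, coeff_X_pow, coeff_C]⟩
      · exact absurd hj (by decide)
      · exact ⟨1, by simp [coeff_one, coeff_X, coeff_X_pow, coeff_C]⟩
      · exact absurd hj (by decide)
    · refine ⟨0, ?_⟩
      rw [coeff_eq_zero_of_natDegree_lt]
      · simp
      · have hdeg : (X^4 + C r * X^3 + C (t:ℝ) * X^2 + C r * X + 1 : ℝ[X]).natDegree = 4 := by
          compute_degree!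
        omega
  case _ =>
    have hCs : (C r : ℝ[X])^2 = C ((a:ℚ):ℝ) := by
      rw [← C_pow, hr, Real.sq_sqrt (by positivity)]
    have h1' : (2:ℝ) * ((t:ℚ):ℝ) + 1 = ((a:ℚ):ℝ) := by exact_mod_cast h1
    have h2' : (((t:ℚ):ℝ))^2 + 5 = 2 * ((a:ℚ):ℝ) := by exact_mod_cast h2
    have hC1 : (2 : ℝ[X]) * C ((t:ℚ):ℝ) + 1 = C ((a:ℚ):ℝ) := by
      have h9 := congrArg (Polynomial.C (R := ℝ)) h1'
      simpa [map_add, map_mul, map_one, map_ofNat] using h9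
    have hC2 : (C ((t:ℚ):ℝ))^2 + 5 = 2 * C ((a:ℚ):ℝ) := by
      have h9 := congrArg (Polynomial.C (R := ℝ)) h2'
      simpa [map_add, map_mul, map_pow, map_ofNat] using h9
    simp only [Polynomial.map_add, Polynomial.map_sub, Polynomial.map_mul, Polynomial.map_pow,
      Polynomial.map_X, Polynomial.map_one, Polynomial.map_ofNat, map_C,
      add_comp, sub_comp, mul_comp, pow_comp, X_comp, one_comp, C_comp, neg_comp, ofNat_comp]
    linear_combination (X^6 + X^2 : ℝ[X]) * hC1 + (X^4 : ℝ[X]) * hC2 - (X^6 + 2*X^4 + X^2 : ℝ[X]) * hCs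

/-- The Salem number `λ = (1 + √21 + √(2(3 + √21)))/4`, with Salem polynomial
`p(x) = x⁴ − x³ − 3x² − x + 1`, satisfies `p(-1) = 1`, and is square-rootable over `ℚ`
via `3` and via `7`. -/
theorem salem_4_6_squareRootable :
    let l : ℝ := (1 + Real.sqrt 21 + Real.sqrt (2 * (3 + Real.sqrt 21))) / 4
    IsSalem l ∧
    minpoly ℚ l =
      (Polynomial.X ^ 4 - Polynomial.X ^ 3 - 3 * Polynomial.X ^ 2 - Polynomial.X + 1 :
        Polynomial ℚ) ∧
    (minpoly ℚ l).eval (-1 : ℚ) = 1 ∧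
    SquareRootableViaQ l 3 ∧ SquareRootableViaQ l 7 := by
  intro l
  have hl : l = lv := rfl
  have haev : (Polynomial.aeval l) (X^4 - X^3 - 3*X^2 - X + 1 : ℚ[X]) = 0 := by
    rw [hl]
    simp only [map_add, map_sub, map_mul, map_pow, aeval_X, map_one, map_ofNat]
    linear_combination hl_p
  have hmin : minpoly ℚ l = (X^4 - X^3 - 3*X^2 - X + 1 : ℚ[X]) :=
    (minpoly.eq_of_irreducible_of_monic P_irreducible haev P_monic).symm
  have h0l : lv ≠ 0 := by nlinarith [hl_gt1]
  have h0C : ((lv : ℝ) : ℂ) ≠ 0 := by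
    simp only [ne_eq, Complex.ofReal_eq_zero]; exact h0l
  have hpC : ((lv:ℝ):ℂ)^4 - ((lv:ℝ):ℂ)^3 - 3*((lv:ℝ):ℂ)^2 - ((lv:ℝ):ℂ) + 1 = 0 := by
    have := congrArg (fun x : ℝ => (x:ℂ)) hl_p
    push_cast at this
    convert this using 1
  refine ⟨⟨?_, ?_, ?_, ?_⟩, hmin, ?_, ?_, ?_⟩
  · rw [hl]; exact hl_gt1
  · refine ⟨X^4 - X^3 - 3*X^2 - X + 1, by monicity!, ?_⟩
    rw [hl]
    simp only [eval₂_add, eval₂_sub, eval₂_mul, eval₂_pow, eval₂_X, eval₂_one, eval₂_ofNat]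
    linear_combination hl_p
  · have hR : lv⁻¹^4 - lv⁻¹^3 - 3*lv⁻¹^2 - lv⁻¹ + 1 = 0 := by
      field_simp
      linear_combination hl_p
    rw [hmin, hl]
    simp only [map_add, map_sub, map_mul, map_pow, aeval_X, map_one, map_ofNat]
    have h9 := congrArg (fun x : ℝ => (x:ℂ)) hR
    push_cast at h9
    linear_combination h9
  · intro z hz
    rw [hmin] at hz
    simp only [map_add, map_sub, map_mul, map_pow, aeval_X, map_one, map_ofNat] at hz
    rw [hl]
    exact roots_classified z (by linear_combination hz)
  · rw [hmin]; simp [eval_add, eval_sub, eval_mul, eval_pow]; norm_num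
  · refine ⟨by norm_num, ?_⟩
    rw [hmin]
    exact sq_rootable_aux 3 1 (by norm_num) (by norm_num) (by norm_num)
  · refine ⟨by norm_num, ?_⟩
    rw [hmin]
    exact sq_rootable_aux 7 3 (by norm_num) (by norm_num) (by norm_num)
end
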